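/- arXiv:1606.03651 — 4 statements merged into one kernel-verified Lean document; each statement's English description precedes it below -/
import Mathlib

section
/- Let X be a real-valued random variable with unbounded distribution F and Y a nonnegative random variable with distribution G, neither degenerate at zero, with X and Y independent, and let H be the distribution of XY. Suppose Assumption 2 holds: Ḡ(bx)=o(H̄(x)) as x→∞ for every constant b>0. If F belongs to the class L(γ) for some γ≥0, then H belongs to L(γ/β_G), where β_G=sup{y:G(y)<1}∈(0,∞] and γ/β_G is understood as 0 when β_G=∞. -/
open MeasureTheory ProbabilityTheory Filter Set Asymptotics

noncomputable section

/-- The tail (survival) function `x ↦ P(Z > x)` of a random variable `Z`. -/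
def rvTail {Ω : Type*} [MeasureSpace Ω] (Z : Ω → ℝ) (x : ℝ) : ℝ :=
  (ℙ {ω | x < Z ω}).toReal

/-- The cumulative distribution function `x ↦ P(Z ≤ x)` of a random variable `Z`. -/
def rvCdf {Ω : Type*} [MeasureSpace Ω] (Z : Ω → ℝ) (x : ℝ) : ℝ :=
  (ℙ {ω | Z ω ≤ x}).toReal

/-- The left limit of the cdf, `G(y-) = P(Z < y)`. -/
def rvCdfLeft {Ω : Type*} [MeasureSpace Ω] (Z : Ω → ℝ) (y : ℝ) : ℝ :=
  (ℙ {ω | Z ω < y}).toReal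

/-- The distribution of `Z` is unbounded (above): its tail is positive for every `x > 0`. -/
def UnboundedDist {Ω : Type*} [MeasureSpace Ω] (Z : Ω → ℝ) : Prop :=
  ∀ x > 0, 0 < rvTail Z x

/-- The support `D_Z = {y : P(Z ∈ (y - δ, y + δ)) > 0 for all δ > 0}` of the
distribution of `Z`. -/
def distSupport {Ω : Type*} [MeasureSpace Ω] (Z : Ω → ℝ) : Set ℝ :=
  {y | ∀ δ > 0, 0 < ℙ {ω | Z ω ∈ Ioo (y - δ) (y + δ)}}

/-- The distribution of `Z` belongs to the class `L(γ)`: it is unbounded above and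
`P(Z > x - t) ~ e^{γ t} P(Z > x)` as `x → ∞`, for every `t > 0`. -/
def MemLGamma {Ω : Type*} [MeasureSpace Ω] (Z : Ω → ℝ) (γ : ℝ) : Prop :=
  UnboundedDist Z ∧
    ∀ t > 0, (fun x => rvTail Z (x - t)) ~[atTop] (fun x => Real.exp (γ * t) * rvTail Z x)

/-- The tail of the two-fold convolution of the distribution of `Z` with itself. -/
def convSqTail {Ω : Type*} [MeasureSpace Ω] (Z : Ω → ℝ) (x : ℝ) : ℝ :=
  (((Measure.map Z ℙ).conv (Measure.map Z ℙ)) (Ioi x)).toReal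

/-- The distribution of `Z` belongs to the class `S(γ)`: it belongs to `L(γ)`, the
exponential moment `c = ∫ e^{γ y} dV(y)` is finite, and the tail of the two-fold
convolution satisfies `V̄*²(x) ~ 2 c V̄(x)` as `x → ∞`. -/
def MemSGamma {Ω : Type*} [MeasureSpace Ω] (Z : Ω → ℝ) (γ : ℝ) : Prop :=
  MemLGamma Z γ ∧
    Integrable (fun y => Real.exp (γ * y)) (Measure.map Z ℙ) ∧
    (fun x => convSqTail Z x) ~[atTop]
      (fun x => 2 * (∫ y, Real.exp (γ * y) ∂(Measure.map Z ℙ)) * rvTail Z x)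

open Classical in
/-- `γ / β_G`, where `β_G = sup {y : G(y) < 1}` is the right endpoint of the distribution
of `Z`, with the convention that `γ / β_G = 0` when `β_G = ∞`.
(Note that `G(y) < 1 ↔ P(Z > y) > 0`.) -/
def gammaOverBeta {Ω : Type*} [MeasureSpace Ω] (Z : Ω → ℝ) (γ : ℝ) : ℝ :=
  if BddAbove {y : ℝ | 0 < rvTail Z y} then γ / sSup {y : ℝ | 0 < rvTail Z y} else 0

/-- Assumption 2: `Ḡ(b x) = o(H̄(x))` as `x → ∞` for every constant `b > 0`, where `G` is
the distribution of `Y` and `H` is the distribution of the product `X Y`. -/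
def Assumption2 {Ω : Type*} [MeasureSpace Ω] (X Y : Ω → ℝ) : Prop :=
  ∀ b > 0, (fun x => rvTail Y (b * x)) =o[atTop] fun x => rvTail (fun ω => X ω * Y ω) x

/-- Assumption 1: `K x y` is the conditional probability `P(X > x | Y = y)`, namely for
`y` in the support of `Y` it is the limit of `P(X > x | Y ∈ (y - δ, y + δ])` as `δ → 0+`,
and for `y` outside the support it is the unconditional probability `P(X > x)` (and then
`h y = 1`); `h : [0,∞) → (0,∞)` is a measurable function such that
`P(X > x | Y = y) ~ h(y) P(X > x)` as `x → ∞`, uniformly for `y ≥ 0`. -/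
def Assumption1 {Ω : Type*} [MeasureSpace Ω] (X Y : Ω → ℝ) (h : ℝ → ℝ) (K : ℝ → ℝ → ℝ) :
    Prop :=
  Measurable h ∧ (∀ y, 0 ≤ y → 0 < h y) ∧
    (∀ y, y ∉ distSupport Y → h y = 1 ∧ ∀ x, K x y = rvTail X x) ∧
    (∀ y ∈ distSupport Y, ∀ x : ℝ,
      Tendsto
        (fun δ : ℝ => (ℙ {ω | x < X ω ∧ Y ω ∈ Ioc (y - δ) (y + δ)}).toReal /
          (ℙ {ω | Y ω ∈ Ioc (y - δ) (y + δ)}).toReal)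
        (nhdsWithin 0 (Ioi 0)) (nhds (K x y))) ∧
    ∀ ε > 0, ∀ᶠ x in atTop, ∀ y, 0 ≤ y → |K x y / (h y * rvTail X x) - 1| < ε

/-- `(X, Y)` follows a Farlie–Gumbel–Morgenstern (FGM) distribution with parameter
`θ ∈ [-1, 1]`: `P(X > x, Y > y) = F̄(x) Ḡ(y) (1 + θ F(x) G(y))` for all `x` in the
support of `X` and `y` in the support of `Y`. -/
def FGM {Ω : Type*} [MeasureSpace Ω] (X Y : Ω → ℝ) (θ : ℝ) : Prop :=
  θ ∈ Icc (-1 : ℝ) 1 ∧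
    ∀ x ∈ distSupport X, ∀ y ∈ distSupport Y,
      (ℙ {ω | x < X ω ∧ y < Y ω}).toReal =
        rvTail X x * rvTail Y y * (1 + θ * rvCdf X x * rvCdf Y y)

/-- `(X, Y)` follows a bivariate Sarmanov distribution with kernels `φ₁, φ₂` and
parameter `θ`: the joint law has density `1 + θ φ₁(x) φ₂(y)` with respect to the product
of the marginal laws, where `φ₁, φ₂` are measurable, `E φ₁(X) = E φ₂(Y) = 0` and
`1 + θ φ₁(x) φ₂(y) ≥ 0`. -/
def Sarmanov {Ω : Type*} [MeasureSpace Ω] (X Y : Ω → ℝ) (φ₁ φ₂ : ℝ → ℝ) (θ : ℝ) : Prop :=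
  Measurable φ₁ ∧ Measurable φ₂ ∧
    Integrable (fun ω => φ₁ (X ω)) ℙ ∧ Integrable (fun ω => φ₂ (Y ω)) ℙ ∧
    (∫ ω, φ₁ (X ω)) = 0 ∧ (∫ ω, φ₂ (Y ω)) = 0 ∧
    (∀ x y : ℝ, 0 ≤ y → 0 ≤ 1 + θ * φ₁ x * φ₂ y) ∧
    Measure.map (fun ω => (X ω, Y ω)) ℙ =
      ((Measure.map X ℙ).prod (Measure.map Y ℙ)).withDensity
        (fun p => ENNReal.ofReal (1 + θ * φ₁ p.1 * φ₂ p.2))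

/-- The condition `ψ(y) = lim_{δ → 0+} (∫_{y-δ}^{y+δ} φ₂(v) G(dv)) / (G(y+δ) - G(y-δ))`
for all `y` in the support of `Y`. -/
def SarmanovPsi {Ω : Type*} [MeasureSpace Ω] (Y : Ω → ℝ) (φ₂ ψ : ℝ → ℝ) : Prop :=
  ∀ y ∈ distSupport Y,
    Tendsto
      (fun δ : ℝ => (∫ v in Ioc (y - δ) (y + δ), φ₂ v ∂(Measure.map Y ℙ)) /
        (rvCdf Y (y + δ) - rvCdf Y (y - δ)))
      (nhdsWithin 0 (Ioi 0)) (nhds (ψ y))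


open scoped ENNReal

namespace PLaux


/-- ENNReal tail of a measure on ℝ. -/
def Fe (μ : Measure ℝ) (u : ℝ) : ℝ≥0∞ := μ (Ioi u)

lemma fe_anti (μ : Measure ℝ) : Antitone (Fe μ) :=
  fun _ _ h => measure_mono (Ioi_subset_Ioi h)

lemma fe_meas (μ : Measure ℝ) : Measurable (Fe μ) := (fe_anti μ).measurable

lemma fe_le_one (μ : Measure ℝ) [IsProbabilityMeasure μ] (u : ℝ) : Fe μ u ≤ 1 :=
  prob_le_one

lemma fe_ne_top (μ : Measure ℝ) [IsProbabilityMeasure μ] (u : ℝ) : Fe μ u ≠ ⊤ :=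
  measure_ne_top μ _

lemma meas_comp (μ : Measure ℝ) (s : ℝ) : Measurable (fun y : ℝ => Fe μ (s / y)) :=
  (fe_meas μ).comp (measurable_const.div measurable_id)

lemma meas_comp' (μ : Measure ℝ) (s r : ℝ) :
    Measurable (fun y : ℝ => Fe μ (s / y - r)) :=
  (fe_meas μ).comp ((measurable_const.div measurable_id).sub measurable_const)

/-- The main identity: `P(XY > s) = ∫ F̄(s/y) ν(dy)` over `y > 0`, for `s > 0`. -/
lemma key_identity {Ω : Type*} [MeasureSpace Ω] [IsProbabilityMeasure (ℙ : Measure Ω)]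
    (X Y : Ω → ℝ) (hXm : Measurable X) (hYm : Measurable Y) (hYnonneg : ∀ ω, 0 ≤ Y ω)
    (hInd : IndepFun X Y ℙ) {s : ℝ} (hs : 0 < s) :
    ℙ {ω | s < X ω * Y ω} = ∫⁻ y in Ioi (0:ℝ), Fe (Measure.map X ℙ) (s / y) ∂(Measure.map Y ℙ) := by
  have hpair : Measurable fun ω => (Y ω, X ω) := hYm.prodMk hXm
  have hmap : Measure.map (fun ω => (Y ω, X ω)) ℙ = (Measure.map Y ℙ).prod (Measure.map X ℙ) :=
    (indepFun_iff_map_prod_eq_prod_map_map hYm.aemeasurable hXm.aemeasurable).1 hInd.symm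
  have hsetm : MeasurableSet {p : ℝ × ℝ | s < p.2 * p.1} :=
    measurableSet_lt measurable_const (measurable_snd.mul measurable_fst)
  have h1 : ℙ {ω | s < X ω * Y ω}
      = Measure.map (fun ω => (Y ω, X ω)) ℙ {p : ℝ × ℝ | s < p.2 * p.1} := by
    rw [Measure.map_apply hpair hsetm]; rfl
  rw [h1, hmap, Measure.prod_apply hsetm]
  have h2 : ∀ y : ℝ, (Prod.mk y ⁻¹' {p : ℝ × ℝ | s < p.2 * p.1}) = {x : ℝ | s < x * y} :=
    fun y => rfl
  simp only [h2]
  -- split the integral into y > 0 and y ≤ 0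
  have hcompl : (Ioi (0:ℝ))ᶜ = Iic 0 := by simp
  rw [← lintegral_add_compl (fun y => (Measure.map X ℙ) {x : ℝ | s < x * y}) measurableSet_Ioi,
    hcompl]
  have hIic : ∫⁻ y in Iic (0:ℝ), (Measure.map X ℙ) {x : ℝ | s < x * y} ∂(Measure.map Y ℙ) = 0 := by
    have hsplit : Iic (0:ℝ) = Iio 0 ∪ {0} := by
      ext z; simp [le_iff_lt_or_eq]
    rw [hsplit, lintegral_union (measurableSet_singleton 0)]
    · have hz1 : (Measure.map Y ℙ) (Iio (0:ℝ)) = 0 := by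
        rw [Measure.map_apply hYm measurableSet_Iio]
        have : Y ⁻¹' Iio 0 = ∅ := by
          ext ω; simp [Set.mem_preimage, not_lt.2 (hYnonneg ω)]
        simp [this]
      rw [setLIntegral_measure_zero _ _ hz1, lintegral_singleton]
      have hempty : {x : ℝ | s < x * 0} = ∅ := by
        ext x
        simp only [Set.mem_setOf_eq, mul_zero, Set.mem_empty_iff_false, iff_false, not_lt]
        exact hs.le
      rw [hempty]
      simp
    · exact Set.disjoint_left.mpr (fun y hy hy' => by
        simp only [Set.mem_singleton_iff] at hy'
        simp only [Set.mem_Iio] at hy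
        exact absurd hy' (ne_of_lt hy))
  rw [hIic, add_zero]
  apply setLIntegral_congr_fun measurableSet_Ioi
  intro y hy
  have : {x : ℝ | s < x * y} = Ioi (s / y) := by
    ext x
    simp only [Set.mem_setOf_eq, Set.mem_Ioi]
    rw [div_lt_iff₀ hy]
  simp only [this]; rfl

/-- Lower bound: `F̄(s/w) ν(Ioi w) ≤ ∫_{y>0} F̄(s/y) ν(dy)` for `0 < w`, `0 < s`. -/
lemma lb_prod (μ ν : Measure ℝ) {s w : ℝ} (hw : 0 < w) (hs : 0 < s) :
    Fe μ (s / w) * ν (Ioi w) ≤ ∫⁻ y in Ioi (0:ℝ), Fe μ (s / y) ∂ν := by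
  have h1 : ∫⁻ y in Ioi w, Fe μ (s / y) ∂ν ≤ ∫⁻ y in Ioi (0:ℝ), Fe μ (s / y) ∂ν :=
    lintegral_mono_set (Ioi_subset_Ioi hw.le)
  refine le_trans ?_ h1
  have h2 : ∀ y ∈ Ioi w, Fe μ (s / w) ≤ Fe μ (s / y) := by
    intro y hy
    have hy' : w ≤ y := le_of_lt hy
    apply fe_anti
    gcongr
  calc Fe μ (s / w) * ν (Ioi w) = ∫⁻ _ in Ioi w, Fe μ (s / w) ∂ν := by
        rw [setLIntegral_const]
    _ ≤ ∫⁻ y in Ioi w, Fe μ (s / y) ∂ν := setLIntegral_mono (meas_comp μ s) h2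

/-- Shift-region bound. -/
lemma region_shift (μ ν : Measure ℝ) (x t s₀ u₁ : ℝ) (C : ℝ≥0∞) (A : Set ℝ)
    (hA : ∀ y ∈ A, 0 < y ∧ t / y ≤ s₀ ∧ u₁ ≤ x / y)
    (hshift : ∀ u, u₁ ≤ u → Fe μ (u - s₀) ≤ C * Fe μ u) :
    ∫⁻ y in A, Fe μ ((x - t) / y) ∂ν ≤ C * ∫⁻ y in A, Fe μ (x / y) ∂ν := by
  calc ∫⁻ y in A, Fe μ ((x - t) / y) ∂ν ≤ ∫⁻ y in A, C * Fe μ (x / y) ∂ν := by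
        apply setLIntegral_mono (measurable_const.mul (meas_comp μ x))
        intro y hy
        obtain ⟨h0, hts, hu⟩ := hA y hy
        have h1 : x / y - s₀ ≤ (x - t) / y := by
          rw [sub_div]; linarith
        exact le_trans (fe_anti μ h1) (hshift _ hu)
    _ = C * ∫⁻ y in A, Fe μ (x / y) ∂ν := lintegral_const_mul C (meas_comp μ x)

/-- Constant bound on a small region `A ⊆ (0, v]`. -/
lemma region_const (μ ν : Measure ℝ) {s v : ℝ} (hv : 0 < v) (hs : 0 ≤ s) (A : Set ℝ)
    (hA : ∀ y ∈ A, 0 < y ∧ y ≤ v) :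
    ∫⁻ y in A, Fe μ (s / y) ∂ν ≤ Fe μ (s / v) * ν A := by
  calc ∫⁻ y in A, Fe μ (s / y) ∂ν ≤ ∫⁻ _ in A, Fe μ (s / v) ∂ν := by
        apply setLIntegral_mono measurable_const
        intro y hy
        obtain ⟨h0, hyv⟩ := hA y hy
        apply fe_anti μ
        gcongr
    _ = Fe μ (s / v) * ν A := setLIntegral_const _ _


lemma shift_bounds {f : ℝ → ℝ} {γ : ℝ} (hf : ∀ x, 0 ≤ f x)
    (hL : ∀ t > 0, (fun x => f (x - t)) ~[atTop] (fun x => Real.exp (γ * t) * f x))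
    {s ε : ℝ} (hs : 0 < s) (hε : 0 < ε) :
    ∃ u₀ : ℝ, ∀ u, u₀ ≤ u →
      f (u - s) ≤ (1 + ε) * Real.exp (γ * s) * f u ∧
      (1 - ε) * Real.exp (γ * s) * f u ≤ f (u - s) := by
  have h := (hL s hs).isLittleO.def hε
  rw [eventually_atTop] at h
  obtain ⟨u₀, hu₀⟩ := h
  refine ⟨u₀, fun u hu => ?_⟩
  have h1 := hu₀ u hu
  simp only [Pi.sub_apply, Real.norm_eq_abs] at h1
  have hA : (0:ℝ) ≤ Real.exp (γ * s) * f u := mul_nonneg (Real.exp_pos _).le (hf u)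
  rw [abs_of_nonneg hA] at h1
  have h2 := abs_le.1 h1
  constructor <;> nlinarith [h2.1, h2.2]

lemma geom_decay {f : ℝ → ℝ} {γ : ℝ} (hγ : 0 < γ) (hf : ∀ x, 0 ≤ f x) (hanti : Antitone f)
    (hL : ∀ t > 0, (fun x => f (x - t)) ~[atTop] (fun x => Real.exp (γ * t) * f x))
    {v w t : ℝ} (hv : 0 < v) (hvw : v < w) (ht : 0 < t) {ε : ℝ} (hε : 0 < ε) :
    ∀ᶠ x in atTop, f ((x - t) / v) ≤ ε * f (x / w) := by
  set T : ℝ := Real.log 4 / γ with hT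
  have hTpos : 0 < T := div_pos (Real.log_pos (by norm_num)) hγ
  obtain ⟨u₀, hu₀⟩ := shift_bounds hf hL hTpos (by norm_num : (0:ℝ) < 1/2)
  have hexpT : Real.exp (γ * T) = 4 := by
    rw [hT, mul_div_cancel₀ _ (ne_of_gt hγ)]
    exact Real.exp_log (by norm_num)
  have hstep : ∀ u, u₀ ≤ u → f (u + T) ≤ (1/2) * f u := by
    intro u hu
    have h := (hu₀ (u + T) (by linarith)).2
    rw [hexpT] at h
    have h' : f (u + T - T) = f u := by ring_nf
    nlinarith [hf (u + T), h]
  have hiter : ∀ k : ℕ, ∀ u, u₀ ≤ u → f (u + k * T) ≤ (1/2)^k * f u := by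
    intro k
    induction k with
    | zero => intro u hu; simp
    | succ k ih =>
      intro u hu
      have h1 : f (u + (k+1 : ℕ) * T) = f ((u + k * T) + T) := by
        push_cast; ring_nf
      rw [h1]
      have h2 := hstep (u + k * T) (by nlinarith [hTpos])
      have h3 := ih u hu
      calc f ((u + k*T) + T) ≤ (1/2) * f (u + k*T) := h2
        _ ≤ (1/2) * ((1/2)^k * f u) := by linarith
        _ = (1/2)^(k+1) * f u := by push_cast; ring
  obtain ⟨m, hm⟩ := exists_pow_lt_of_lt_one hε (by norm_num : (1/2:ℝ) < 1)
  have hw : 0 < w := lt_trans hv hvw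
  have hq1 : v / w < 1 := (div_lt_one hw).2 hvw
  have hq0 : 0 < v / w := div_pos hv hw
  set R := max (w * u₀) ((m * T * v + t) / (1 - v/w)) with hR
  filter_upwards [eventually_ge_atTop R] with x hx
  have hx1 : w * u₀ ≤ x := le_trans (le_max_left _ _) hx
  have hx2 : (m * T * v + t) / (1 - v/w) ≤ x := le_trans (le_max_right _ _) hx
  have hu : u₀ ≤ x / w := by rw [le_div_iff₀ hw]; linarith
  have hkey : x / w + m * T ≤ (x - t) / v := by
    rw [← sub_nonneg]
    have h0 : x * (1 - v/w) ≥ m * T * v + t := by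
      have := (div_le_iff₀ (by linarith : (0:ℝ) < 1 - v/w)).1 hx2
      linarith
    have hexp : (x - t) / v - (x / w + m * T) = (x * (1 - v/w) - (m * T * v + t)) / v := by
      field_simp
      ring
    rw [hexp]
    exact div_nonneg (by linarith) hv.le
  calc f ((x - t)/v) ≤ f (x/w + m * T) := hanti hkey
    _ ≤ (1/2)^m * f (x/w) := hiter m (x/w) hu
    _ ≤ ε * f (x/w) := mul_le_mul_of_nonneg_right hm.le (hf _)


end PLaux

set_option maxHeartbeats 2000000 in
theorem product_memL_of_indep {Ω : Type*} [MeasureSpace Ω] [IsProbabilityMeasure (ℙ : Measure Ω)]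
    (X Y : Ω → ℝ) (hXm : Measurable X) (hYm : Measurable Y)
    (hYnonneg : ∀ ω, 0 ≤ Y ω)
    (hFunb : UnboundedDist X)
    (hXnd : ℙ {ω | X ω = 0} ≠ 1) (hYnd : ℙ {ω | Y ω = 0} ≠ 1)
    (hInd : IndepFun X Y ℙ) (hA2 : Assumption2 X Y)
    (γ : ℝ) (hγ : 0 ≤ γ) (hFL : MemLGamma X γ) :
    MemLGamma (fun ω => X ω * Y ω) (gammaOverBeta Y γ) := by
  classical
  set μ : Measure ℝ := Measure.map X ℙ with hμdef
  set ν : Measure ℝ := Measure.map Y ℙ with hνdef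
  haveI hμprob : IsProbabilityMeasure μ := Measure.isProbabilityMeasure_map hXm.aemeasurable
  haveI hνprob : IsProbabilityMeasure ν := Measure.isProbabilityMeasure_map hYm.aemeasurable
  have hFeX : ∀ u : ℝ, PLaux.Fe μ u = ℙ {ω | u < X ω} := by
    intro u
    rw [hμdef, PLaux.Fe, Measure.map_apply hXm measurableSet_Ioi]
    rfl
  have hGeY : ∀ u : ℝ, PLaux.Fe ν u = ℙ {ω | u < Y ω} := by
    intro u
    rw [hνdef, PLaux.Fe, Measure.map_apply hYm measurableSet_Ioi]
    rfl
  have hf_eq : ∀ u, rvTail X u = (PLaux.Fe μ u).toReal := fun u => by rw [hFeX]; rfl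
  have hf_nonneg : ∀ u : ℝ, (0:ℝ) ≤ rvTail X u := fun u => ENNReal.toReal_nonneg
  have hFe_ofReal : ∀ u, PLaux.Fe μ u = ENNReal.ofReal (rvTail X u) := by
    intro u; rw [hf_eq, ENNReal.ofReal_toReal (PLaux.fe_ne_top μ u)]
  have hGe_toReal : ∀ u, rvTail Y u = (PLaux.Fe ν u).toReal := fun u => by rw [hGeY]; rfl
  have hanti_f : Antitone (rvTail X) := by
    intro p q hpq
    rw [hf_eq, hf_eq]
    exact ENNReal.toReal_mono (PLaux.fe_ne_top μ p) (PLaux.fe_anti μ hpq)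
  -- Y tail positivity near 0
  obtain ⟨w₀, hw₀pos, hw₀⟩ : ∃ w : ℝ, 0 < w ∧ ν (Ioi w) ≠ 0 := by
    have hY0 : ℙ {ω | 0 < Y ω} ≠ 0 := by
      intro h0
      apply hYnd
      have hmeas : MeasurableSet {ω | 0 < Y ω} := hYm measurableSet_Ioi
      have hsplit : {ω | Y ω = 0} = {ω | 0 < Y ω}ᶜ := by
        ext ω
        simp only [Set.mem_setOf_eq, Set.mem_compl_iff, not_lt]
        constructor
        · intro h; exact le_of_eq h
        · intro h; exact le_antisymm h (hYnonneg ω)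
      rw [hsplit, measure_compl hmeas (measure_ne_top _ _), h0]
      simp
    have hν0 : ν (Ioi (0:ℝ)) ≠ 0 := by
      rw [hνdef, Measure.map_apply hYm measurableSet_Ioi]
      exact hY0
    by_contra hcon
    push_neg at hcon
    apply hν0
    have hUnion : Ioi (0:ℝ) = ⋃ n : ℕ, Ioi ((1:ℝ)/(n+1)) := by
      ext z
      simp only [mem_Ioi, mem_iUnion]
      constructor
      · intro hz
        obtain ⟨n, hn⟩ := exists_nat_gt (1/z)
        refine ⟨n, ?_⟩
        rw [div_lt_iff₀ (by positivity : (0:ℝ) < (n:ℝ)+1)]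
        rw [div_lt_iff₀ hz] at hn
        nlinarith [hz]
      · rintro ⟨n, hn⟩
        exact lt_trans (by positivity) hn
    rw [hUnion]
    apply measure_iUnion_null
    intro n
    exact hcon (1/(n+1)) (by positivity)
  -- H basics
  set Hx : ℝ → ℝ≥0∞ := fun s => ℙ {ω | s < X ω * Y ω} with hHdef
  have hHfin : ∀ s, Hx s ≠ ⊤ := fun s => measure_ne_top _ _
  have hKI : ∀ s : ℝ, 0 < s → Hx s = ∫⁻ y in Ioi (0:ℝ), PLaux.Fe μ (s/y) ∂ν :=
    fun s hs => PLaux.key_identity X Y hXm hYm hYnonneg hInd hs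
  have hHtail : ∀ s : ℝ, rvTail (fun ω => X ω * Y ω) s = (Hx s).toReal := fun s => rfl
  have hLBH : ∀ s w : ℝ, 0 < s → 0 < w → PLaux.Fe μ (s/w) * ν (Ioi w) ≤ Hx s := by
    intro s w hs hw
    rw [hKI s hs]
    exact PLaux.lb_prod μ ν hw hs
  have hFepos : ∀ u : ℝ, 0 < u → PLaux.Fe μ u ≠ 0 := by
    intro u hu h0
    have h1 := hFunb u hu
    rw [hf_eq, h0] at h1
    simp at h1
  have hHpos : ∀ s, 0 < s → Hx s ≠ 0 := by
    intro s hs h0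
    have h1 := hLBH s w₀ hs hw₀pos
    rw [h0, le_zero_iff, mul_eq_zero] at h1
    rcases h1 with h | h
    · exact hFepos _ (div_pos hs hw₀pos) h
    · exact hw₀ h
  have hZub : UnboundedDist (fun ω => X ω * Y ω) := by
    intro s hs
    rw [UnboundedDist] at *
    have h1 := hHpos s hs
    have : rvTail (fun ω => X ω * Y ω) s = (Hx s).toReal := hHtail s
    rw [this]
    exact ENNReal.toReal_pos h1 (hHfin s)
  refine ⟨hZub, ?_⟩
  intro t ht
  set γ' : ℝ := gammaOverBeta Y γ with hγ'def
  set c : ℝ := Real.exp (γ' * t) with hcdef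
  have hcpos : 0 < c := Real.exp_pos _
  -- shift bounds in ENNReal form
  have hshiftU : ∀ s ε : ℝ, 0 < s → 0 < ε → ∃ u₀ : ℝ, ∀ u, u₀ ≤ u →
      PLaux.Fe μ (u - s) ≤ ENNReal.ofReal ((1 + ε) * Real.exp (γ * s)) * PLaux.Fe μ u := by
    intro s ε hs hε
    obtain ⟨u₀, hu₀⟩ := PLaux.shift_bounds hf_nonneg hFL.2 hs hε
    refine ⟨u₀, fun u hu => ?_⟩
    have h1 := (hu₀ u hu).1
    rw [hFe_ofReal (u - s), hFe_ofReal u,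
      ← ENNReal.ofReal_mul (mul_nonneg (by linarith) (Real.exp_pos _).le)]
    exact ENNReal.ofReal_le_ofReal h1
  have hshiftL : ∀ s ε : ℝ, 0 < s → 0 < ε → ε < 1 → ∃ u₀ : ℝ, ∀ u, u₀ ≤ u →
      ENNReal.ofReal ((1 - ε) * Real.exp (γ * s)) * PLaux.Fe μ u ≤ PLaux.Fe μ (u - s) := by
    intro s ε hs hε hε1
    obtain ⟨u₀, hu₀⟩ := PLaux.shift_bounds hf_nonneg hFL.2 hs hε
    refine ⟨u₀, fun u hu => ?_⟩
    have h1 := (hu₀ u hu).2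
    rw [hFe_ofReal (u - s), hFe_ofReal u,
      ← ENNReal.ofReal_mul (mul_nonneg (by linarith) (Real.exp_pos _).le)]
    exact ENNReal.ofReal_le_ofReal h1
  -- Assumption 2 in ENNReal form
  have hA2E : ∀ b : ℝ, 0 < b → ∀ ε : ℝ, 0 < ε →
      ∀ᶠ x in atTop, ν (Ioi (b * x)) ≤ ENNReal.ofReal ε * Hx x := by
    intro b hb ε hε
    have h := (hA2 b hb).def hε
    filter_upwards [h] with x hx
    simp only [Real.norm_eq_abs] at hx
    have hn1 : (0:ℝ) ≤ rvTail Y (b*x) := by rw [hGe_toReal]; exact ENNReal.toReal_nonneg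
    have hn2 : (0:ℝ) ≤ rvTail (fun ω => X ω * Y ω) x := by
      rw [hHtail]; exact ENNReal.toReal_nonneg
    rw [abs_of_nonneg hn1, abs_of_nonneg hn2] at hx
    have h1 : (PLaux.Fe ν (b*x)).toReal ≤ ε * (Hx x).toReal := by
      rw [← hGe_toReal, ← hHtail]; exact hx
    show PLaux.Fe ν (b*x) ≤ _
    calc PLaux.Fe ν (b*x) = ENNReal.ofReal ((PLaux.Fe ν (b*x)).toReal) :=
          (ENNReal.ofReal_toReal (PLaux.fe_ne_top ν _)).symm
      _ ≤ ENNReal.ofReal (ε * (Hx x).toReal) := ENNReal.ofReal_le_ofReal h1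
      _ = ENNReal.ofReal ε * ENNReal.ofReal ((Hx x).toReal) := ENNReal.ofReal_mul hε.le
      _ = ENNReal.ofReal ε * Hx x := by rw [ENNReal.ofReal_toReal (hHfin x)]
  -- geometric decay bound (γ > 0)
  have hGD : 0 < γ → ∀ v w : ℝ, 0 < v → v < w → ν (Ioi w) ≠ 0 → ∀ ε : ℝ, 0 < ε →
      ∀ᶠ x in atTop, PLaux.Fe μ ((x - t)/v) ≤ ENNReal.ofReal ε * Hx x := by
    intro hγpos v w hv hvw hgw ε hε
    have hgwR : 0 < (ν (Ioi w)).toReal := ENNReal.toReal_pos hgw (measure_ne_top _ _)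
    have h := PLaux.geom_decay hγpos hf_nonneg hanti_f hFL.2 hv hvw ht (mul_pos hε hgwR)
    filter_upwards [h, eventually_gt_atTop (0:ℝ)] with x hx hx0
    calc PLaux.Fe μ ((x - t)/v) = ENNReal.ofReal (rvTail X ((x-t)/v)) := hFe_ofReal _
      _ ≤ ENNReal.ofReal (ε * (ν (Ioi w)).toReal * rvTail X (x/w)) := ENNReal.ofReal_le_ofReal hx
      _ = ENNReal.ofReal ε * (ENNReal.ofReal (rvTail X (x/w)) * ENNReal.ofReal ((ν (Ioi w)).toReal)) := by
          rw [ENNReal.ofReal_mul (mul_pos hε hgwR).le, ENNReal.ofReal_mul hε.le]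
          ring
      _ = ENNReal.ofReal ε * (PLaux.Fe μ (x/w) * ν (Ioi w)) := by
          rw [← hFe_ofReal, ENNReal.ofReal_toReal (measure_ne_top _ _)]
      _ ≤ ENNReal.ofReal ε * Hx x := mul_le_mul_right (hLBH x w hx0 (lt_trans hv hvw)) _
  -- small-interval smallness
  have hsmall : ∀ δ : ℝ≥0∞, 0 < δ → ∃ n : ℕ, ∀ m : ℕ, n ≤ m → ν (Ioc 0 (t/(m+1))) < δ := by
    intro δ hδ
    have hmono : ∀ n m : ℕ, n ≤ m → t/((m:ℝ)+1) ≤ t/((n:ℝ)+1) := by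
      intro n m hnm
      have hc : ((n:ℝ)+1) ≤ ((m:ℝ)+1) := by exact_mod_cast Nat.add_le_add_right hnm 1
      gcongr
    have hanti : Antitone (fun n : ℕ => Ioc (0:ℝ) (t/(n+1))) :=
      fun n m hnm => Ioc_subset_Ioc_right (hmono n m hnm)
    have hinter : ⋂ n : ℕ, Ioc (0:ℝ) (t/(n+1)) = ∅ := by
      ext z
      simp only [mem_iInter, mem_Ioc, mem_empty_iff_false, iff_false]
      intro hall
      have hz0 : 0 < z := (hall 0).1
      obtain ⟨n, hn⟩ := exists_nat_gt (t/z)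
      have h1 : t < n*z := by rw [div_lt_iff₀ hz0] at hn; exact hn
      have h2 : z*((n:ℝ)+1) ≤ t := by
        have := (hall n).2
        rw [le_div_iff₀ (by positivity : (0:ℝ) < (n:ℝ)+1)] at this
        exact this
      nlinarith [hz0]
    have htendsto := tendsto_measure_iInter_atTop (μ := ν)
      (fun n => measurableSet_Ioc.nullMeasurableSet) hanti ⟨0, measure_ne_top _ _⟩
    rw [hinter] at htendsto
    simp only [measure_empty] at htendsto
    have hev := htendsto.eventually (gt_mem_nhds hδ)
    rw [eventually_atTop] at hev
    obtain ⟨n, hn⟩ := hev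
    exact ⟨n, fun m hm => hn m hm⟩
  -- disjointness helpers
  have hdisj1 : ∀ p q : ℝ, Disjoint (Ioc p q) (Ioi q) :=
    fun p q => Set.disjoint_left.mpr (fun y hy hy' => absurd (Set.mem_Ioi.1 hy') (not_lt.2 hy.2))
  have hdisj2 : ∀ p q r : ℝ, Disjoint (Ioc p q) (Ioc q r) :=
    fun p q r => Set.disjoint_left.mpr (fun y hy hy' => absurd hy'.1 (not_lt.2 hy.2))
  -- conclusion builder
  have hconclude : (∀ K : ℝ, c < K → ∀ᶠ x in atTop, Hx (x - t) ≤ ENNReal.ofReal K * Hx x) →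
      (∀ K : ℝ, 0 < K → K < c → ∀ᶠ x in atTop, ENNReal.ofReal K * Hx x ≤ Hx (x - t)) →
      (fun x => rvTail (fun ω => X ω * Y ω) (x - t)) ~[atTop]
        (fun x => Real.exp (γ' * t) * rvTail (fun ω => X ω * Y ω) x) := by
    intro hU hL
    have hgne : ∀ᶠ x in atTop, Real.exp (γ' * t) * rvTail (fun ω => X ω * Y ω) x ≠ 0 := by
      filter_upwards [eventually_gt_atTop (0:ℝ)] with x hx
      have h1 : 0 < rvTail (fun ω => X ω * Y ω) x := hZub x hx
      positivity
    rw [isEquivalent_iff_tendsto_one hgne]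
    have hratio : ∀ x : ℝ, ((fun x => rvTail (fun ω => X ω * Y ω) (x - t)) /
        (fun x => Real.exp (γ' * t) * rvTail (fun ω => X ω * Y ω) x)) x
        = rvTail (fun ω => X ω * Y ω) (x - t) / (c * rvTail (fun ω => X ω * Y ω) x) :=
      fun x => rfl
    rw [tendsto_order]
    constructor
    · intro b hb
      rcases le_or_gt b 0 with hb0 | hb0
      · filter_upwards [eventually_gt_atTop (max 0 t)] with x hx
        have hx0 : 0 < x := lt_of_le_of_lt (le_max_left 0 t) hx
        have hxt : 0 < x - t := sub_pos.2 (lt_of_le_of_lt (le_max_right 0 t) hx)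
        rw [hratio x]
        have hnum := hZub _ hxt
        have hden : 0 < c * rvTail (fun ω => X ω * Y ω) x := mul_pos hcpos (hZub _ hx0)
        exact lt_of_le_of_lt hb0 (div_pos hnum hden)
      · have hKpos : 0 < c*((b+1)/2) := mul_pos hcpos (by linarith)
        have hKc : c*((b+1)/2) < c := by nlinarith [hcpos]
        filter_upwards [hL _ hKpos hKc, eventually_gt_atTop (max 0 t)] with x hx1 hx2
        have hx0 : 0 < x := lt_of_le_of_lt (le_max_left 0 t) hx2
        have hxt : 0 < x - t := sub_pos.2 (lt_of_le_of_lt (le_max_right 0 t) hx2)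
        have htail : 0 < rvTail (fun ω => X ω * Y ω) x := hZub _ hx0
        have h2 : c*((b+1)/2) * rvTail (fun ω => X ω * Y ω) x
            ≤ rvTail (fun ω => X ω * Y ω) (x - t) := by
          have h3 := ENNReal.toReal_mono (hHfin (x - t)) hx1
          rw [ENNReal.toReal_mul, ENNReal.toReal_ofReal hKpos.le] at h3
          rw [hHtail (x-t), hHtail x]
          exact h3
        rw [hratio x, lt_div_iff₀ (mul_pos hcpos htail)]
        nlinarith [h2, htail, hcpos, hb]
    · intro a ha
      have hca : c < c*((1+a)/2) := by nlinarith [hcpos]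
      filter_upwards [hU _ hca, eventually_gt_atTop (max 0 t)] with x hx1 hx2
      have hx0 : 0 < x := lt_of_le_of_lt (le_max_left 0 t) hx2
      have hxt : 0 < x - t := sub_pos.2 (lt_of_le_of_lt (le_max_right 0 t) hx2)
      have htail : 0 < rvTail (fun ω => X ω * Y ω) x := hZub _ hx0
      have h2 : rvTail (fun ω => X ω * Y ω) (x - t)
          ≤ c*((1+a)/2) * rvTail (fun ω => X ω * Y ω) x := by
        have h3 := ENNReal.toReal_mono (ENNReal.mul_ne_top ENNReal.ofReal_ne_top (hHfin x)) hx1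
        rw [ENNReal.toReal_mul, ENNReal.toReal_ofReal (le_of_lt (lt_trans hcpos hca))] at h3
        rw [hHtail (x-t), hHtail x]
        exact h3
      rw [hratio x, div_lt_iff₀ (mul_pos hcpos htail)]
      nlinarith [h2, htail, hcpos, ha]
  set S : Set ℝ := {y : ℝ | 0 < rvTail Y y} with hSdef
  have hS_iff : ∀ y : ℝ, y ∈ S ↔ ν (Ioi y) ≠ 0 := by
    intro y
    rw [hSdef]
    simp only [Set.mem_setOf_eq]
    rw [hGe_toReal]
    constructor
    · intro h h0
      have h0' : PLaux.Fe ν y = 0 := h0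
      rw [h0'] at h
      simp at h
    · intro h
      exact ENNReal.toReal_pos h (measure_ne_top _ _)
  have hw₀S : w₀ ∈ S := (hS_iff w₀).2 hw₀
  by_cases hB : BddAbove S
  · -- bounded support: β = sSup S < ∞
    set β : ℝ := sSup S with hβdef
    have hβpos : 0 < β := lt_of_lt_of_le hw₀pos (le_csSup hB hw₀S)
    have hγ'β : γ' = γ / β := by
      rw [hγ'def]
      unfold gammaOverBeta
      rw [if_pos hB]
    have hct : Real.exp (γ * (t/β)) = c := by
      rw [hcdef, hγ'β]
      congr 1
      field_simp
    have hνβ : ν (Ioi β) = 0 := by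
      have h1 : ∀ n : ℕ, ν (Ioi (β + 1/(n+1))) = 0 := by
        intro n
        by_contra h
        have h2 : β + 1/((n:ℝ)+1) ∈ S := (hS_iff _).2 h
        have h3 := le_csSup hB h2
        have h4 : (0:ℝ) < 1/((n:ℝ)+1) := by positivity
        rw [← hβdef] at h3
        linarith
      have h2 : Ioi β = ⋃ n : ℕ, Ioi (β + 1/(n+1)) := by
        ext z
        simp only [mem_Ioi, mem_iUnion]
        constructor
        · intro hz
          obtain ⟨n, hn⟩ := exists_nat_gt (1/(z-β))
          refine ⟨n, ?_⟩
          have hzβ : 0 < z - β := by linarith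
          have h5 : 1/(z-β) < (n:ℝ)+1 := by linarith
          have h6 : 1/((n:ℝ)+1) < z - β := by
            rw [div_lt_iff₀ hzβ] at h5
            rw [div_lt_iff₀ (by positivity : (0:ℝ) < (n:ℝ)+1)]
            nlinarith
          linarith
        · rintro ⟨n, hn⟩
          have : (0:ℝ) < 1/((n:ℝ)+1) := by positivity
          linarith
      rw [h2]
      exact measure_iUnion_null h1
    have hGelt : ∀ y : ℝ, y < β → ν (Ioi y) ≠ 0 := by
      intro y hy h0
      obtain ⟨s', hs'S, hys'⟩ := exists_lt_of_lt_csSup ⟨w₀, hw₀S⟩ hy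
      exact (hS_iff s').1 hs'S (measure_mono_null (Ioi_subset_Ioi hys'.le) h0)
    have hKIβ : ∀ s : ℝ, 0 < s → Hx s = ∫⁻ y in Ioc (0:ℝ) β, PLaux.Fe μ (s/y) ∂ν := by
      intro s hs
      rw [hKI s hs, ← Ioc_union_Ioi_eq_Ioi hβpos.le,
        lintegral_union measurableSet_Ioi (hdisj1 0 β),
        setLIntegral_measure_zero _ _ hνβ, add_zero]
    apply hconclude
    · -- upper bound
      intro K hK
      have hKpos : 0 < K := lt_trans hcpos hK
      rcases eq_or_lt_of_le hγ with hγ0 | hγpos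
      · -- γ = 0, β < ∞
        have hγ0' : γ = 0 := hγ0.symm
        have hc1 : c = 1 := by rw [hcdef, hγ'β, hγ0']; simp
        have hK1 : 1 < K := by rw [← hc1]; exact hK
        set ε : ℝ := (K - 1)/3 with hεdef
        have hεpos : 0 < ε := by rw [hεdef]; linarith
        have hw₁pos : 0 < β/2 := by linarith
        have hw₁β : β/2 < β := by linarith
        have hgw : ν (Ioi (β/2)) ≠ 0 := hGelt _ hw₁β
        have hgwR : 0 < (ν (Ioi (β/2))).toReal := ENNReal.toReal_pos hgw (measure_ne_top _ _)
        obtain ⟨n₀, hn₀⟩ := hsmall (ENNReal.ofReal (ε * (ν (Ioi (β/2))).toReal))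
          (ENNReal.ofReal_pos.2 (by positivity))
        obtain ⟨n₁, hn₁⟩ := exists_nat_gt (2*t/β)
        set n : ℕ := max n₀ n₁ with hndef
        set a : ℝ := t/((n:ℝ)+1) with hadef
        have hapos : 0 < a := by rw [hadef]; positivity
        have haw : a < β/2 := by
          rw [hadef, div_lt_iff₀ (by positivity : (0:ℝ) < (n:ℝ)+1)]
          have h1 : 2*t/β < (n:ℝ) :=
            lt_of_lt_of_le hn₁ (by exact_mod_cast le_max_right n₀ n₁)
          rw [div_lt_iff₀ hβpos] at h1
          nlinarith
        have haβ : a ≤ β := by linarith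
        have hνa : ν (Ioc 0 a) ≤ ENNReal.ofReal (ε * (ν (Ioi (β/2))).toReal) :=
          le_of_lt (hn₀ n (le_max_left n₀ n₁))
        obtain ⟨u₁, hu₁⟩ := hshiftU ((n:ℝ)+1) ε (by positivity) hεpos
        have hCeq : ENNReal.ofReal ((1+ε) * Real.exp (γ * ((n:ℝ)+1))) = ENNReal.ofReal (1+ε) := by
          rw [hγ0']; simp
        filter_upwards [eventually_gt_atTop
          (max (t+1) (max (β * (max u₁ 0)) ((β/2)*t/((β/2) - a) + 1)))] with x hx
        have hx1 : t + 1 < x := lt_of_le_of_lt (le_max_left _ _) hx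
        have hxt : 0 < x - t := by linarith
        have hx0 : 0 < x := by linarith
        have hx2 : β * (max u₁ 0) < x :=
          lt_of_le_of_lt (le_trans (le_max_left _ _) (le_max_right _ _)) hx
        have hx3 : (β/2)*t/((β/2) - a) + 1 < x :=
          lt_of_le_of_lt (le_trans (le_max_right _ _) (le_max_right _ _)) hx
        rw [hKIβ (x - t) hxt, ← Ioc_union_Ioc_eq_Ioc hapos.le haβ,
          lintegral_union measurableSet_Ioc (hdisj2 0 a β)]
        have hcond : ∀ y ∈ Ioc a β, 0 < y ∧ t/y ≤ (n:ℝ)+1 ∧ u₁ ≤ x/y := by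
          intro y hy
          have hy1 : a < y := hy.1
          have hy2 : y ≤ β := hy.2
          have hy0 : 0 < y := lt_trans hapos hy1
          refine ⟨hy0, ?_, ?_⟩
          · rw [div_le_iff₀ hy0]
            rw [hadef, div_lt_iff₀ (by positivity : (0:ℝ) < (n:ℝ)+1)] at hy1
            nlinarith
          · have h1 : x/β ≤ x/y := by gcongr
            have h2 : u₁ ≤ x/β := by
              rw [le_div_iff₀ hβpos]
              calc u₁ * β ≤ max u₁ 0 * β := mul_le_mul_of_nonneg_right (le_max_left _ _) hβpos.le
                _ = β * max u₁ 0 := mul_comm _ _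
                _ ≤ x := hx2.le
            linarith
        have hP2 : ∫⁻ y in Ioc a β, PLaux.Fe μ ((x-t)/y) ∂ν ≤ ENNReal.ofReal (1+ε) * Hx x := by
          have hreg := PLaux.region_shift μ ν x t ((n:ℝ)+1) u₁
            (ENNReal.ofReal ((1+ε) * Real.exp (γ * ((n:ℝ)+1)))) (Ioc a β) hcond hu₁
          refine le_trans hreg ?_
          rw [hCeq]
          apply mul_le_mul_right
          rw [hKI x hx0]
          exact lintegral_mono_set (fun y hy => lt_trans hapos hy.1)
        have hP1 : ∫⁻ y in Ioc 0 a, PLaux.Fe μ ((x-t)/y) ∂ν ≤ ENNReal.ofReal ε * Hx x := by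
          have hreg := PLaux.region_const μ ν hapos hxt.le (Ioc 0 a) (fun y hy => ⟨hy.1, hy.2⟩)
          refine le_trans hreg ?_
          have hslope : 0 < (β/2) - a := by linarith
          have hcmp : x/(β/2) ≤ (x - t)/a := by
            rw [div_le_div_iff₀ hw₁pos hapos]
            have h5 : ((β/2)*t/((β/2) - a)) * ((β/2) - a) = (β/2)*t :=
              div_mul_cancel₀ _ (ne_of_gt hslope)
            have h6 : (β/2)*t ≤ x * ((β/2) - a) := by
              rw [← h5]
              apply mul_le_mul_of_nonneg_right (by linarith) hslope.le
            nlinarith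
          calc PLaux.Fe μ ((x-t)/a) * ν (Ioc 0 a)
              ≤ PLaux.Fe μ (x/(β/2)) * ENNReal.ofReal (ε * (ν (Ioi (β/2))).toReal) :=
                mul_le_mul' (PLaux.fe_anti μ hcmp) hνa
            _ = ENNReal.ofReal ε * (PLaux.Fe μ (x/(β/2)) * ν (Ioi (β/2))) := by
                rw [ENNReal.ofReal_mul hεpos.le, ENNReal.ofReal_toReal (measure_ne_top _ _)]
                ring
            _ ≤ ENNReal.ofReal ε * Hx x := mul_le_mul_right (hLBH x (β/2) hx0 hw₁pos) _
        calc (∫⁻ y in Ioc 0 a, PLaux.Fe μ ((x-t)/y) ∂ν)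
              + ∫⁻ y in Ioc a β, PLaux.Fe μ ((x-t)/y) ∂ν
            ≤ ENNReal.ofReal ε * Hx x + ENNReal.ofReal (1+ε) * Hx x := add_le_add hP1 hP2
          _ = (ENNReal.ofReal ε + ENNReal.ofReal (1+ε)) * Hx x := (add_mul _ _ _).symm
          _ ≤ ENNReal.ofReal K * Hx x := by
              apply mul_le_mul_left
              rw [← ENNReal.ofReal_add hεpos.le (by linarith)]
              apply ENNReal.ofReal_le_ofReal
              rw [hεdef]; linarith
      · -- γ > 0, β < ∞
        set K₁ : ℝ := (c + K)/2 with hK₁def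
        have hK₁c : c < K₁ := by rw [hK₁def]; linarith
        have hK₁K : K₁ < K := by rw [hK₁def]; linarith
        have hK₁pos : 0 < K₁ := lt_trans hcpos hK₁c
        set ρ : ℝ := K₁/c with hρdef
        have hρ1 : 1 < ρ := (one_lt_div hcpos).2 hK₁c
        set r : ℝ := Real.sqrt ρ with hrdef
        have hr1 : 1 < r := by
          rw [hrdef, show (1:ℝ) = Real.sqrt 1 from Real.sqrt_one.symm]
          exact Real.sqrt_lt_sqrt (by norm_num) hρ1
        have hrr : r * r = ρ := Real.mul_self_sqrt (by linarith)
        have hcont : ContinuousAt (fun v : ℝ => Real.exp (γ * (t/v))) β :=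
          Real.continuous_exp.continuousAt.comp
            (continuousAt_const.mul (continuousAt_const.div continuousAt_id (ne_of_gt hβpos)))
        have hval : Real.exp (γ * (t/β)) < c*r := by
          rw [hct]
          nlinarith [hcpos]
        have hev1 : ∀ᶠ v in nhds β, Real.exp (γ * (t/v)) < c*r :=
          hcont.eventually_lt_const hval
        have hev2 : ∀ᶠ v in nhds β, 0 < v := eventually_gt_nhds hβpos
        have hev3 : ∀ᶠ v in nhdsWithin β (Iio β), v ∈ Iio β := eventually_mem_nhdsWithin
        obtain ⟨v, hv1, hv2, hv3⟩ :=
          ((hev1.filter_mono nhdsWithin_le_nhds).and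
            ((hev2.filter_mono nhdsWithin_le_nhds).and hev3)).exists
        have hvβ' : v < β := hv3
        set w : ℝ := (v + β)/2 with hwdef
        have hvw : v < w := by rw [hwdef]; linarith
        have hwβ : w < β := by rw [hwdef]; linarith
        have hgw : ν (Ioi w) ≠ 0 := hGelt _ hwβ
        have hε₁pos : 0 < r - 1 := by linarith
        obtain ⟨u₁, hu₁⟩ := hshiftU (t/v) (r-1) (div_pos ht hv2) hε₁pos
        have hCle : ENNReal.ofReal ((1+(r-1)) * Real.exp (γ * (t/v))) ≤ ENNReal.ofReal K₁ := by
          apply ENNReal.ofReal_le_ofReal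
          have h9 : (1+(r-1)) = r := by ring
          rw [h9]
          have h10 : r * Real.exp (γ * (t/v)) ≤ r * (c*r) := by nlinarith
          have h11 : r * (c*r) = ρ * c := by rw [← hrr]; ring
          have h12 : ρ * c = K₁ := by rw [hρdef]; field_simp
          linarith
        have hGDv := hGD hγpos v w hv2 hvw hgw (K - K₁) (by linarith)
        filter_upwards [hGDv, eventually_gt_atTop (max (t+1) (β * (max u₁ 0)))] with x hxGD hx
        have hx1 : t + 1 < x := lt_of_le_of_lt (le_max_left _ _) hx
        have hxt : 0 < x - t := by linarith
        have hx0 : 0 < x := by linarith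
        have hx2 : β * (max u₁ 0) < x := lt_of_le_of_lt (le_max_right _ _) hx
        have hvβ : v ≤ β := hvβ'.le
        rw [hKIβ (x - t) hxt, ← Ioc_union_Ioc_eq_Ioc hv2.le hvβ,
          lintegral_union measurableSet_Ioc (hdisj2 0 v β)]
        have hP1 : ∫⁻ y in Ioc 0 v, PLaux.Fe μ ((x-t)/y) ∂ν
            ≤ ENNReal.ofReal (K - K₁) * Hx x := by
          have hreg := PLaux.region_const μ ν hv2 hxt.le (Ioc 0 v) (fun y hy => ⟨hy.1, hy.2⟩)
          refine le_trans hreg (le_trans ?_ hxGD)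
          calc PLaux.Fe μ ((x-t)/v) * ν (Ioc 0 v) ≤ PLaux.Fe μ ((x-t)/v) * 1 :=
                mul_le_mul_right prob_le_one _
            _ = PLaux.Fe μ ((x-t)/v) := mul_one _
        have hcond : ∀ y ∈ Ioc v β, 0 < y ∧ t/y ≤ t/v ∧ u₁ ≤ x/y := by
          intro y hy
          have hy1 : v < y := hy.1
          have hy2 : y ≤ β := hy.2
          have hy0 : 0 < y := lt_trans hv2 hy1
          have hy1' : v ≤ y := hy1.le
          refine ⟨hy0, by gcongr, ?_⟩
          have h1 : x/β ≤ x/y := by gcongr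
          have h2 : u₁ ≤ x/β := by
            rw [le_div_iff₀ hβpos]
            calc u₁ * β ≤ max u₁ 0 * β := mul_le_mul_of_nonneg_right (le_max_left _ _) hβpos.le
              _ = β * max u₁ 0 := mul_comm _ _
              _ ≤ x := hx2.le
          linarith
        have hP2 : ∫⁻ y in Ioc v β, PLaux.Fe μ ((x-t)/y) ∂ν ≤ ENNReal.ofReal K₁ * Hx x := by
          have hreg := PLaux.region_shift μ ν x t (t/v) u₁
            (ENNReal.ofReal ((1+(r-1)) * Real.exp (γ * (t/v)))) (Ioc v β) hcond hu₁
          refine le_trans hreg (le_trans (mul_le_mul_left hCle _) ?_)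
          apply mul_le_mul_right
          rw [hKI x hx0]
          exact lintegral_mono_set (fun y hy => lt_trans hv2 hy.1)
        calc (∫⁻ y in Ioc 0 v, PLaux.Fe μ ((x-t)/y) ∂ν)
              + ∫⁻ y in Ioc v β, PLaux.Fe μ ((x-t)/y) ∂ν
            ≤ ENNReal.ofReal (K - K₁) * Hx x + ENNReal.ofReal K₁ * Hx x := add_le_add hP1 hP2
          _ = (ENNReal.ofReal (K - K₁) + ENNReal.ofReal K₁) * Hx x := (add_mul _ _ _).symm
          _ ≤ ENNReal.ofReal K * Hx x := by
              apply mul_le_mul_left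
              rw [← ENNReal.ofReal_add (by linarith) hK₁pos.le]
              apply ENNReal.ofReal_le_ofReal
              linarith
    · -- lower bound
      intro K hK0 hKc
      have hεp : 0 < 1 - K/c := by
        have : K/c < 1 := (div_lt_one hcpos).2 hKc
        linarith
      have hε1 : 1 - K/c < 1 := by
        have : 0 < K/c := div_pos hK0 hcpos
        linarith
      obtain ⟨u₀, hu₀⟩ := hshiftL (t/β) (1 - K/c) (div_pos ht hβpos) hεp hε1
      have hcoef : (1 - (1 - K/c)) * Real.exp (γ * (t/β)) = K := by
        rw [hct]
        field_simp
        ring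
      filter_upwards [eventually_gt_atTop (max t (β * (max u₀ 0)))] with x hx
      have hxt : 0 < x - t := sub_pos.2 (lt_of_le_of_lt (le_max_left t _) hx)
      have hx0 : 0 < x := lt_trans ht (lt_of_le_of_lt (le_max_left t _) hx)
      have hxu : ∀ y : ℝ, y ∈ Ioc (0:ℝ) β → u₀ ≤ x / y := by
        intro y hy
        have hy1 : 0 < y := hy.1
        have hy2 : y ≤ β := hy.2
        have h1 : x / β ≤ x / y := by gcongr
        have h2 : u₀ ≤ x / β := by
          rw [le_div_iff₀ hβpos]
          calc u₀ * β ≤ max u₀ 0 * β := mul_le_mul_of_nonneg_right (le_max_left _ _) hβpos.le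
            _ = β * max u₀ 0 := mul_comm _ _
            _ ≤ x := le_of_lt (lt_of_le_of_lt (le_max_right t _) hx)
        linarith
      rw [hKIβ (x - t) hxt, hKIβ x hx0]
      calc ENNReal.ofReal K * ∫⁻ y in Ioc (0:ℝ) β, PLaux.Fe μ (x/y) ∂ν
          = ∫⁻ y in Ioc (0:ℝ) β, ENNReal.ofReal K * PLaux.Fe μ (x/y) ∂ν :=
            (lintegral_const_mul _ (PLaux.meas_comp μ x)).symm
        _ ≤ ∫⁻ y in Ioc (0:ℝ) β, PLaux.Fe μ (x/y - t/β) ∂ν := by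
            apply setLIntegral_mono (PLaux.meas_comp' μ x (t/β))
            intro y hy
            have h6 := hu₀ (x/y) (hxu y hy)
            rw [hcoef] at h6
            exact h6
        _ ≤ ∫⁻ y in Ioc (0:ℝ) β, PLaux.Fe μ ((x - t)/y) ∂ν := by
            apply setLIntegral_mono (PLaux.meas_comp μ (x - t))
            intro y hy
            have hy1 : 0 < y := hy.1
            have hy2 : y ≤ β := hy.2
            have h8 : t/β ≤ t/y := by gcongr
            have h7 : (x - t)/y ≤ x/y - t/β := by
              rw [sub_div]
              linarith
            exact PLaux.fe_anti μ h7
  · -- unbounded support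
    have hγ'0 : γ' = 0 := by
      rw [hγ'def]
      unfold gammaOverBeta
      rw [if_neg hB]
    have hc1 : c = 1 := by rw [hcdef, hγ'0]; simp
    have hGeAll : ∀ y : ℝ, ν (Ioi y) ≠ 0 := by
      intro y h0
      apply hB
      refine ⟨y, fun z hz => ?_⟩
      by_contra hzy
      push_neg at hzy
      exact (hS_iff z).1 hz (measure_mono_null (Ioi_subset_Ioi hzy.le) h0)
    apply hconclude
    · intro K hK
      have hKpos : 0 < K := lt_trans hcpos hK
      rcases eq_or_lt_of_le hγ with hγ0 | hγpos
      · -- γ = 0, β = ∞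
        have hγ0' : γ = 0 := hγ0.symm
        have hK1 : 1 < K := by rw [← hc1]; exact hK
        set ε : ℝ := (K-1)/4 with hεdef
        have hεpos : 0 < ε := by rw [hεdef]; linarith
        set w₁ : ℝ := t + 1 with hw₁def
        have hw₁pos : 0 < w₁ := by rw [hw₁def]; linarith
        have hgw : ν (Ioi w₁) ≠ 0 := hGeAll w₁
        have hgwR : 0 < (ν (Ioi w₁)).toReal := ENNReal.toReal_pos hgw (measure_ne_top _ _)
        obtain ⟨n₀, hn₀⟩ := hsmall (ENNReal.ofReal (ε * (ν (Ioi w₁)).toReal))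
          (ENNReal.ofReal_pos.2 (by positivity))
        set a : ℝ := t/((n₀:ℝ)+1) with hadef
        have hapos : 0 < a := by rw [hadef]; positivity
        have hat : a ≤ t := by
          rw [hadef]
          apply div_le_self ht.le
          have : (0:ℝ) ≤ (n₀:ℝ) := Nat.cast_nonneg _
          linarith
        have haw : a < w₁ := by rw [hw₁def]; linarith
        have hνa : ν (Ioc 0 a) ≤ ENNReal.ofReal (ε * (ν (Ioi w₁)).toReal) :=
          le_of_lt (hn₀ n₀ le_rfl)
        obtain ⟨u₁, hu₁⟩ := hshiftU ((n₀:ℝ)+1) ε (by positivity) hεpos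
        have hCeq : ENNReal.ofReal ((1+ε) * Real.exp (γ * ((n₀:ℝ)+1))) = ENNReal.ofReal (1+ε) := by
          rw [hγ0']; simp
        set x₀ : ℝ := max u₁ 1 with hx₀def
        have hx₀pos : 0 < x₀ := lt_of_lt_of_le one_pos (le_max_right _ _)
        have hA2x := hA2E (1/x₀) (by positivity) ε hεpos
        filter_upwards [hA2x, eventually_gt_atTop
          (max (t+1) (max (a * x₀) (w₁*t/(w₁ - a) + 1)))] with x hxA2 hx
        have hx1 : t + 1 < x := lt_of_le_of_lt (le_max_left _ _) hx
        have hxt : 0 < x - t := by linarith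
        have hx0 : 0 < x := by linarith
        have hx2 : a * x₀ < x :=
          lt_of_le_of_lt (le_trans (le_max_left _ _) (le_max_right _ _)) hx
        have hx3 : w₁*t/(w₁ - a) + 1 < x :=
          lt_of_le_of_lt (le_trans (le_max_right _ _) (le_max_right _ _)) hx
        have haxx : a ≤ x/x₀ := by rw [le_div_iff₀ hx₀pos]; linarith
        rw [hKI (x - t) hxt,
          show Ioi (0:ℝ) = Ioc 0 a ∪ (Ioc a (x/x₀) ∪ Ioi (x/x₀)) by
            rw [Ioc_union_Ioi_eq_Ioi haxx, Ioc_union_Ioi_eq_Ioi hapos.le],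
          lintegral_union (measurableSet_Ioc.union measurableSet_Ioi)
            ((hdisj1 0 a).mono_right (le_of_eq (Ioc_union_Ioi_eq_Ioi haxx))),
          lintegral_union measurableSet_Ioi (hdisj1 a (x/x₀))]
        have hcond : ∀ y ∈ Ioc a (x/x₀), 0 < y ∧ t/y ≤ (n₀:ℝ)+1 ∧ u₁ ≤ x/y := by
          intro y hy
          have hy1 : a < y := hy.1
          have hy2 : y ≤ x/x₀ := hy.2
          have hy0 : 0 < y := lt_trans hapos hy1
          refine ⟨hy0, ?_, ?_⟩
          · rw [div_le_iff₀ hy0]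
            rw [hadef, div_lt_iff₀ (by positivity : (0:ℝ) < (n₀:ℝ)+1)] at hy1
            nlinarith
          · have h1 : x₀ ≤ x/y := by
              rw [le_div_iff₀ hy0]
              rw [le_div_iff₀ hx₀pos] at hy2
              nlinarith
            exact le_trans (le_max_left u₁ 1) h1
        have hP2 : ∫⁻ y in Ioc a (x/x₀), PLaux.Fe μ ((x-t)/y) ∂ν
            ≤ ENNReal.ofReal (1+ε) * Hx x := by
          have hreg := PLaux.region_shift μ ν x t ((n₀:ℝ)+1) u₁
            (ENNReal.ofReal ((1+ε) * Real.exp (γ * ((n₀:ℝ)+1)))) (Ioc a (x/x₀)) hcond hu₁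
          refine le_trans hreg ?_
          rw [hCeq]
          apply mul_le_mul_right
          rw [hKI x hx0]
          exact lintegral_mono_set (fun y hy => lt_trans hapos hy.1)
        have hP1 : ∫⁻ y in Ioc 0 a, PLaux.Fe μ ((x-t)/y) ∂ν ≤ ENNReal.ofReal ε * Hx x := by
          have hreg := PLaux.region_const μ ν hapos hxt.le (Ioc 0 a) (fun y hy => ⟨hy.1, hy.2⟩)
          refine le_trans hreg ?_
          have hslope : 0 < w₁ - a := by linarith
          have hcmp : x/w₁ ≤ (x - t)/a := by
            rw [div_le_div_iff₀ hw₁pos hapos]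
            have h5 : (w₁*t/(w₁ - a)) * (w₁ - a) = w₁*t := div_mul_cancel₀ _ (ne_of_gt hslope)
            have h6 : w₁*t ≤ x * (w₁ - a) := by
              rw [← h5]
              apply mul_le_mul_of_nonneg_right (by linarith) hslope.le
            nlinarith
          calc PLaux.Fe μ ((x-t)/a) * ν (Ioc 0 a)
              ≤ PLaux.Fe μ (x/w₁) * ENNReal.ofReal (ε * (ν (Ioi w₁)).toReal) :=
                mul_le_mul' (PLaux.fe_anti μ hcmp) hνa
            _ = ENNReal.ofReal ε * (PLaux.Fe μ (x/w₁) * ν (Ioi w₁)) := by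
                rw [ENNReal.ofReal_mul hεpos.le, ENNReal.ofReal_toReal (measure_ne_top _ _)]
                ring
            _ ≤ ENNReal.ofReal ε * Hx x := mul_le_mul_right (hLBH x w₁ hx0 hw₁pos) _
        have hP3 : ∫⁻ y in Ioi (x/x₀), PLaux.Fe μ ((x-t)/y) ∂ν ≤ ENNReal.ofReal ε * Hx x := by
          have h1 : ∫⁻ y in Ioi (x/x₀), PLaux.Fe μ ((x-t)/y) ∂ν ≤ ν (Ioi (x/x₀)) := by
            calc ∫⁻ y in Ioi (x/x₀), PLaux.Fe μ ((x-t)/y) ∂ν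
                ≤ ∫⁻ _ in Ioi (x/x₀), 1 ∂ν :=
                  setLIntegral_mono measurable_const (fun y _ => PLaux.fe_le_one μ _)
              _ = ν (Ioi (x/x₀)) := setLIntegral_one _
          refine le_trans h1 ?_
          have heq : (1/x₀) * x = x/x₀ := by field_simp
          rw [← heq]
          exact hxA2
        calc (∫⁻ y in Ioc 0 a, PLaux.Fe μ ((x-t)/y) ∂ν)
              + ((∫⁻ y in Ioc a (x/x₀), PLaux.Fe μ ((x-t)/y) ∂ν)
                + ∫⁻ y in Ioi (x/x₀), PLaux.Fe μ ((x-t)/y) ∂ν)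
            ≤ ENNReal.ofReal ε * Hx x
              + (ENNReal.ofReal (1+ε) * Hx x + ENNReal.ofReal ε * Hx x) :=
              add_le_add hP1 (add_le_add hP2 hP3)
          _ = (ENNReal.ofReal ε + (ENNReal.ofReal (1+ε) + ENNReal.ofReal ε)) * Hx x := by ring
          _ ≤ ENNReal.ofReal K * Hx x := by
              apply mul_le_mul_left
              rw [← ENNReal.ofReal_add (by linarith) hεpos.le,
                ← ENNReal.ofReal_add hεpos.le (by linarith)]
              apply ENNReal.ofReal_le_ofReal
              rw [hεdef]; linarith
      · -- γ > 0, β = ∞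
        have hK1 : 1 < K := by rw [← hc1]; exact hK
        set K₁ : ℝ := (1 + K)/2 with hK₁def
        have hK₁1 : 1 < K₁ := by rw [hK₁def]; linarith
        have hK₁K : K₁ < K := by rw [hK₁def]; linarith
        have hK₁pos : 0 < K₁ := by linarith
        set r : ℝ := Real.sqrt K₁ with hrdef
        have hr1 : 1 < r := by
          rw [hrdef, show (1:ℝ) = Real.sqrt 1 from Real.sqrt_one.symm]
          exact Real.sqrt_lt_sqrt (by norm_num) hK₁1
        have hrr : r*r = K₁ := Real.mul_self_sqrt (by linarith)
        set M : ℝ := max (γ*t/Real.log r) 1 with hMdef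
        have hM1 : (1:ℝ) ≤ M := le_max_right _ _
        have hMpos : 0 < M := lt_of_lt_of_le one_pos hM1
        have hlogr : 0 < Real.log r := Real.log_pos hr1
        have hexpM : Real.exp (γ * (t/M)) ≤ r := by
          rw [← Real.exp_log (by linarith : (0:ℝ) < r)]
          apply Real.exp_le_exp.2
          have h1 : γ*t/Real.log r ≤ M := le_max_left _ _
          rw [div_le_iff₀ hlogr] at h1
          have h2 : γ*(t/M) = γ*t/M := by ring
          rw [h2, div_le_iff₀ hMpos]
          nlinarith
        have hgw : ν (Ioi (M+1)) ≠ 0 := hGeAll _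
        obtain ⟨u₁, hu₁⟩ := hshiftU (t/M) (r-1) (div_pos ht hMpos) (by linarith)
        set x₀ : ℝ := max u₁ 1 with hx₀def
        have hx₀pos : 0 < x₀ := lt_of_lt_of_le one_pos (le_max_right _ _)
        set ε₃ : ℝ := (K - K₁)/2 with hε₃def
        have hε₃pos : 0 < ε₃ := by rw [hε₃def]; linarith
        have hA2x := hA2E (1/x₀) (by positivity) ε₃ hε₃pos
        have hGDv := hGD hγpos M (M+1) hMpos (by linarith) hgw ε₃ hε₃pos
        have hCle : ENNReal.ofReal ((1+(r-1)) * Real.exp (γ * (t/M))) ≤ ENNReal.ofReal K₁ := by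
          apply ENNReal.ofReal_le_ofReal
          have h9 : (1+(r-1)) = r := by ring
          rw [h9]
          nlinarith
        filter_upwards [hA2x, hGDv, eventually_gt_atTop (max (t+1) (M * x₀))] with x hxA2 hxGD hx
        have hx1 : t + 1 < x := lt_of_le_of_lt (le_max_left _ _) hx
        have hxt : 0 < x - t := by linarith
        have hx0 : 0 < x := by linarith
        have hx2 : M * x₀ < x := lt_of_le_of_lt (le_max_right _ _) hx
        have hMxx : M ≤ x/x₀ := by rw [le_div_iff₀ hx₀pos]; linarith
        rw [hKI (x-t) hxt,
          show Ioi (0:ℝ) = Ioc 0 M ∪ (Ioc M (x/x₀) ∪ Ioi (x/x₀)) by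
            rw [Ioc_union_Ioi_eq_Ioi hMxx, Ioc_union_Ioi_eq_Ioi hMpos.le],
          lintegral_union (measurableSet_Ioc.union measurableSet_Ioi)
            ((hdisj1 0 M).mono_right (le_of_eq (Ioc_union_Ioi_eq_Ioi hMxx))),
          lintegral_union measurableSet_Ioi (hdisj1 M (x/x₀))]
        have hP1 : ∫⁻ y in Ioc 0 M, PLaux.Fe μ ((x-t)/y) ∂ν ≤ ENNReal.ofReal ε₃ * Hx x := by
          have hreg := PLaux.region_const μ ν hMpos hxt.le (Ioc 0 M) (fun y hy => ⟨hy.1, hy.2⟩)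
          refine le_trans hreg (le_trans ?_ hxGD)
          calc PLaux.Fe μ ((x-t)/M) * ν (Ioc 0 M) ≤ PLaux.Fe μ ((x-t)/M) * 1 :=
                mul_le_mul_right prob_le_one _
            _ = PLaux.Fe μ ((x-t)/M) := mul_one _
        have hcond : ∀ y ∈ Ioc M (x/x₀), 0 < y ∧ t/y ≤ t/M ∧ u₁ ≤ x/y := by
          intro y hy
          have hy1 : M < y := hy.1
          have hy2 : y ≤ x/x₀ := hy.2
          have hy0 : 0 < y := lt_trans hMpos hy1
          have hy1' : M ≤ y := hy1.le
          refine ⟨hy0, by gcongr, ?_⟩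
          have h1 : x₀ ≤ x/y := by
            rw [le_div_iff₀ hy0]
            rw [le_div_iff₀ hx₀pos] at hy2
            nlinarith
          exact le_trans (le_max_left u₁ 1) h1
        have hP2 : ∫⁻ y in Ioc M (x/x₀), PLaux.Fe μ ((x-t)/y) ∂ν
            ≤ ENNReal.ofReal K₁ * Hx x := by
          have hreg := PLaux.region_shift μ ν x t (t/M) u₁
            (ENNReal.ofReal ((1+(r-1)) * Real.exp (γ * (t/M)))) (Ioc M (x/x₀)) hcond hu₁
          refine le_trans hreg (le_trans (mul_le_mul_left hCle _) ?_)
          apply mul_le_mul_right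
          rw [hKI x hx0]
          exact lintegral_mono_set (fun y hy => lt_trans hMpos hy.1)
        have hP3 : ∫⁻ y in Ioi (x/x₀), PLaux.Fe μ ((x-t)/y) ∂ν ≤ ENNReal.ofReal ε₃ * Hx x := by
          have h1 : ∫⁻ y in Ioi (x/x₀), PLaux.Fe μ ((x-t)/y) ∂ν ≤ ν (Ioi (x/x₀)) := by
            calc ∫⁻ y in Ioi (x/x₀), PLaux.Fe μ ((x-t)/y) ∂ν
                ≤ ∫⁻ _ in Ioi (x/x₀), 1 ∂ν :=
                  setLIntegral_mono measurable_const (fun y _ => PLaux.fe_le_one μ _)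
              _ = ν (Ioi (x/x₀)) := setLIntegral_one _
          refine le_trans h1 ?_
          have heq : (1/x₀) * x = x/x₀ := by field_simp
          rw [← heq]
          exact hxA2
        calc (∫⁻ y in Ioc 0 M, PLaux.Fe μ ((x-t)/y) ∂ν)
              + ((∫⁻ y in Ioc M (x/x₀), PLaux.Fe μ ((x-t)/y) ∂ν)
                + ∫⁻ y in Ioi (x/x₀), PLaux.Fe μ ((x-t)/y) ∂ν)
            ≤ ENNReal.ofReal ε₃ * Hx x
              + (ENNReal.ofReal K₁ * Hx x + ENNReal.ofReal ε₃ * Hx x) :=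
              add_le_add hP1 (add_le_add hP2 hP3)
          _ = (ENNReal.ofReal ε₃ + (ENNReal.ofReal K₁ + ENNReal.ofReal ε₃)) * Hx x := by ring
          _ ≤ ENNReal.ofReal K * Hx x := by
              apply mul_le_mul_left
              rw [← ENNReal.ofReal_add hK₁pos.le hε₃pos.le,
                ← ENNReal.ofReal_add hε₃pos.le (by positivity)]
              apply ENNReal.ofReal_le_ofReal
              rw [hε₃def]; linarith
    · -- lower bound: monotonicity
      intro K hK0 hKc
      filter_upwards with x
      have hsub : {ω | x < X ω * Y ω} ⊆ {ω | x - t < X ω * Y ω} :=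
        fun ω h => lt_of_le_of_lt (sub_le_self x ht.le) h
      calc ENNReal.ofReal K * Hx x ≤ 1 * Hx x := by
            apply mul_le_mul_left
            rw [← ENNReal.ofReal_one]
            exact ENNReal.ofReal_le_ofReal (le_of_lt (lt_of_lt_of_le hKc (le_of_eq hc1)))
        _ = Hx x := one_mul _
        _ ≤ Hx (x - t) := measure_mono hsub
end
end

section
/- Let X be a real-valued random variable with unbounded distribution F and Y a nonnegative random variable with distribution G, neither degenerate at zero, and suppose (X,Y) follows an FGM distribution with parameter θ. If |θ|<1, then P(X>x | Y=y) ~ F̄(x)(1+θ(G(y)+G(y−)−1)) as x→∞ uniformly in y in the support D_Y of Y, i.e. sup_{y∈D_Y} |P(X>x|Y=y)/(F̄(x)(1+θ(G(y)+G(y−)−1))) − 1| → 0 as x→∞, where G(y−)=lim_{δ→0+} G(y−δ). -/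
open MeasureTheory ProbabilityTheory Filter Set Asymptotics

noncomputable section

section AuxFGM

set_option linter.unusedSectionVars false
set_option linter.unusedVariables false

variable {Ω : Type*} [MeasureSpace Ω] [IsProbabilityMeasure (ℙ : Measure Ω)]

lemma aux_pr_mono {A B : Set Ω} (h : A ⊆ B) : (ℙ A).toReal ≤ (ℙ B).toReal :=
  ENNReal.toReal_mono (measure_ne_top _ _) (measure_mono h)

lemma aux_pr_nonneg (A : Set Ω) : (0:ℝ) ≤ (ℙ A).toReal := ENNReal.toReal_nonneg

lemma aux_pr_le_one (A : Set Ω) : (ℙ A).toReal ≤ 1 := by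
  have h : ℙ A ≤ 1 := prob_le_one
  have h2 := ENNReal.toReal_mono (by simp) h
  simpa using h2

lemma aux_union_null {A B : Set Ω} (h : ℙ B = 0) : ℙ (A ∪ B) = ℙ A :=
  le_antisymm (le_trans (measure_union_le _ _) (by simp [h]))
    (measure_mono subset_union_left)

lemma aux_tail_cdf (Z : Ω → ℝ) (hZ : Measurable Z) (x : ℝ) :
    rvTail Z x + rvCdf Z x = 1 := by
  have h := measure_add_measure_compl (μ := (ℙ : Measure Ω))
    (hZ measurableSet_Iic : MeasurableSet (Z ⁻¹' Iic x))
  rw [measure_univ] at h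
  have hset : (Z ⁻¹' Iic x)ᶜ = {ω | x < Z ω} := by
    ext ω; simp [not_le]
  rw [hset] at h
  have h2 := congrArg ENNReal.toReal h
  rw [ENNReal.toReal_add (measure_ne_top _ _) (measure_ne_top _ _)] at h2
  simp only [ENNReal.toReal_one] at h2
  show (ℙ {ω | x < Z ω}).toReal + (ℙ {ω | Z ω ≤ x}).toReal = 1
  have h3 : ℙ (Z ⁻¹' Iic x) = ℙ {ω | Z ω ≤ x} := rfl
  rw [h3] at h2
  linarith

lemma aux_cdf_mono (Z : Ω → ℝ) {a b : ℝ} (h : a ≤ b) : rvCdf Z a ≤ rvCdf Z b :=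
  aux_pr_mono (fun ω hω => le_trans hω h)

lemma aux_not_support {Z : Ω → ℝ} {t : ℝ} (h : t ∉ distSupport Z) :
    ∃ δ > 0, ℙ {ω | Z ω ∈ Ioo (t - δ) (t + δ)} = 0 := by
  simp only [distSupport, mem_setOf_eq, not_forall] at h
  push_neg at h
  obtain ⟨δ, hδ, h0⟩ := h
  exact ⟨δ, hδ, le_antisymm h0 zero_le⟩

lemma aux_ball_not_support {Z : Ω → ℝ} {a b : ℝ}
    (h0 : ℙ {ω | Z ω ∈ Ioo a b} = 0) : ∀ s ∈ Ioo a b, s ∉ distSupport Z := by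
  intro s hs hmem
  rw [mem_Ioo] at hs
  set δ := min (s - a) (b - s) with hδdef
  have hδ : 0 < δ := lt_min (by linarith [hs.1]) (by linarith [hs.2])
  have hsub : Ioo (s - δ) (s + δ) ⊆ Ioo a b := by
    intro u hu
    rw [mem_Ioo] at hu ⊢
    have h1 : δ ≤ s - a := min_le_left _ _
    have h2 : δ ≤ b - s := min_le_right _ _
    exact ⟨by linarith [hu.1], by linarith [hu.2]⟩
  have hz : ℙ {ω | Z ω ∈ Ioo (s - δ) (s + δ)} = 0 :=
    measure_mono_null (fun ω hω => hsub hω) h0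
  have hpos := hmem δ hδ
  rw [hz] at hpos
  exact lt_irrefl _ hpos

lemma aux_isClosed_support (Z : Ω → ℝ) : IsClosed (distSupport Z : Set ℝ) := by
  rw [← isOpen_compl_iff, isOpen_iff_mem_nhds]
  intro t ht
  obtain ⟨δ, hδ, h0⟩ := aux_not_support ht
  exact Filter.mem_of_superset (Ioo_mem_nhds (by linarith) (by linarith))
    (fun s hs => aux_ball_not_support h0 s hs)

lemma aux_null_open {Z : Ω → ℝ} (hZ : Measurable Z) {U : Set ℝ} (hU : IsOpen U)
    (h : ∀ t ∈ U, t ∉ distSupport Z) : ℙ (Z ⁻¹' U) = 0 := by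
  have hmap : (Measure.map Z ℙ) U = 0 := by
    apply measure_null_of_locally_null
    intro t ht
    obtain ⟨δ, hδ, h0⟩ := aux_not_support (h t ht)
    refine ⟨Ioo (t - δ) (t + δ),
      mem_nhdsWithin_of_mem_nhds (Ioo_mem_nhds (by linarith) (by linarith)), ?_⟩
    rw [Measure.map_apply hZ measurableSet_Ioo]
    exact h0
  rwa [Measure.map_apply hZ hU.measurableSet] at hmap

lemma aux_reduction {Z : Ω → ℝ} (hZ : Measurable Z) {x : ℝ} (hx : x ∉ distSupport Z) :
    (∃ v ∈ distSupport Z, v < x ∧ ℙ (Z ⁻¹' Ioc v x) = 0) ∨ ℙ {ω | Z ω ≤ x} = 0 := by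
  obtain ⟨δ, hδ, h0⟩ := aux_not_support hx
  by_cases hne : (distSupport Z ∩ Iic x).Nonempty
  · left
    have hclosed : IsClosed (distSupport Z ∩ Iic x) :=
      (aux_isClosed_support Z).inter isClosed_Iic
    have hbdd : BddAbove (distSupport Z ∩ Iic x) := ⟨x, fun t ht => ht.2⟩
    set v := sSup (distSupport Z ∩ Iic x) with hv
    have hvmem := hclosed.csSup_mem hne hbdd
    have hvS : v ∈ distSupport Z := hvmem.1
    have hvle : v ≤ x := hvmem.2
    have hvlt : v < x := lt_of_le_of_ne hvle (fun he => hx (he ▸ hvS))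
    refine ⟨v, hvS, hvlt, ?_⟩
    have hUS : ∀ t ∈ Ioo v (x + δ), t ∉ distSupport Z := by
      intro t ht htS
      rw [mem_Ioo] at ht
      rcases le_or_gt t x with h1 | h1
      · exact absurd (le_csSup hbdd (mem_inter htS (mem_Iic.2 h1))) (not_le.2 ht.1)
      · exact aux_ball_not_support h0 t (mem_Ioo.2 ⟨by linarith, ht.2⟩) htS
    refine measure_mono_null ?_ (aux_null_open hZ isOpen_Ioo hUS)
    intro ω hω
    rw [mem_preimage, mem_Ioc] at hω
    rw [mem_preimage, mem_Ioo]
    exact ⟨hω.1, lt_of_le_of_lt hω.2 (by linarith)⟩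
  · right
    have hUS : ∀ t ∈ Iio (x + δ), t ∉ distSupport Z := by
      intro t ht htS
      rw [mem_Iio] at ht
      rcases le_or_gt t x with h1 | h1
      · exact hne ⟨t, mem_inter htS (mem_Iic.2 h1)⟩
      · exact aux_ball_not_support h0 t (mem_Ioo.2 ⟨by linarith, ht⟩) htS
    refine measure_mono_null ?_ (aux_null_open hZ isOpen_Iio hUS)
    intro ω hω
    rw [mem_setOf_eq] at hω
    rw [mem_preimage, mem_Iio]
    linarith

lemma aux_replace_pred {Z : Ω → ℝ} {v x : ℝ} (hnull : ℙ (Z ⁻¹' Ioc v x) = 0)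
    (hvx : v ≤ x) (P : Ω → Prop) :
    ℙ {ω | P ω ∧ v < Z ω} = ℙ {ω | P ω ∧ x < Z ω} := by
  have hset : {ω | P ω ∧ v < Z ω}
      = {ω | P ω ∧ x < Z ω} ∪ ({ω | P ω} ∩ Z ⁻¹' Ioc v x) := by
    ext ω
    simp only [mem_setOf_eq, mem_union, mem_inter_iff, mem_preimage, mem_Ioc]
    constructor
    · rintro ⟨hP, hvZ⟩
      rcases le_or_gt (Z ω) x with h | h
      · exact Or.inr ⟨hP, hvZ, h⟩
      · exact Or.inl ⟨hP, h⟩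
    · rintro (⟨hP, hxZ⟩ | ⟨hP, hvZ, _⟩)
      · exact ⟨hP, lt_of_le_of_lt hvx hxZ⟩
      · exact ⟨hP, hvZ⟩
  rw [hset, aux_union_null (measure_mono_null inter_subset_right hnull)]

lemma aux_replace_cdf {Z : Ω → ℝ} {v x : ℝ} (hnull : ℙ (Z ⁻¹' Ioc v x) = 0)
    (hvx : v ≤ x) : ℙ {ω | Z ω ≤ x} = ℙ {ω | Z ω ≤ v} := by
  have hset : {ω | Z ω ≤ x} = {ω | Z ω ≤ v} ∪ Z ⁻¹' Ioc v x := by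
    ext ω
    simp only [mem_setOf_eq, mem_union, mem_preimage, mem_Ioc]
    constructor
    · intro h
      rcases le_or_gt (Z ω) v with h1 | h1
      · exact Or.inl h1
      · exact Or.inr ⟨h1, h⟩
    · rintro (h | ⟨_, h⟩)
      · exact le_trans h hvx
      · exact h
  rw [hset, aux_union_null hnull]

lemma aux_full_pred {Z : Ω → ℝ} {x : ℝ} (hnull : ℙ {ω | Z ω ≤ x} = 0)
    (P : Ω → Prop) : ℙ {ω | P ω ∧ x < Z ω} = ℙ {ω | P ω} := by
  have hset : {ω | P ω} = {ω | P ω ∧ x < Z ω} ∪ ({ω | P ω} ∩ {ω | Z ω ≤ x}) := by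
    ext ω
    simp only [mem_setOf_eq, mem_union, mem_inter_iff]
    constructor
    · intro hP
      rcases le_or_gt (Z ω) x with h | h
      · exact Or.inr ⟨hP, h⟩
      · exact Or.inl ⟨hP, h⟩
    · rintro (⟨hP, _⟩ | ⟨hP, _⟩) <;> exact hP
  conv_rhs => rw [hset]
  rw [aux_union_null (measure_mono_null inter_subset_right hnull)]

lemma aux_fgm_all (X Y : Ω → ℝ) (hXm : Measurable X) (hYm : Measurable Y)
    (θ : ℝ) (hFGM : FGM X Y θ) :
    ∀ x y : ℝ, (ℙ {ω | x < X ω ∧ y < Y ω}).toReal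
      = rvTail X x * rvTail Y y * (1 + θ * rvCdf X x * rvCdf Y y) := by
  have key : ∀ x ∈ distSupport X, ∀ y : ℝ, (ℙ {ω | x < X ω ∧ y < Y ω}).toReal
      = rvTail X x * rvTail Y y * (1 + θ * rvCdf X x * rvCdf Y y) := by
    intro x hxS y
    by_cases hyS : y ∈ distSupport Y
    · exact hFGM.2 x hxS y hyS
    · rcases aux_reduction hYm hyS with ⟨v, hvS, hvlt, hnull⟩ | hnull
      · have hJ : ℙ {ω | x < X ω ∧ y < Y ω} = ℙ {ω | x < X ω ∧ v < Y ω} :=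
          (aux_replace_pred hnull hvlt.le (fun ω => x < X ω)).symm
        have hT : rvTail Y y = rvTail Y v := by
          show (ℙ {ω | y < Y ω}).toReal = (ℙ {ω | v < Y ω}).toReal
          have h := aux_replace_pred hnull hvlt.le (fun _ : Ω => True)
          simp only [true_and] at h
          rw [h]
        have hC : rvCdf Y y = rvCdf Y v := by
          show (ℙ {ω | Y ω ≤ y}).toReal = (ℙ {ω | Y ω ≤ v}).toReal
          rw [aux_replace_cdf hnull hvlt.le]
        rw [hJ, hT, hC]
        exact hFGM.2 x hxS v hvS
      · have hC : rvCdf Y y = 0 := by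
          show (ℙ {ω | Y ω ≤ y}).toReal = 0
          rw [hnull]; simp
        have hT : rvTail Y y = 1 := by
          have h := aux_tail_cdf Y hYm y; rw [hC] at h; linarith
        have hJ : ℙ {ω | x < X ω ∧ y < Y ω} = ℙ {ω | x < X ω} :=
          aux_full_pred hnull (fun ω => x < X ω)
        rw [hJ, hC, hT]
        show (ℙ {ω | x < X ω}).toReal = (ℙ {ω | x < X ω}).toReal * 1 * (1 + θ * rvCdf X x * 0)
        ring
  intro x y
  by_cases hxS : x ∈ distSupport X
  · exact key x hxS y
  · have hcomm : ∀ t : ℝ, {ω | t < X ω ∧ y < Y ω} = {ω | y < Y ω ∧ t < X ω} := by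
      intro t; ext ω; exact and_comm
    rcases aux_reduction hXm hxS with ⟨v, hvS, hvlt, hnull⟩ | hnull
    · have hJ : ℙ {ω | x < X ω ∧ y < Y ω} = ℙ {ω | v < X ω ∧ y < Y ω} := by
        rw [hcomm x, hcomm v]
        exact (aux_replace_pred hnull hvlt.le (fun ω => y < Y ω)).symm
      have hT : rvTail X x = rvTail X v := by
        show (ℙ {ω | x < X ω}).toReal = (ℙ {ω | v < X ω}).toReal
        have h := aux_replace_pred hnull hvlt.le (fun _ : Ω => True)
        simp only [true_and] at h
        rw [h]
      have hC : rvCdf X x = rvCdf X v := by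
        show (ℙ {ω | X ω ≤ x}).toReal = (ℙ {ω | X ω ≤ v}).toReal
        rw [aux_replace_cdf hnull hvlt.le]
      rw [hJ, hT, hC]
      exact key v hvS y
    · have hC : rvCdf X x = 0 := by
        show (ℙ {ω | X ω ≤ x}).toReal = 0
        rw [hnull]; simp
      have hT : rvTail X x = 1 := by
        have h := aux_tail_cdf X hXm x; rw [hC] at h; linarith
      have hJ : ℙ {ω | x < X ω ∧ y < Y ω} = ℙ {ω | y < Y ω} := by
        rw [hcomm x]
        exact aux_full_pred hnull (fun ω => y < Y ω)
      rw [hJ, hC, hT]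
      show (ℙ {ω | y < Y ω}).toReal = 1 * (ℙ {ω | y < Y ω}).toReal * (1 + θ * 0 * rvCdf Y y)
      ring

lemma aux_split {Z : Ω → ℝ} (hZ : Measurable Z) {a b : ℝ} (hab : a ≤ b)
    {P : Ω → Prop} (hP : MeasurableSet {ω | P ω}) :
    (ℙ {ω | P ω ∧ Z ω ∈ Ioc a b}).toReal
      = (ℙ {ω | P ω ∧ a < Z ω}).toReal - (ℙ {ω | P ω ∧ b < Z ω}).toReal := by
  have hset : {ω | P ω ∧ a < Z ω}
      = {ω | P ω ∧ Z ω ∈ Ioc a b} ∪ {ω | P ω ∧ b < Z ω} := by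
    ext ω
    simp only [mem_setOf_eq, mem_union, mem_Ioc]
    constructor
    · rintro ⟨hPω, ha⟩
      rcases le_or_gt (Z ω) b with h | h
      · exact Or.inl ⟨hPω, ha, h⟩
      · exact Or.inr ⟨hPω, h⟩
    · rintro (⟨hPω, ha, _⟩ | ⟨hPω, hb⟩)
      · exact ⟨hPω, ha⟩
      · exact ⟨hPω, lt_of_le_of_lt hab hb⟩
  have hdisj : Disjoint {ω | P ω ∧ Z ω ∈ Ioc a b} {ω | P ω ∧ b < Z ω} := by
    rw [Set.disjoint_left]
    rintro ω ⟨_, _, h2⟩ ⟨_, h3⟩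
    exact absurd h3 (not_lt.2 h2)
  have hm2 : MeasurableSet {ω | P ω ∧ b < Z ω} := by
    have he : {ω | P ω ∧ b < Z ω} = {ω | P ω} ∩ {ω | b < Z ω} := rfl
    rw [he]
    exact hP.inter (measurableSet_lt measurable_const hZ)
  have hu := measure_union (μ := (ℙ : Measure Ω)) hdisj hm2
  rw [← hset] at hu
  rw [hu, ENNReal.toReal_add (measure_ne_top _ _) (measure_ne_top _ _)]
  ring

lemma aux_tail_small {Z : Ω → ℝ} (hZ : Measurable Z) {ε : ℝ} (hε : 0 < ε) :
    ∀ᶠ x in Filter.atTop, rvTail Z x < ε := by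
  have hanti : Antitone (fun n : ℕ => {ω | (n : ℝ) < Z ω}) := by
    intro n m hnm ω hω
    simp only [mem_setOf_eq] at hω ⊢
    exact lt_of_le_of_lt (by exact_mod_cast hnm : (n : ℝ) ≤ (m : ℝ)) hω
  have hseq : Tendsto (fun n : ℕ => ℙ {ω | (n : ℝ) < Z ω}) Filter.atTop
      (nhds (ℙ (⋂ n : ℕ, {ω | (n : ℝ) < Z ω}))) :=
    tendsto_measure_iInter_atTop
      (fun n => (measurableSet_lt measurable_const hZ).nullMeasurableSet) hanti
      ⟨0, measure_ne_top _ _⟩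
  have hempty : (⋂ n : ℕ, {ω | (n : ℝ) < Z ω}) = (∅ : Set Ω) := by
    ext ω
    simp only [mem_iInter, mem_setOf_eq, mem_empty_iff_false, iff_false, not_forall, not_lt]
    exact exists_nat_ge (Z ω)
  rw [hempty, measure_empty] at hseq
  have htR : Tendsto (fun n : ℕ => (ℙ {ω | (n : ℝ) < Z ω}).toReal) Filter.atTop
      (nhds 0) := by
    have h2 := (ENNReal.tendsto_toReal (a := 0) (by simp)).comp hseq
    simpa [Function.comp_def] using h2
  obtain ⟨n, hn⟩ := (htR.eventually_lt_const hε).exists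
  filter_upwards [Filter.eventually_ge_atTop (n : ℝ)] with x hx
  exact lt_of_le_of_lt (aux_pr_mono (fun ω hω => lt_of_le_of_lt hx hω)) hn

lemma aux_cdf_right {Z : Ω → ℝ} (hZ : Measurable Z) (y : ℝ) :
    Tendsto (fun δ : ℝ => rvCdf Z (y + δ)) (nhdsWithin 0 (Ioi 0)) (nhds (rvCdf Z y)) := by
  rw [Metric.tendsto_nhdsWithin_nhds]
  intro ε hε
  have hanti : Antitone (fun n : ℕ => {ω | Z ω ≤ y + 1 / ((n : ℝ) + 1)}) := by
    intro n m hnm ω hω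
    simp only [mem_setOf_eq] at hω ⊢
    have h : 1 / ((m : ℝ) + 1) ≤ 1 / ((n : ℝ) + 1) := by
      have hc' : ((n : ℝ) + 1) ≤ ((m : ℝ) + 1) := by
        have : (n : ℝ) ≤ (m : ℝ) := Nat.cast_le.2 hnm
        linarith
      exact one_div_le_one_div_of_le (by positivity) hc'
    linarith
  have hseq : Tendsto (fun n : ℕ => rvCdf Z (y + 1 / ((n : ℝ) + 1))) Filter.atTop
      (nhds (rvCdf Z y)) := by
    have h1 : Tendsto (fun n : ℕ => ℙ {ω | Z ω ≤ y + 1 / ((n : ℝ) + 1)}) Filter.atTop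
        (nhds (ℙ (⋂ n : ℕ, {ω | Z ω ≤ y + 1 / ((n : ℝ) + 1)}))) :=
      tendsto_measure_iInter_atTop
        (fun n => (measurableSet_le hZ measurable_const).nullMeasurableSet) hanti
        ⟨0, measure_ne_top _ _⟩
    have hint : (⋂ n : ℕ, {ω | Z ω ≤ y + 1 / ((n : ℝ) + 1)}) = {ω | Z ω ≤ y} := by
      ext ω
      simp only [mem_iInter, mem_setOf_eq]
      constructor
      · intro h
        by_contra hlt
        push_neg at hlt
        obtain ⟨n, hn⟩ := exists_nat_one_div_lt (sub_pos.2 hlt)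
        have h2 := h n
        linarith
      · intro h n
        have h0 : (0:ℝ) < 1 / ((n : ℝ) + 1) := by positivity
        linarith
    rw [hint] at h1
    have h2 := (ENNReal.tendsto_toReal (measure_ne_top _ _)).comp h1
    exact h2
  obtain ⟨n, hn⟩ := (hseq.eventually_lt_const
    (show rvCdf Z y < rvCdf Z y + ε by linarith)).exists
  refine ⟨1 / ((n : ℝ) + 1), by positivity, ?_⟩
  intro δ hδ hdist
  have hδ0 : (0:ℝ) < δ := hδ
  rw [Real.dist_eq, sub_zero, abs_of_pos hδ0] at hdist
  have hlow : rvCdf Z y ≤ rvCdf Z (y + δ) := aux_cdf_mono Z (by linarith)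
  have hup : rvCdf Z (y + δ) ≤ rvCdf Z (y + 1 / ((n : ℝ) + 1)) :=
    aux_cdf_mono Z (by linarith)
  rw [Real.dist_eq, abs_lt]
  constructor <;> linarith

lemma aux_cdf_left {Z : Ω → ℝ} (hZ : Measurable Z) (y : ℝ) :
    Tendsto (fun δ : ℝ => rvCdf Z (y - δ)) (nhdsWithin 0 (Ioi 0))
      (nhds (rvCdfLeft Z y)) := by
  rw [Metric.tendsto_nhdsWithin_nhds]
  intro ε hε
  have hmono : Monotone (fun n : ℕ => {ω | Z ω ≤ y - 1 / ((n : ℝ) + 1)}) := by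
    intro n m hnm ω hω
    simp only [mem_setOf_eq] at hω ⊢
    have h : 1 / ((m : ℝ) + 1) ≤ 1 / ((n : ℝ) + 1) := by
      have hc' : ((n : ℝ) + 1) ≤ ((m : ℝ) + 1) := by
        have : (n : ℝ) ≤ (m : ℝ) := Nat.cast_le.2 hnm
        linarith
      exact one_div_le_one_div_of_le (by positivity) hc'
    linarith
  have hseq : Tendsto (fun n : ℕ => rvCdf Z (y - 1 / ((n : ℝ) + 1))) Filter.atTop
      (nhds (rvCdfLeft Z y)) := by
    have h1 := tendsto_measure_iUnion_atTop (μ := (ℙ : Measure Ω)) hmono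
    have hun : (⋃ n : ℕ, {ω | Z ω ≤ y - 1 / ((n : ℝ) + 1)}) = {ω | Z ω < y} := by
      ext ω
      simp only [mem_iUnion, mem_setOf_eq]
      constructor
      · rintro ⟨n, hn⟩
        have h0 : (0:ℝ) < 1 / ((n : ℝ) + 1) := by positivity
        linarith
      · intro h
        obtain ⟨n, hn⟩ := exists_nat_one_div_lt (sub_pos.2 h)
        exact ⟨n, by linarith⟩
    rw [hun] at h1
    have h2 := (ENNReal.tendsto_toReal (measure_ne_top _ _)).comp h1
    exact h2
  obtain ⟨n, hn⟩ := (hseq.eventually_const_lt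
    (show rvCdfLeft Z y - ε < rvCdfLeft Z y by linarith)).exists
  refine ⟨1 / ((n : ℝ) + 1), by positivity, ?_⟩
  intro δ hδ hdist
  have hδ0 : (0:ℝ) < δ := hδ
  rw [Real.dist_eq, sub_zero, abs_of_pos hδ0] at hdist
  have hup : rvCdf Z (y - δ) ≤ rvCdfLeft Z y := by
    refine aux_pr_mono (fun ω hω => ?_)
    simp only [mem_setOf_eq] at hω ⊢
    linarith
  have hlow : rvCdf Z (y - 1 / ((n : ℝ) + 1)) ≤ rvCdf Z (y - δ) :=
    aux_cdf_mono Z (by linarith)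
  rw [Real.dist_eq, abs_lt]
  constructor <;> linarith

end AuxFGM

theorem cond_tail_asymp_of_fgm {Ω : Type*} [MeasureSpace Ω] [IsProbabilityMeasure (ℙ : Measure Ω)]
    (X Y : Ω → ℝ) (hXm : Measurable X) (hYm : Measurable Y)
    (hYnonneg : ∀ ω, 0 ≤ Y ω)
    (hFunb : UnboundedDist X)
    (hXnd : ℙ {ω | X ω = 0} ≠ 1) (hYnd : ℙ {ω | Y ω = 0} ≠ 1)
    (θ : ℝ) (hθ : |θ| < 1) (hFGM : FGM X Y θ) :
    ∃ K : ℝ → ℝ → ℝ,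
      (∀ y ∈ distSupport Y, ∀ x : ℝ,
        Tendsto
          (fun δ : ℝ => (ℙ {ω | x < X ω ∧ Y ω ∈ Ioc (y - δ) (y + δ)}).toReal /
            (ℙ {ω | Y ω ∈ Ioc (y - δ) (y + δ)}).toReal)
          (nhdsWithin 0 (Ioi 0)) (nhds (K x y))) ∧
      ∀ ε > 0, ∀ᶠ x in atTop, ∀ y ∈ distSupport Y,
        |K x y / (rvTail X x * (1 + θ * (rvCdf Y y + rvCdfLeft Y y - 1))) - 1| < ε := by
  have hfgm := aux_fgm_all X Y hXm hYm θ hFGM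
  refine ⟨fun x y => rvTail X x * (1 + θ * rvCdf X x * (rvCdf Y y + rvCdfLeft Y y - 1)),
    ?_, ?_⟩
  · intro y hyS x
    have htail : ∀ t : ℝ, rvTail Y t = 1 - rvCdf Y t := fun t => by
      have := aux_tail_cdf Y hYm t; linarith
    have htail' : ∀ t : ℝ, (ℙ {ω | t < Y ω}).toReal = 1 - rvCdf Y t := fun t => by
      have h := htail t; rw [rvTail] at h; exact h
    have heq : (fun δ : ℝ => rvTail X x *
          (1 + θ * rvCdf X x * (rvCdf Y (y - δ) + rvCdf Y (y + δ) - 1)))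
        =ᶠ[nhdsWithin 0 (Ioi 0)]
        (fun δ : ℝ => (ℙ {ω | x < X ω ∧ Y ω ∈ Ioc (y - δ) (y + δ)}).toReal /
          (ℙ {ω | Y ω ∈ Ioc (y - δ) (y + δ)}).toReal) := by
      filter_upwards [self_mem_nhdsWithin] with δ hδ
      have hδ0 : (0:ℝ) < δ := hδ
      have hab : y - δ ≤ y + δ := by linarith
      have hXset : MeasurableSet {ω | x < X ω} := measurableSet_lt measurable_const hXm
      have hN := aux_split hYm hab (P := fun ω => x < X ω) hXset
      have hDs := aux_split hYm hab (P := fun _ : Ω => True) MeasurableSet.univ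
      simp only [true_and] at hDs
      have hD0 : 0 < (ℙ {ω | Y ω ∈ Ioc (y - δ) (y + δ)}).toReal := by
        have h1 : 0 < ℙ {ω | Y ω ∈ Ioo (y - δ) (y + δ)} := hyS δ hδ0
        have h2 : ℙ {ω | Y ω ∈ Ioo (y - δ) (y + δ)} ≤ ℙ {ω | Y ω ∈ Ioc (y - δ) (y + δ)} :=
          measure_mono (fun ω hω => Ioo_subset_Ioc_self hω)
        exact ENNReal.toReal_pos (lt_of_lt_of_le h1 h2).ne' (measure_ne_top _ _)
      rw [eq_div_iff hD0.ne']
      rw [hN, hDs, hfgm x (y - δ), hfgm x (y + δ), htail (y - δ), htail (y + δ),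
        htail' (y - δ), htail' (y + δ)]
      ring
    have hT1 := aux_cdf_right hYm y
    have hT2 := aux_cdf_left hYm y
    have hTE : Tendsto (fun δ : ℝ => rvTail X x *
        (1 + θ * rvCdf X x * (rvCdf Y (y - δ) + rvCdf Y (y + δ) - 1)))
        (nhdsWithin 0 (Ioi 0))
        (nhds (rvTail X x * (1 + θ * rvCdf X x * (rvCdfLeft Y y + rvCdf Y y - 1)))) :=
      (tendsto_const_nhds.add
        (((hT2.add hT1).sub tendsto_const_nhds).const_mul _)).const_mul _
    have hfin := hTE.congr' heq
    have hval : rvTail X x * (1 + θ * rvCdf X x * (rvCdfLeft Y y + rvCdf Y y - 1))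
        = rvTail X x * (1 + θ * rvCdf X x * (rvCdf Y y + rvCdfLeft Y y - 1)) := by ring
    rwa [hval] at hfin
  · intro ε hε
    have hθ1 : 0 < 1 - |θ| := by linarith
    filter_upwards [aux_tail_small hXm (show (0:ℝ) < ε * (1 - |θ|) by positivity),
      Filter.eventually_gt_atTop (0:ℝ)] with x hx hx0
    intro y hyS
    set t := rvTail X x with ht
    set f := rvCdf X x with hf
    set c := rvCdf Y y + rvCdfLeft Y y - 1 with hc
    have htpos : 0 < t := hFunb x hx0
    have hθle : |θ| ≤ 1 := hθ.le
    have hcabs : |c| ≤ 1 := by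
      have h1 : (0:ℝ) ≤ rvCdf Y y := aux_pr_nonneg _
      have h2 : rvCdf Y y ≤ 1 := aux_pr_le_one _
      have h3 : (0:ℝ) ≤ rvCdfLeft Y y := aux_pr_nonneg _
      have h4 : rvCdfLeft Y y ≤ 1 := aux_pr_le_one _
      rw [hc, abs_le]
      constructor <;> linarith
    have hmul : |θ * c| ≤ |θ| := by
      rw [abs_mul]
      nlinarith [abs_nonneg θ, abs_nonneg c]
    have hθc : 1 - |θ| ≤ 1 + θ * c := by
      have := neg_abs_le (θ * c)
      linarith
    have hden : 0 < 1 + θ * c := lt_of_lt_of_le hθ1 hθc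
    have hft : f = 1 - t := by
      have h := aux_tail_cdf X hXm x
      rw [← ht, ← hf] at h
      linarith
    have htne : t ≠ 0 := htpos.ne'
    have hdne : 1 + θ * c ≠ 0 := hden.ne'
    have hrat : t * (1 + θ * f * c) / (t * (1 + θ * c)) - 1
        = -(θ * c * t) / (1 + θ * c) := by
      rw [hft]
      field_simp
      ring
    rw [hrat]
    have habs : |-(θ * c * t) / (1 + θ * c)| ≤ t / (1 - |θ|) := by
      rw [abs_div, abs_of_pos hden]
      refine div_le_div₀ htpos.le ?_ hθ1 hθc
      rw [abs_neg, abs_mul, abs_mul, abs_of_pos htpos]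
      have h1 : |θ| * |c| ≤ 1 := mul_le_one₀ hθle (abs_nonneg c) hcabs
      calc |θ| * |c| * t ≤ 1 * t := mul_le_mul_of_nonneg_right h1 htpos.le
      _ = t := one_mul t
    refine lt_of_le_of_lt habs ?_
    rw [div_lt_iff₀ hθ1]
    exact hx
end
end

section
/- Let X be a real-valued random variable with unbounded distribution F and Y a nonnegative random variable with distribution G, neither degenerate at zero, and suppose (X,Y) follows a Sarmanov distribution with kernels φ₁, φ₂ and parameter θ. Assume there exist constants c>0, d₁∈(0,∞) and a measurable function ψ such that ψ(y)=lim_{δ→0+} (∫_{y−δ}^{y+δ} φ₂(v)G(dv))/(G(y+δ)−G(y−δ)) for all y in the support D_Y of Y, φ₁(x)→d₁ as x→∞, and P(1+θd₁ψ(Y)≥c)=1. Then P(X>x | Y=y) ~ (1+θd₁ψ(y)) F̄(x) as x→∞ uniformly in y∈D_Y. -/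
open MeasureTheory ProbabilityTheory Filter Set Asymptotics

noncomputable section

theorem cond_tail_asymp_of_sarmanov {Ω : Type*} [MeasureSpace Ω] [IsProbabilityMeasure (ℙ : Measure Ω)]
    (X Y : Ω → ℝ) (hXm : Measurable X) (hYm : Measurable Y)
    (hYnonneg : ∀ ω, 0 ≤ Y ω)
    (hFunb : UnboundedDist X)
    (hXnd : ℙ {ω | X ω = 0} ≠ 1) (hYnd : ℙ {ω | Y ω = 0} ≠ 1)
    (φ₁ φ₂ ψ : ℝ → ℝ) (θ c d₁ : ℝ)
    (hSar : Sarmanov X Y φ₁ φ₂ θ)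
    (hc : 0 < c) (hd₁ : 0 < d₁) (hψm : Measurable ψ)
    (hψ : SarmanovPsi Y φ₂ ψ)
    (hφ₁ : Filter.Tendsto φ₁ atTop (nhds d₁))
    (has : ℙ {ω | c ≤ 1 + θ * d₁ * ψ (Y ω)} = 1) :
    ∃ K : ℝ → ℝ → ℝ,
      (∀ y ∈ distSupport Y, ∀ x : ℝ,
        Tendsto
          (fun δ : ℝ => (ℙ {ω | x < X ω ∧ Y ω ∈ Ioc (y - δ) (y + δ)}).toReal /
            (ℙ {ω | Y ω ∈ Ioc (y - δ) (y + δ)}).toReal)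
          (nhdsWithin 0 (Ioi 0)) (nhds (K x y))) ∧
      ∀ ε > 0, ∀ᶠ x in atTop, ∀ y ∈ distSupport Y,
        |K x y / ((1 + θ * d₁ * ψ y) * rvTail X x) - 1| < ε := by
  classical
  obtain ⟨hφ₁m, hφ₂m, hφ₁i, hφ₂i, hEφ₁, hEφ₂, hdens, hjoint⟩ := hSar
  set F : Measure ℝ := Measure.map X ℙ with hF
  set G : Measure ℝ := Measure.map Y ℙ with hG
  haveI : IsProbabilityMeasure F := Measure.isProbabilityMeasure_map hXm.aemeasurable
  haveI : IsProbabilityMeasure G := Measure.isProbabilityMeasure_map hYm.aemeasurable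
  have hφ₁F : Integrable φ₁ F :=
    (integrable_map_measure hφ₁m.aestronglyMeasurable hXm.aemeasurable).2 hφ₁i
  have hφ₂G : Integrable φ₂ G :=
    (integrable_map_measure hφ₂m.aestronglyMeasurable hYm.aemeasurable).2 hφ₂i
  have hGneg : G (Iio 0) = 0 := by
    rw [hG, Measure.map_apply hYm measurableSet_Iio]
    have : Y ⁻¹' Iio 0 = (∅ : Set Ω) := by
      ext ω; simp [not_lt.2 (hYnonneg ω)]
    simp [this]
  have hTail : ∀ x : ℝ, rvTail X x = (F (Ioi x)).toReal := by
    intro x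
    rw [rvTail, hF, Measure.map_apply hXm measurableSet_Ioi]
    rfl
  set A : ℝ → ℝ := fun x => ∫ u in Ioi x, φ₁ u ∂F with hA
  set K : ℝ → ℝ → ℝ := fun x y => rvTail X x + θ * A x * ψ y with hK
  -- joint measure formula
  have hjm : ∀ x a b : ℝ, (ℙ {ω | x < X ω ∧ Y ω ∈ Ioc a b}).toReal
      = rvTail X x * (G (Ioc a b)).toReal + θ * A x * ∫ v in Ioc a b, φ₂ v ∂G := by
    intro x a b
    have hSms : MeasurableSet (Ioi x ×ˢ Ioc a b) := measurableSet_Ioi.prod measurableSet_Ioc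
    have hset : {ω | x < X ω ∧ Y ω ∈ Ioc a b} = (fun ω => (X ω, Y ω)) ⁻¹' (Ioi x ×ˢ Ioc a b) := by
      ext ω; simp [Set.mem_prod, Set.mem_Ioi]
    rw [hset, ← Measure.map_apply (hXm.prodMk hYm) hSms, hjoint,
      withDensity_apply _ hSms]
    have hρm : AEStronglyMeasurable (fun p : ℝ × ℝ => 1 + θ * φ₁ p.1 * φ₂ p.2)
        ((F.prod G).restrict (Ioi x ×ˢ Ioc a b)) :=
      (measurable_const.add (((hφ₁m.comp measurable_fst).const_mul θ).mul
        (hφ₂m.comp measurable_snd))).aestronglyMeasurable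
    have hρ0 : 0 ≤ᵐ[(F.prod G).restrict (Ioi x ×ˢ Ioc a b)]
        fun p : ℝ × ℝ => 1 + θ * φ₁ p.1 * φ₂ p.2 := by
      refine ae_restrict_of_ae (ae_iff.mpr ?_)
      refine measure_mono_null (fun p hp => ?_) (?_ : (F.prod G) ((univ : Set ℝ) ×ˢ Iio 0) = 0)
      · simp only [Set.mem_setOf_eq, Pi.zero_apply, not_le] at hp
        have : p.2 < 0 := by
          by_contra h
          exact absurd (hdens p.1 p.2 (not_lt.1 h)) (not_le.2 hp)
        simp [this]
      · rw [Measure.prod_prod, hGneg, mul_zero]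
    rw [← integral_eq_lintegral_of_nonneg_ae hρ0 hρm, ← Measure.prod_restrict]
    have h2i : Integrable (fun p : ℝ × ℝ => θ * φ₁ p.1 * φ₂ p.2)
        ((F.restrict (Ioi x)).prod (G.restrict (Ioc a b))) :=
      Integrable.mul_prod ((hφ₁F.const_mul θ).integrableOn) (hφ₂G.integrableOn)
    have h1i : Integrable (fun _ : ℝ × ℝ => (1 : ℝ))
        ((F.restrict (Ioi x)).prod (G.restrict (Ioc a b))) := integrable_const 1
    rw [show (fun p : ℝ × ℝ => 1 + θ * φ₁ p.1 * φ₂ p.2)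
        = (fun p : ℝ × ℝ => (1 : ℝ) + (fun u => θ * φ₁ u) p.1 * φ₂ p.2) from rfl,
      integral_add h1i h2i, integral_const, integral_prod_mul (fun u => θ * φ₁ u) φ₂]
    rw [measureReal_def, ← Set.univ_prod_univ, Measure.prod_prod, Measure.restrict_apply_univ,
      Measure.restrict_apply_univ, integral_const_mul, ENNReal.toReal_mul, smul_eq_mul,
      hTail x]
    ring
  have hmarg : ∀ a b : ℝ, ℙ {ω | Y ω ∈ Ioc a b} = G (Ioc a b) := by
    intro a b
    rw [hG, Measure.map_apply hYm measurableSet_Ioc]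
    rfl
  have hcdfIic : ∀ t : ℝ, rvCdf Y t = (G (Iic t)).toReal := by
    intro t
    rw [rvCdf, hG, Measure.map_apply hYm measurableSet_Iic]
    rfl
  have hcdf : ∀ y δ : ℝ, 0 < δ →
      rvCdf Y (y + δ) - rvCdf Y (y - δ) = (G (Ioc (y - δ) (y + δ))).toReal := by
    intro y δ hδ
    have hle : y - δ ≤ y + δ := by linarith
    have hsplit : G (Iic (y + δ)) = G (Iic (y - δ)) + G (Ioc (y - δ) (y + δ)) := by
      rw [← Set.Iic_union_Ioc_eq_Iic hle,
        measure_union (Set.Iic_disjoint_Ioc le_rfl) measurableSet_Ioc]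
    rw [hcdfIic, hcdfIic, hsplit, ENNReal.toReal_add (measure_ne_top _ _) (measure_ne_top _ _)]
    ring
  have hGpos : ∀ y ∈ distSupport Y, ∀ δ : ℝ, 0 < δ → 0 < G (Ioc (y - δ) (y + δ)) := by
    intro y hy δ hδ
    have h1 := hy δ hδ
    have h2 : ℙ {ω | Y ω ∈ Ioo (y - δ) (y + δ)} = G (Ioo (y - δ) (y + δ)) := by
      rw [hG, Measure.map_apply hYm measurableSet_Ioo]; rfl
    rw [h2] at h1
    exact lt_of_lt_of_le h1 (measure_mono Set.Ioo_subset_Ioc_self)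
  have hψ' : ∀ y ∈ distSupport Y,
      Tendsto (fun δ : ℝ => (∫ v in Ioc (y - δ) (y + δ), φ₂ v ∂G) /
        (G (Ioc (y - δ) (y + δ))).toReal) (nhdsWithin 0 (Ioi 0)) (nhds (ψ y)) := by
    intro y hy
    refine Filter.Tendsto.congr' ?_ (hψ y hy)
    filter_upwards [self_mem_nhdsWithin] with δ hδ
    rw [hcdf y δ hδ]
  -- the limit part
  have hTend : ∀ y ∈ distSupport Y, ∀ x : ℝ,
      Tendsto (fun δ : ℝ => (ℙ {ω | x < X ω ∧ Y ω ∈ Ioc (y - δ) (y + δ)}).toReal /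
          (ℙ {ω | Y ω ∈ Ioc (y - δ) (y + δ)}).toReal)
        (nhdsWithin 0 (Ioi 0)) (nhds (K x y)) := by
    intro y hy x
    have h0 : Tendsto (fun δ : ℝ => rvTail X x + θ * A x *
        ((∫ v in Ioc (y - δ) (y + δ), φ₂ v ∂G) / (G (Ioc (y - δ) (y + δ))).toReal))
        (nhdsWithin 0 (Ioi 0)) (nhds (K x y)) :=
      tendsto_const_nhds.add ((hψ' y hy).const_mul _)
    refine Filter.Tendsto.congr' ?_ h0
    filter_upwards [self_mem_nhdsWithin] with δ hδ
    have hGIpos : 0 < (G (Ioc (y - δ) (y + δ))).toReal :=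
      ENNReal.toReal_pos (hGpos y hy δ hδ).ne' (measure_ne_top _ _)
    rw [hjm x (y - δ) (y + δ), hmarg (y - δ) (y + δ), eq_comm, div_eq_iff hGIpos.ne']
    field_simp
  -- countably many atoms
  have hatoms : Set.Countable {t : ℝ | 0 < G {t}} := by
    refine Measure.countable_meas_pos_of_disjoint_iUnion₀ (As := fun t : ℝ => {t})
      (fun t => (measurableSet_singleton t).nullMeasurableSet) ?_
    intro t s hts
    exact (Set.disjoint_singleton.2 hts).aedisjoint
  -- support has full measure
  have hDae : ∀ᵐ v ∂G, v ∈ distSupport Y := by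
    rw [ae_iff]
    have hTnull : G (⋃ pq : {pq : ℚ × ℚ // G (Ioo (pq.1 : ℝ) (pq.2 : ℝ)) = 0},
        Ioo ((pq.1.1 : ℝ)) ((pq.1.2 : ℝ))) = 0 :=
      measure_iUnion_null fun pq => pq.2
    refine measure_mono_null (fun v hv => ?_) hTnull
    simp only [Set.mem_setOf_eq, distSupport] at hv
    push_neg at hv
    obtain ⟨δ, hδ, h0⟩ := hv
    have hg0 : G (Ioo (v - δ) (v + δ)) = 0 := by
      have h2 : ℙ {ω | Y ω ∈ Ioo (v - δ) (v + δ)} = G (Ioo (v - δ) (v + δ)) := by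
        rw [hG, Measure.map_apply hYm measurableSet_Ioo]; rfl
      rw [h2] at h0
      exact le_antisymm h0 zero_le
    obtain ⟨p, hp1, hp2⟩ := exists_rat_btwn (show v - δ < v by linarith)
    obtain ⟨q, hq1, hq2⟩ := exists_rat_btwn (show v < v + δ by linarith)
    refine Set.mem_iUnion.2 ⟨⟨(p, q), measure_mono_null (Set.Ioo_subset_Ioo hp1.le hq2.le) hg0⟩,
      ⟨hp2, hq1⟩⟩
  -- Lebesgue differentiation
  have hLeb : ∀ᵐ v ∂G, Tendsto (fun a : Set ℝ => ⨍ w in a, φ₂ w ∂G)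
      ((Besicovitch.vitaliFamily G).filterAt v) (nhds (φ₂ v)) :=
    (Besicovitch.vitaliFamily G).ae_tendsto_average hφ₂G.locallyIntegrable
  -- ψ = φ₂ a.e.
  have hψφ₂ : ∀ᵐ v ∂G, ψ v = φ₂ v := by
    filter_upwards [hLeb, hDae] with y hy hyD
    have hEnull : volume ((fun t => y - t) '' {t : ℝ | 0 < G {t}}) = 0 :=
      (hatoms.image _).measure_zero _
    have hseq : ∀ n : ℕ, ∃ δ : ℝ, δ ∈ Ioo (0 : ℝ) (1 / (n + 1)) ∧ G {y - δ} = 0 := by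
      intro n
      by_contra h
      push_neg at h
      have hsub : Ioo (0 : ℝ) (1 / (n + 1)) ⊆ (fun t => y - t) '' {t : ℝ | 0 < G {t}} := by
        intro δ hδ
        refine ⟨y - δ, ?_, by ring⟩
        have := h δ hδ
        exact lt_of_le_of_ne zero_le (Ne.symm this)
      have hpos : 0 < volume (Ioo (0 : ℝ) (1 / (n + 1))) := by
        rw [Real.volume_Ioo, sub_zero]
        exact ENNReal.ofReal_pos.2 (by positivity)
      exact absurd (measure_mono_null hsub hEnull) hpos.ne'
    choose δs hδs using hseq
    have hδpos : ∀ n, 0 < δs n := fun n => (hδs n).1.1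
    have hδtend : Tendsto δs atTop (nhdsWithin 0 (Ioi 0)) := by
      refine tendsto_nhdsWithin_of_tendsto_nhds_of_eventually_within _ ?_
        (Filter.Eventually.of_forall fun n => hδpos n)
      exact squeeze_zero (fun n => (hδpos n).le) (fun n => (hδs n).1.2.le)
        tendsto_one_div_add_atTop_nhds_zero_nat
    have hSa : Tendsto (fun n => ⨍ w in Metric.closedBall y (δs n), φ₂ w ∂G) atTop
        (nhds (φ₂ y)) := hy.comp ((Besicovitch.tendsto_filterAt G y).comp hδtend)
    have hSb : Tendsto (fun n => (∫ v in Ioc (y - δs n) (y + δs n), φ₂ v ∂G) /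
        (G (Ioc (y - δs n) (y + δs n))).toReal) atTop (nhds (ψ y)) :=
      (hψ' y hyD).comp hδtend
    have heq : ∀ n, ⨍ w in Metric.closedBall y (δs n), φ₂ w ∂G
        = (∫ v in Ioc (y - δs n) (y + δs n), φ₂ v ∂G) /
          (G (Ioc (y - δs n) (y + δs n))).toReal := by
      intro n
      have hIccIoc : Icc (y - δs n) (y + δs n) =ᵐ[G] Ioc (y - δs n) (y + δs n) := by
        rw [MeasureTheory.ae_eq_set]
        constructor
        · refine measure_mono_null (fun z hz => ?_) (hδs n).2
          obtain ⟨⟨h1, h2⟩, h3⟩ := hz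
          simp only [Set.mem_Ioc, not_and, not_le] at h3
          have : z ≤ y - δs n := by
            by_contra hcon
            exact absurd h2 (not_le.2 (h3 (not_le.1 hcon)))
          simp [le_antisymm this h1]
        · rw [Set.diff_eq_empty.2 Set.Ioc_subset_Icc_self]
          exact measure_empty
      rw [Real.closedBall_eq_Icc, setAverage_eq, setIntegral_congr_set hIccIoc,
        measureReal_def, measure_congr hIccIoc, smul_eq_mul, ← div_eq_inv_mul]
    exact tendsto_nhds_unique hSb (hSa.congr heq)
  -- a.e. lower bound transferred to φ₂
  have haemeas : MeasurableSet {v : ℝ | c ≤ 1 + θ * d₁ * ψ v} := by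
    have : {v : ℝ | c ≤ 1 + θ * d₁ * ψ v}
        = (fun v => 1 + θ * d₁ * ψ v) ⁻¹' Ici c := rfl
    rw [this]
    exact ((hψm.const_mul (θ * d₁)).const_add 1) measurableSet_Ici
  have haeG : ∀ᵐ v ∂G, c ≤ 1 + θ * d₁ * ψ v := by
    rw [hG, MeasureTheory.ae_map_iff hYm.aemeasurable haemeas]
    rw [ae_iff]
    have hms : MeasurableSet {ω | c ≤ 1 + θ * d₁ * ψ (Y ω)} :=
      (((hψm.comp hYm).const_mul (θ * d₁)).const_add 1) measurableSet_Ici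
    have : {ω | ¬ c ≤ 1 + θ * d₁ * ψ (Y ω)} = {ω | c ≤ 1 + θ * d₁ * ψ (Y ω)}ᶜ := rfl
    rw [this, measure_compl hms (measure_ne_top _ _), has, measure_univ, tsub_self]
  have haeφ₂ : ∀ᵐ v ∂G, c - 1 ≤ θ * d₁ * φ₂ v := by
    filter_upwards [haeG, hψφ₂] with v h1 h2
    rw [h2] at h1
    linarith
  -- key pointwise bound on the support
  have hkey : ∀ y ∈ distSupport Y, c ≤ 1 + θ * d₁ * ψ y := by
    intro y hy
    have hlim : Tendsto (fun δ : ℝ => θ * d₁ * ((∫ v in Ioc (y - δ) (y + δ), φ₂ v ∂G) /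
        (G (Ioc (y - δ) (y + δ))).toReal)) (nhdsWithin 0 (Ioi 0)) (nhds (θ * d₁ * ψ y)) :=
      (hψ' y hy).const_mul _
    have hev : ∀ᶠ δ in nhdsWithin (0 : ℝ) (Ioi 0),
        c - 1 ≤ θ * d₁ * ((∫ v in Ioc (y - δ) (y + δ), φ₂ v ∂G) /
          (G (Ioc (y - δ) (y + δ))).toReal) := by
      filter_upwards [self_mem_nhdsWithin] with δ hδ
      have hGIpos : 0 < (G (Ioc (y - δ) (y + δ))).toReal :=
        ENNReal.toReal_pos (hGpos y hy δ hδ).ne' (measure_ne_top _ _)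
      have hint : (c - 1) * (G (Ioc (y - δ) (y + δ))).toReal
          ≤ ∫ v in Ioc (y - δ) (y + δ), θ * d₁ * φ₂ v ∂G := by
        have hmono := integral_mono_ae
          (integrable_const (c - 1) : Integrable _ (G.restrict (Ioc (y - δ) (y + δ))))
          ((hφ₂G.const_mul (θ * d₁)).integrableOn)
          (ae_restrict_of_ae haeφ₂)
        rw [integral_const, measureReal_def, Measure.restrict_apply MeasurableSet.univ, Set.univ_inter,
          smul_eq_mul, mul_comm] at hmono
        exact hmono
      rw [integral_const_mul] at hint
      rw [mul_div_assoc']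
      exact (le_div_iff₀ hGIpos).2 hint
    have := ge_of_tendsto hlim hev
    linarith
  refine ⟨K, hTend, ?_⟩
  intro ε hε
  set m : ℝ := min c 1 with hm
  have hmpos : 0 < m := lt_min hc one_pos
  set ε₁ : ℝ := ε * (d₁ * m) / 2 with hε₁
  have hε₁pos : 0 < ε₁ := by positivity
  obtain ⟨N, hN⟩ := Metric.tendsto_atTop.1 hφ₁ ε₁ hε₁pos
  filter_upwards [eventually_ge_atTop (max N 1)] with x hx
  intro y hy
  have hxN : N ≤ x := le_trans (le_max_left _ _) hx
  have hx1 : (1 : ℝ) ≤ x := le_trans (le_max_right _ _) hx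
  have hFpos : 0 < rvTail X x := hFunb x (by linarith)
  have hAe : |A x - d₁ * rvTail X x| ≤ ε₁ * rvTail X x := by
    have hIc : Integrable (fun _ : ℝ => d₁) (F.restrict (Ioi x)) := integrable_const d₁
    have hsub : A x - d₁ * rvTail X x = ∫ u in Ioi x, (φ₁ u - d₁) ∂F := by
      rw [integral_sub hφ₁F.integrableOn hIc, integral_const,
        measureReal_def, Measure.restrict_apply MeasurableSet.univ, Set.univ_inter, smul_eq_mul, hTail x, hA]
      ring
    rw [hsub]
    have habs : |∫ u in Ioi x, (φ₁ u - d₁) ∂F| ≤ ∫ u in Ioi x, |φ₁ u - d₁| ∂F := by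
      simpa [Real.norm_eq_abs] using
        norm_integral_le_integral_norm (μ := F.restrict (Ioi x)) (fun u => φ₁ u - d₁)
    refine le_trans habs (le_trans (setIntegral_mono_on
      (((hφ₁F.sub (integrable_const d₁)).abs).integrableOn)
      ((integrable_const ε₁ : Integrable _ F).integrableOn)
      measurableSet_Ioi ?_) ?_)
    · intro u hu
      have := hN u (le_trans hxN (le_of_lt hu))
      rw [Real.dist_eq] at this
      exact this.le
    · rw [integral_const, measureReal_def, Measure.restrict_apply MeasurableSet.univ, Set.univ_inter,
        smul_eq_mul, hTail x, mul_comm]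
  set s : ℝ := θ * d₁ * ψ y with hs
  have hsc : c ≤ 1 + s := hkey y hy
  have hPpos : 0 < 1 + s := lt_of_lt_of_le hc hsc
  have hsb : |s| * m ≤ 1 + s := by
    rcases le_or_gt 0 s with h | h
    · have h1 : m ≤ 1 := min_le_right _ _
      rw [abs_of_nonneg h]
      nlinarith
    · have h1 : m ≤ c := min_le_left _ _
      have h2 : m ≤ 1 := min_le_right _ _
      rw [abs_of_neg h]
      nlinarith
  have hKdiff : K x y - (1 + s) * rvTail X x = (θ * ψ y) * (A x - d₁ * rvTail X x) := by
    rw [hK, hs]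
    ring
  have hθψ : |θ * ψ y| * d₁ = |s| := by
    rw [hs, show θ * d₁ * ψ y = θ * ψ y * d₁ from by ring, abs_mul (θ * ψ y) d₁,
      abs_of_pos hd₁]
  have hne : (1 + s) * rvTail X x ≠ 0 := by positivity
  rw [show (1 + θ * d₁ * ψ y) = 1 + s from by rw [hs], div_sub_one hne, hKdiff, abs_div,
    abs_of_pos (by positivity : (0:ℝ) < (1 + s) * rvTail X x), abs_mul]
  have hstep1 : |θ * ψ y| * |A x - d₁ * rvTail X x| ≤ |θ * ψ y| * (ε₁ * rvTail X x) :=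
    mul_le_mul_of_nonneg_left hAe (abs_nonneg _)
  have hstep2 : |θ * ψ y| * (ε₁ * rvTail X x) / ((1 + s) * rvTail X x)
      = |θ * ψ y| * ε₁ / (1 + s) := by
    field_simp
  have hstep3 : |θ * ψ y| * ε₁ / (1 + s) ≤ ε₁ / (d₁ * m) := by
    rw [div_le_div_iff₀ hPpos (by positivity)]
    have h1 : |θ * ψ y| * (d₁ * m) = |s| * m := by rw [← hθψ]; ring
    nlinarith [mul_le_mul_of_nonneg_left hsb hε₁pos.le]
  have hstep4 : ε₁ / (d₁ * m) = ε / 2 := by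
    rw [hε₁]
    field_simp
  calc |θ * ψ y| * |A x - d₁ * rvTail X x| / ((1 + s) * rvTail X x)
      ≤ |θ * ψ y| * (ε₁ * rvTail X x) / ((1 + s) * rvTail X x) :=
        (div_le_div_iff_of_pos_right (by positivity)).2 hstep1
    _ = |θ * ψ y| * ε₁ / (1 + s) := hstep2
    _ ≤ ε₁ / (d₁ * m) := hstep3
    _ = ε / 2 := hstep4
    _ < ε := by linarith
end
end

section
/- Let X be a real-valued random variable with unbounded distribution F and Y a nonnegative random variable with distribution G, neither degenerate at zero, and suppose (X,Y) follows an FGM distribution with parameter θ=−1. Let β_G=sup{y: G(y)<1} denote the right endpoint of G and suppose P(Y=β_G)>0, and that Assumption 2 holds (Ḡ(bx)=o(H̄(x)) as x→∞ for every b>0, where H is the distribution of XY). Then P(XY>x) ~ ∫_0^∞ (1−(G(y)+G(y−)−1)) F̄(x/y) G(dy) as x→∞, where G(y−)=lim_{δ→0+} G(y−δ). -/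
open MeasureTheory ProbabilityTheory Filter Set Asymptotics

noncomputable section

namespace FGMAux

/-- upward closed subset of ℝ -/
def UpSet (A : Set ℝ) : Prop := ∀ ⦃u v : ℝ⦄, u ∈ A → u ≤ v → v ∈ A

lemma upSet_Ioi (x : ℝ) : UpSet (Ioi x) := fun u v hu huv => lt_of_lt_of_le hu huv
lemma upSet_univ : UpSet (univ : Set ℝ) := fun _ _ _ _ => trivial

variable (ν : Measure ℝ)

lemma measurable_cdfE : Measurable fun v => ν (Iic v) :=
  Monotone.measurable fun _ _ h => measure_mono (Iic_subset_Iic.2 h)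

lemma measurable_cdfLE : Measurable fun v => ν (Iio v) :=
  Monotone.measurable fun _ _ h => measure_mono (Iio_subset_Iio h)

lemma measurable_cdf : Measurable fun v => (ν (Iic v)).toReal :=
  (measurable_cdfE ν).ennreal_toReal

lemma measurable_cdfL : Measurable fun v => (ν (Iio v)).toReal :=
  (measurable_cdfLE ν).ennreal_toReal

lemma measurable_tail : Measurable fun v => (ν (Ioi v)).toReal :=
  (Antitone.measurable fun _ _ h => measure_mono (Ioi_subset_Ioi h)).ennreal_toReal

variable [IsProbabilityMeasure ν]

lemma cdf_add_tail (x : ℝ) : (ν (Iic x)).toReal + (ν (Ioi x)).toReal = 1 := by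
  have h := measure_add_measure_compl (μ := ν) (measurableSet_Iic (a := x))
  rw [compl_Iic, measure_univ] at h
  rw [← ENNReal.toReal_add (measure_ne_top _ _) (measure_ne_top _ _), h, ENNReal.toReal_one]

lemma cdf_le_one (x : ℝ) : (ν (Iic x)).toReal ≤ 1 := by
  have := cdf_add_tail ν x; have := ENNReal.toReal_nonneg (a := ν (Ioi x)); linarith

lemma cdf_nonneg (x : ℝ) : 0 ≤ (ν (Iic x)).toReal := ENNReal.toReal_nonneg

lemma cdfL_le_cdf (x : ℝ) : (ν (Iio x)).toReal ≤ (ν (Iic x)).toReal :=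
  ENNReal.toReal_mono (measure_ne_top _ _) (measure_mono Iio_subset_Iic_self)

lemma tail_le_one (x : ℝ) : (ν (Ioi x)).toReal ≤ 1 := by
  have := cdf_add_tail ν x; have := ENNReal.toReal_nonneg (a := ν (Iic x)); linarith

lemma abs_phi_le_one (x : ℝ) : |(ν (Iic x)).toReal + (ν (Iio x)).toReal - 1| ≤ 1 := by
  have h1 := cdf_le_one ν x
  have h2 := cdfL_le_cdf ν x
  have h3 := cdf_nonneg ν x
  have h4 : (0:ℝ) ≤ (ν (Iio x)).toReal := ENNReal.toReal_nonneg
  rw [abs_le]; constructor <;> linarith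

/-- Fubini/symmetry identity: `∫_A (ν(Iic v) + ν(Iio v)) dν(v) + ν(Aᶜ)² = 1`. -/
lemma key_sum {A : Set ℝ} (hA : MeasurableSet A) (hup : UpSet A) :
    (∫⁻ v in A, (ν (Iic v) + ν (Iio v)) ∂ν) + ν Aᶜ * ν Aᶜ = 1 := by
  set s₁ : Set (ℝ × ℝ) := {p | p.1 ∈ A ∧ p.2 ≤ p.1} with hs₁def
  set s₂ : Set (ℝ × ℝ) := {p | p.1 ∈ A ∧ p.2 < p.1} with hs₂def
  set s₃ : Set (ℝ × ℝ) := {p | p.2 ∈ A ∧ p.1 < p.2} with hs₃def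
  have hs₁ : MeasurableSet s₁ :=
    (hA.preimage measurable_fst).inter (measurableSet_le measurable_snd measurable_fst)
  have hs₂ : MeasurableSet s₂ :=
    (hA.preimage measurable_fst).inter (measurableSet_lt measurable_snd measurable_fst)
  have hs₃ : MeasurableSet s₃ :=
    (hA.preimage measurable_snd).inter (measurableSet_lt measurable_fst measurable_snd)
  have e1 : (ν.prod ν) s₁ = ∫⁻ v in A, ν (Iic v) ∂ν := by
    rw [Measure.prod_apply hs₁, ← lintegral_indicator hA _]
    congr 1; funext v
    by_cases hv : v ∈ A
    · have : Prod.mk v ⁻¹' s₁ = Iic v := by ext w; simp [hs₁def, hv]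
      simp [this, hv]
    · have : Prod.mk v ⁻¹' s₁ = ∅ := by ext w; simp [hs₁def, hv]
      simp [this, hv]
  have e2 : (ν.prod ν) s₂ = ∫⁻ v in A, ν (Iio v) ∂ν := by
    rw [Measure.prod_apply hs₂, ← lintegral_indicator hA _]
    congr 1; funext v
    by_cases hv : v ∈ A
    · have : Prod.mk v ⁻¹' s₂ = Iio v := by ext w; simp [hs₂def, hv]
      simp [this, hv]
    · have : Prod.mk v ⁻¹' s₂ = ∅ := by ext w; simp [hs₂def, hv]
      simp [this, hv]
  have e3 : (ν.prod ν) s₃ = (ν.prod ν) s₂ := by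
    have hswap : Measure.map Prod.swap (ν.prod ν) = ν.prod ν := Measure.prod_swap
    calc (ν.prod ν) s₃ = (Measure.map Prod.swap (ν.prod ν)) s₃ := by rw [hswap]
      _ = (ν.prod ν) (Prod.swap ⁻¹' s₃) := Measure.map_apply measurable_swap hs₃
      _ = (ν.prod ν) s₂ := by
          have hpre : Prod.swap ⁻¹' s₃ = s₂ := by ext p; simp [hs₂def, hs₃def]
          rw [hpre]
  have hdisj : Disjoint s₁ s₃ := by
    rw [Set.disjoint_left]
    rintro p ⟨_, h1⟩ ⟨_, h2⟩
    exact absurd h1 (not_le.2 h2)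
  have hunion : s₁ ∪ s₃ = (Aᶜ ×ˢ Aᶜ)ᶜ := by
    ext p
    simp only [mem_union, hs₁def, hs₂def, hs₃def, mem_setOf_eq, mem_compl_iff, mem_prod,
      not_and_or, not_not]
    constructor
    · rintro (⟨h, _⟩ | ⟨h, _⟩)
      · exact Or.inl h
      · exact Or.inr h
    · intro h
      rcases le_or_gt p.2 p.1 with hle | hlt
      · refine Or.inl ⟨?_, hle⟩
        rcases h with h | h
        · exact h
        · exact hup h hle
      · refine Or.inr ⟨?_, hlt⟩
        rcases h with h | h
        · exact hup h hlt.le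
        · exact h
  have hcompl : (ν.prod ν) ((Aᶜ ×ˢ Aᶜ)ᶜ) + ν Aᶜ * ν Aᶜ = 1 := by
    have h := measure_add_measure_compl (μ := ν.prod ν) ((hA.compl.prod hA.compl).compl)
    rw [compl_compl, Measure.prod_prod, measure_univ] at h
    exact h
  calc (∫⁻ v in A, (ν (Iic v) + ν (Iio v)) ∂ν) + ν Aᶜ * ν Aᶜ
      = (∫⁻ v in A, ν (Iic v) ∂ν + ∫⁻ v in A, ν (Iio v) ∂ν) + ν Aᶜ * ν Aᶜ := by
        rw [lintegral_add_left (measurable_cdfE ν)]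
    _ = ((ν.prod ν) s₁ + (ν.prod ν) s₃) + ν Aᶜ * ν Aᶜ := by rw [e1, e3, e2]
    _ = (ν.prod ν) (s₁ ∪ s₃) + ν Aᶜ * ν Aᶜ := by rw [measure_union hdisj hs₃]
    _ = 1 := by rw [hunion]; exact hcompl


-- continuing inside namespace FGMAux, variable (ν) [IsProbabilityMeasure ν]

lemma integrable_cdf {A : Set ℝ} : Integrable (fun v => (ν (Iic v)).toReal) (ν.restrict A) := by
  refine Integrable.mono' (integrable_const 1) (measurable_cdf ν).aestronglyMeasurable ?_
  refine ae_of_all _ fun v => ?_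
  rw [Real.norm_eq_abs, abs_of_nonneg ENNReal.toReal_nonneg]
  exact cdf_le_one ν v

lemma integrable_cdfL {A : Set ℝ} : Integrable (fun v => (ν (Iio v)).toReal) (ν.restrict A) := by
  refine Integrable.mono' (integrable_const 1) (measurable_cdfL ν).aestronglyMeasurable ?_
  refine ae_of_all _ fun v => ?_
  rw [Real.norm_eq_abs, abs_of_nonneg ENNReal.toReal_nonneg]
  exact le_trans (cdfL_le_cdf ν v) (cdf_le_one ν v)


lemma hintadd_aux (A : Set ℝ) :
    Integrable (fun v => (ν (Iic v)).toReal + (ν (Iio v)).toReal - 1) (ν.restrict A) :=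
  ((integrable_cdf ν).add (integrable_cdfL ν)).sub (integrable_const 1)

/-- `∫_A (G(v) + G(v⁻) - 1) dν(v) = ν(A) ν(Aᶜ)` for upward closed `A`. -/
lemma integral_psi {A : Set ℝ} (hA : MeasurableSet A) (hup : UpSet A) :
    ∫ v in A, ((ν (Iic v)).toReal + (ν (Iio v)).toReal - 1) ∂ν
      = (ν A).toReal * (ν Aᶜ).toReal := by
  have hsum := key_sum ν hA hup
  set a := ∫⁻ v in A, ν (Iic v) ∂ν with ha
  set b := ∫⁻ v in A, ν (Iio v) ∂ν with hb
  have hsplit : ∫⁻ v in A, (ν (Iic v) + ν (Iio v)) ∂ν = a + b :=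
    lintegral_add_left (measurable_cdfE ν) _
  rw [hsplit] at hsum
  have hane : a ≠ ⊤ := by
    refine ne_top_of_le_ne_top ENNReal.one_ne_top ?_
    rw [← hsum]
    exact le_trans (self_le_add_right a b) (self_le_add_right _ _)
  have hbne : b ≠ ⊤ := by
    refine ne_top_of_le_ne_top ENNReal.one_ne_top ?_
    rw [← hsum]
    exact le_trans (self_le_add_left b a) (self_le_add_right _ _)
  have hcne : ν Aᶜ ≠ ⊤ := measure_ne_top _ _
  have htr : a.toReal + b.toReal + (ν Aᶜ).toReal * (ν Aᶜ).toReal = 1 := by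
    have := congrArg ENNReal.toReal hsum
    rw [ENNReal.toReal_add (by exact ENNReal.add_ne_top.2 ⟨hane, hbne⟩)
      (ENNReal.mul_ne_top hcne hcne), ENNReal.toReal_add hane hbne, ENNReal.toReal_mul,
      ENNReal.toReal_one] at this
    exact this
  have hia : ∫ v in A, (ν (Iic v)).toReal ∂ν = a.toReal := by
    rw [ha]
    exact integral_toReal (measurable_cdfE ν).aemeasurable
      (ae_of_all _ fun v => measure_lt_top ν _)
  have hib : ∫ v in A, (ν (Iio v)).toReal ∂ν = b.toReal := by
    rw [hb]
    exact integral_toReal (measurable_cdfLE ν).aemeasurable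
      (ae_of_all _ fun v => measure_lt_top ν _)
  have hAc : (ν A).toReal = 1 - (ν Aᶜ).toReal := by
    have h := measure_add_measure_compl (μ := ν) hA
    rw [measure_univ] at h
    have := congrArg ENNReal.toReal h
    rw [ENNReal.toReal_add (measure_ne_top _ _) (measure_ne_top _ _), ENNReal.toReal_one] at this
    linarith
  have hintadd : Integrable (fun v => (ν (Iic v)).toReal + (ν (Iio v)).toReal) (ν.restrict A) :=
    (integrable_cdf ν).add (integrable_cdfL ν)
  have hsub : ∫ v in A, ((ν (Iic v)).toReal + (ν (Iio v)).toReal - 1) ∂ν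
      = (∫ v in A, ((ν (Iic v)).toReal + (ν (Iio v)).toReal) ∂ν) - ∫ v in A, (1:ℝ) ∂ν :=
    integral_sub hintadd (integrable_const 1)
  have hadd : ∫ v in A, ((ν (Iic v)).toReal + (ν (Iio v)).toReal) ∂ν
      = (∫ v in A, (ν (Iic v)).toReal ∂ν) + ∫ v in A, (ν (Iio v)).toReal ∂ν :=
    integral_add (integrable_cdf ν) (integrable_cdfL ν)
  have hint1 : ∫ v in A, (1:ℝ) ∂ν = (ν A).toReal := by simp; rfl
  rw [hsub, hadd, hia, hib, hint1, hAc]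
  nlinarith [htr]

/-- Key computation: `∫⁻_A (1 - φ(u) c) dν = ν(A)(1 - c ν(Aᶜ))` (as `ofReal`). -/
lemma lint_inner {A : Set ℝ} (hA : MeasurableSet A) (hup : UpSet A) {c : ℝ} (hc : |c| ≤ 1) :
    ∫⁻ u in A, ENNReal.ofReal (1 - ((ν (Iic u)).toReal + (ν (Iio u)).toReal - 1) * c) ∂ν
      = ENNReal.ofReal ((ν A).toReal * (1 - c * (ν Aᶜ).toReal)) := by
  have habs : ∀ u : ℝ, |((ν (Iic u)).toReal + (ν (Iio u)).toReal - 1) * c| ≤ 1 := by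
    intro u
    rw [abs_mul]
    exact mul_le_one₀ (abs_phi_le_one ν u) (abs_nonneg _) hc
  have hnn : ∀ u : ℝ, 0 ≤ 1 - ((ν (Iic u)).toReal + (ν (Iio u)).toReal - 1) * c := by
    intro u
    have := abs_le.1 (habs u)
    linarith [this.2]
  have hφm : Measurable fun u => (ν (Iic u)).toReal + (ν (Iio u)).toReal - 1 :=
    ((measurable_cdf ν).add (measurable_cdfL ν)).sub measurable_const
  have hm : Measurable fun u => 1 - ((ν (Iic u)).toReal + (ν (Iio u)).toReal - 1) * c :=
    measurable_const.sub (hφm.mul_const c)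
  have hint : Integrable
      (fun u => 1 - ((ν (Iic u)).toReal + (ν (Iio u)).toReal - 1) * c) (ν.restrict A) := by
    refine Integrable.mono' (integrable_const 2) hm.aestronglyMeasurable ?_
    refine ae_of_all _ fun u => ?_
    rw [Real.norm_eq_abs, abs_of_nonneg (hnn u)]
    have := abs_le.1 (habs u)
    linarith [this.1]
  rw [← ofReal_integral_eq_lintegral_ofReal hint (ae_of_all _ hnn)]
  congr 1
  have h1 : Integrable (fun u => ((ν (Iic u)).toReal + (ν (Iio u)).toReal - 1) * c)
      (ν.restrict A) := (hintadd_aux ν A).mul_const c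
  have hmulc : ∫ u in A, ((ν (Iic u)).toReal + (ν (Iio u)).toReal - 1) * c ∂ν
      = ((ν A).toReal * (ν Aᶜ).toReal) * c := by
    rw [integral_mul_const, integral_psi ν hA hup]
  have hsub : ∫ u in A, (1 - ((ν (Iic u)).toReal + (ν (Iio u)).toReal - 1) * c) ∂ν
      = (∫ u in A, (1:ℝ) ∂ν) - ∫ u in A, ((ν (Iic u)).toReal + (ν (Iio u)).toReal - 1) * c ∂ν :=
    integral_sub (integrable_const 1) h1
  rw [hsub, hmulc]
  simp only [integral_const, Measure.real, Measure.restrict_apply_univ, smul_eq_mul, mul_one]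
  ring

/-- support of a measure on ℝ, matching `distSupport`. -/
def msupp (ν : Measure ℝ) : Set ℝ := {y | ∀ δ > 0, 0 < ν (Ioo (y - δ) (y + δ))}

lemma isClosed_msupp : IsClosed (msupp ν) := by
  rw [← isOpen_compl_iff, Metric.isOpen_iff]
  intro y hy
  simp only [msupp, mem_compl_iff, mem_setOf_eq, not_forall, not_lt, nonpos_iff_eq_zero] at hy
  obtain ⟨δ, hδ, h0⟩ := hy
  refine ⟨δ / 2, by linarith, fun z hz => ?_⟩
  rw [Metric.mem_ball, Real.dist_eq] at hz
  simp only [msupp, mem_compl_iff, mem_setOf_eq, not_forall, not_lt, nonpos_iff_eq_zero]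
  refine ⟨δ / 2, by linarith, ?_⟩
  refine measure_mono_null (fun w hw => ?_) h0
  simp only [mem_Ioo] at hw ⊢
  have h1 := abs_lt.1 hz
  constructor <;> linarith [h1.1, h1.2, hw.1, hw.2]

lemma msupp_compl_null : ν (msupp ν)ᶜ = 0 := by
  apply measure_null_of_locally_null
  intro y hy
  simp only [msupp, mem_compl_iff, mem_setOf_eq, not_forall, not_lt, nonpos_iff_eq_zero] at hy
  obtain ⟨δ, hδ, h0⟩ := hy
  exact ⟨Ioo (y - δ) (y + δ),
    mem_nhdsWithin_of_mem_nhds (Ioo_mem_nhds (by linarith) (by linarith)), h0⟩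

lemma ext_point (x : ℝ) :
    ν (Iic x) = 0 ∨ ∃ a, a ∈ msupp ν ∧ a ≤ x ∧ ν (Ioc a x) = 0 := by
  by_cases hne : (msupp ν ∩ Iic x).Nonempty
  · right
    have hclosed : IsClosed (msupp ν ∩ Iic x) := (isClosed_msupp ν).inter isClosed_Iic
    have hbddA : BddAbove (msupp ν ∩ Iic x) := ⟨x, fun s hs => hs.2⟩
    have ha := hclosed.csSup_mem hne hbddA
    refine ⟨sSup (msupp ν ∩ Iic x), ha.1, ha.2, ?_⟩
    refine measure_mono_null ?_ (msupp_compl_null ν)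
    intro s hs hmem
    exact absurd (le_csSup hbddA ⟨hmem, hs.2⟩) (not_le.2 hs.1)
  · left
    refine measure_mono_null ?_ (msupp_compl_null ν)
    intro s hs hm
    exact hne ⟨s, hm, hs⟩

lemma tail_tendsto_zero : Tendsto (fun t : ℝ => (ν (Ioi t)).toReal) atTop (nhds 0) := by
  have hN : Tendsto (fun n : ℕ => ν (Ioi (n : ℝ))) atTop (nhds (ν (⋂ n : ℕ, Ioi (n : ℝ)))) := by
    refine tendsto_measure_iInter_atTop
      (fun n => measurableSet_Ioi.nullMeasurableSet)
      (fun n m h => Ioi_subset_Ioi (Nat.cast_le.2 h)) ⟨0, measure_ne_top _ _⟩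
  have hempty : (⋂ n : ℕ, Ioi ((n : ℝ))) = ∅ := by
    ext z
    simp only [mem_iInter, mem_Ioi, mem_empty_iff_false, iff_false, not_forall, not_lt]
    obtain ⟨n, hn⟩ := exists_nat_gt z
    exact ⟨n, hn.le⟩
  rw [hempty, measure_empty] at hN
  have hNr : Tendsto (fun n : ℕ => (ν (Ioi (n : ℝ))).toReal) atTop (nhds 0) := by
    have := (ENNReal.tendsto_toReal (by simp)).comp hN
    simpa [Function.comp_def] using this
  rw [Metric.tendsto_atTop]
  intro ε hε
  have hev : ∀ᶠ n : ℕ in atTop, (ν (Ioi (n : ℝ))).toReal < ε := by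
    have := hNr.eventually (eventually_lt_nhds hε)  -- maybe wrong lemma name
    exact this
  obtain ⟨n, hn⟩ := hev.exists
  refine ⟨n, fun t ht => ?_⟩
  rw [Real.dist_eq, sub_zero, abs_of_nonneg ENNReal.toReal_nonneg]
  exact lt_of_le_of_lt
    (ENNReal.toReal_mono (measure_ne_top _ _) (measure_mono (Ioi_subset_Ioi ht))) hn

end FGMAux

theorem product_tail_asymp_of_fgm_theta_neg_one {Ω : Type*} [MeasureSpace Ω] [IsProbabilityMeasure (ℙ : Measure Ω)]
    (X Y : Ω → ℝ) (hXm : Measurable X) (hYm : Measurable Y)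
    (hYnonneg : ∀ ω, 0 ≤ Y ω)
    (hFunb : UnboundedDist X)
    (hXnd : ℙ {ω | X ω = 0} ≠ 1) (hYnd : ℙ {ω | Y ω = 0} ≠ 1)
    (hFGM : FGM X Y (-1))
    (hbdd : BddAbove {y : ℝ | rvCdf Y y < 1})
    (hatom : 0 < ℙ {ω | Y ω = sSup {y : ℝ | rvCdf Y y < 1}})
    (hA2 : Assumption2 X Y) :
    (fun x => rvTail (fun ω => X ω * Y ω) x) ~[atTop]
      (fun x => ∫ y in Ioi (0 : ℝ),
        (1 - (rvCdf Y y + rvCdfLeft Y y - 1)) * rvTail X (x / y) ∂(Measure.map Y ℙ)) := by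
  classical
  set F := Measure.map X ℙ with hFdef
  set G := Measure.map Y ℙ with hGdef
  set μ := Measure.map (fun ω => (X ω, Y ω)) ℙ with hμdef
  have hpm : Measurable fun ω => (X ω, Y ω) := hXm.prodMk hYm
  haveI hFP : IsProbabilityMeasure F := Measure.isProbabilityMeasure_map hXm.aemeasurable
  haveI hGP : IsProbabilityMeasure G := Measure.isProbabilityMeasure_map hYm.aemeasurable
  haveI hμP : IsProbabilityMeasure μ := Measure.isProbabilityMeasure_map hpm.aemeasurable
  -- conversions between rv-functions and measure quantities
  have hTX : ∀ x, rvTail X x = (F (Ioi x)).toReal := fun x => by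
    simp only [rvTail]; rw [hFdef, Measure.map_apply hXm measurableSet_Ioi]; rfl
  have hCX : ∀ x, rvCdf X x = (F (Iic x)).toReal := fun x => by
    simp only [rvCdf]; rw [hFdef, Measure.map_apply hXm measurableSet_Iic]; rfl
  have hLX : ∀ x, rvCdfLeft X x = (F (Iio x)).toReal := fun x => by
    simp only [rvCdfLeft]; rw [hFdef, Measure.map_apply hXm measurableSet_Iio]; rfl
  have hTY : ∀ y, rvTail Y y = (G (Ioi y)).toReal := fun y => by
    simp only [rvTail]; rw [hGdef, Measure.map_apply hYm measurableSet_Ioi]; rfl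
  have hCY : ∀ y, rvCdf Y y = (G (Iic y)).toReal := fun y => by
    simp only [rvCdf]; rw [hGdef, Measure.map_apply hYm measurableSet_Iic]; rfl
  have hLY : ∀ y, rvCdfLeft Y y = (G (Iio y)).toReal := fun y => by
    simp only [rvCdfLeft]; rw [hGdef, Measure.map_apply hYm measurableSet_Iio]; rfl
  have hsuppX : distSupport X = FGMAux.msupp F := by
    have h : ∀ a b : ℝ, ℙ {ω | X ω ∈ Ioo a b} = F (Ioo a b) := fun a b => by
      rw [hFdef, Measure.map_apply hXm measurableSet_Ioo]; rfl
    ext y; simp only [distSupport, FGMAux.msupp, mem_setOf_eq, h]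
  have hsuppY : distSupport Y = FGMAux.msupp G := by
    have h : ∀ a b : ℝ, ℙ {ω | Y ω ∈ Ioo a b} = G (Ioo a b) := fun a b => by
      rw [hGdef, Measure.map_apply hYm measurableSet_Ioo]; rfl
    ext y; simp only [distSupport, FGMAux.msupp, mem_setOf_eq, h]
  -- marginals of μ
  have hμfst : ∀ s : Set ℝ, MeasurableSet s → μ (s ×ˢ univ) = F s := by
    intro s hs
    rw [hμdef, Measure.map_apply hpm (hs.prod MeasurableSet.univ), hFdef,
      Measure.map_apply hXm hs]
    congr 1; ext ω; simp
  have hμsnd : ∀ s : Set ℝ, MeasurableSet s → μ (univ ×ˢ s) = G s := by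
    intro s hs
    rw [hμdef, Measure.map_apply hpm (MeasurableSet.univ.prod hs), hGdef,
      Measure.map_apply hYm hs]
    congr 1; ext ω; simp
  -- the FGM rectangle formula, extended to all (x, y)
  have hμrect_eq : ∀ x y : ℝ, μ (Ioi x ×ˢ Ioi y) = ℙ {ω | x < X ω ∧ y < Y ω} := fun x y => by
    rw [hμdef, Measure.map_apply hpm (measurableSet_Ioi.prod measurableSet_Ioi)]; rfl
  have hstep1 : ∀ x ∈ FGMAux.msupp F, ∀ y ∈ FGMAux.msupp G,
      μ (Ioi x ×ˢ Ioi y) = ENNReal.ofReal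
        ((F (Ioi x)).toReal * (G (Ioi y)).toReal *
          (1 - (F (Iic x)).toReal * (G (Iic y)).toReal)) := by
    intro x hx y hy
    rw [← ENNReal.ofReal_toReal (measure_ne_top μ (Ioi x ×ˢ Ioi y))]
    congr 1
    rw [hμrect_eq]
    have hgm := hFGM.2 x (by rw [hsuppX]; exact hx) y (by rw [hsuppY]; exact hy)
    rw [hgm, hTX, hTY, hCX, hCY]
    ring
  have hstep2 : ∀ y ∈ FGMAux.msupp G, ∀ x : ℝ,
      μ (Ioi x ×ˢ Ioi y) = ENNReal.ofReal
        ((F (Ioi x)).toReal * (G (Ioi y)).toReal *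
          (1 - (F (Iic x)).toReal * (G (Iic y)).toReal)) := by
    intro y hy x
    rcases FGMAux.ext_point F x with h0 | ⟨a, haS, hax, h0⟩
    · have htb : F (Ioi x) = 1 := by
        have h := measure_add_measure_compl (μ := F) (measurableSet_Iic (a := x))
        rw [compl_Iic, h0, zero_add, measure_univ] at h
        exact h
      have hμeq : μ (Ioi x ×ˢ Ioi y) = μ (univ ×ˢ Ioi y) := by
        refine le_antisymm (measure_mono (prod_mono_left (subset_univ _))) ?_
        have hdiff : (univ ×ˢ Ioi y : Set (ℝ × ℝ)) ⊆ (Ioi x ×ˢ Ioi y) ∪ (Iic x ×ˢ univ) := by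
          rintro p ⟨hp1, hp2⟩
          rcases le_or_gt p.1 x with h | h
          · exact Or.inr ⟨h, trivial⟩
          · exact Or.inl ⟨h, hp2⟩
        calc μ (univ ×ˢ Ioi y) ≤ μ ((Ioi x ×ˢ Ioi y) ∪ (Iic x ×ˢ univ)) := measure_mono hdiff
          _ ≤ μ (Ioi x ×ˢ Ioi y) + μ (Iic x ×ˢ univ) := measure_union_le _ _
          _ = μ (Ioi x ×ˢ Ioi y) := by rw [hμfst _ measurableSet_Iic, h0, add_zero]
      rw [hμeq, hμsnd _ measurableSet_Ioi, htb, h0]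
      simp [ENNReal.ofReal_toReal (measure_ne_top G (Ioi y))]
    · have hIoi : F (Ioi x) = F (Ioi a) := by
        refine le_antisymm (measure_mono (Ioi_subset_Ioi hax)) ?_
        calc F (Ioi a) = F (Ioc a x ∪ Ioi x) := by rw [Ioc_union_Ioi_eq_Ioi hax]
          _ ≤ F (Ioc a x) + F (Ioi x) := measure_union_le _ _
          _ = F (Ioi x) := by rw [h0, zero_add]
      have hIic : F (Iic x) = F (Iic a) := by
        refine le_antisymm ?_ (measure_mono (Iic_subset_Iic.2 hax))
        calc F (Iic x) = F (Iic a ∪ Ioc a x) := by rw [Iic_union_Ioc_eq_Iic hax]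
          _ ≤ F (Iic a) + F (Ioc a x) := measure_union_le _ _
          _ = F (Iic a) := by rw [h0, add_zero]
      have hμeq : μ (Ioi x ×ˢ Ioi y) = μ (Ioi a ×ˢ Ioi y) := by
        refine le_antisymm (measure_mono (prod_mono_left (Ioi_subset_Ioi hax))) ?_
        calc μ (Ioi a ×ˢ Ioi y) = μ ((Ioc a x ∪ Ioi x) ×ˢ Ioi y) := by
              rw [Ioc_union_Ioi_eq_Ioi hax]
          _ = μ ((Ioc a x ×ˢ Ioi y) ∪ (Ioi x ×ˢ Ioi y)) := by rw [union_prod]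
          _ ≤ μ (Ioc a x ×ˢ Ioi y) + μ (Ioi x ×ˢ Ioi y) := measure_union_le _ _
          _ ≤ μ (Ioc a x ×ˢ univ) + μ (Ioi x ×ˢ Ioi y) :=
              add_le_add_left (measure_mono (prod_mono_right (subset_univ _))) _
          _ = μ (Ioi x ×ˢ Ioi y) := by rw [hμfst _ measurableSet_Ioc, h0, zero_add]
      rw [hμeq, hIoi, hIic]
      exact hstep1 a haS y hy
  have hrect : ∀ x y : ℝ,
      μ (Ioi x ×ˢ Ioi y) = ENNReal.ofReal
        ((F (Ioi x)).toReal * (G (Ioi y)).toReal *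
          (1 - (F (Iic x)).toReal * (G (Iic y)).toReal)) := by
    intro x y
    rcases FGMAux.ext_point G y with h0 | ⟨a, haS, hay, h0⟩
    · have htb : G (Ioi y) = 1 := by
        have h := measure_add_measure_compl (μ := G) (measurableSet_Iic (a := y))
        rw [compl_Iic, h0, zero_add, measure_univ] at h
        exact h
      have hμeq : μ (Ioi x ×ˢ Ioi y) = μ (Ioi x ×ˢ univ) := by
        refine le_antisymm (measure_mono (prod_mono_right (subset_univ _))) ?_
        have hdiff : (Ioi x ×ˢ univ : Set (ℝ × ℝ)) ⊆ (Ioi x ×ˢ Ioi y) ∪ (univ ×ˢ Iic y) := by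
          rintro p ⟨hp1, hp2⟩
          rcases le_or_gt p.2 y with h | h
          · exact Or.inr ⟨trivial, h⟩
          · exact Or.inl ⟨hp1, h⟩
        calc μ (Ioi x ×ˢ univ) ≤ μ ((Ioi x ×ˢ Ioi y) ∪ (univ ×ˢ Iic y)) := measure_mono hdiff
          _ ≤ μ (Ioi x ×ˢ Ioi y) + μ (univ ×ˢ Iic y) := measure_union_le _ _
          _ = μ (Ioi x ×ˢ Ioi y) := by rw [hμsnd _ measurableSet_Iic, h0, add_zero]
      rw [hμeq, hμfst _ measurableSet_Ioi, htb, h0]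
      simp [ENNReal.ofReal_toReal (measure_ne_top F (Ioi x))]
    · have hIoi : G (Ioi y) = G (Ioi a) := by
        refine le_antisymm (measure_mono (Ioi_subset_Ioi hay)) ?_
        calc G (Ioi a) = G (Ioc a y ∪ Ioi y) := by rw [Ioc_union_Ioi_eq_Ioi hay]
          _ ≤ G (Ioc a y) + G (Ioi y) := measure_union_le _ _
          _ = G (Ioi y) := by rw [h0, zero_add]
      have hIic : G (Iic y) = G (Iic a) := by
        refine le_antisymm ?_ (measure_mono (Iic_subset_Iic.2 hay))
        calc G (Iic y) = G (Iic a ∪ Ioc a y) := by rw [Iic_union_Ioc_eq_Iic hay]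
          _ ≤ G (Iic a) + G (Ioc a y) := measure_union_le _ _
          _ = G (Iic a) := by rw [h0, add_zero]
      have hμeq : μ (Ioi x ×ˢ Ioi y) = μ (Ioi x ×ˢ Ioi a) := by
        refine le_antisymm (measure_mono (prod_mono_right (Ioi_subset_Ioi hay))) ?_
        calc μ (Ioi x ×ˢ Ioi a) = μ (Ioi x ×ˢ (Ioc a y ∪ Ioi y)) := by
              rw [Ioc_union_Ioi_eq_Ioi hay]
          _ = μ ((Ioi x ×ˢ Ioc a y) ∪ (Ioi x ×ˢ Ioi y)) := by rw [prod_union]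
          _ ≤ μ (Ioi x ×ˢ Ioc a y) + μ (Ioi x ×ˢ Ioi y) := measure_union_le _ _
          _ ≤ μ (univ ×ˢ Ioc a y) + μ (Ioi x ×ˢ Ioi y) :=
              add_le_add_left (measure_mono (prod_mono_left (subset_univ _))) _
          _ = μ (Ioi x ×ˢ Ioi y) := by rw [hμsnd _ measurableSet_Ioc, h0, zero_add]
      rw [hμeq, hIoi, hIic]
      exact hstep2 a haS x
  -- the density measure m
  set ψ : ℝ → ℝ := fun v => (G (Iic v)).toReal + (G (Iio v)).toReal - 1 with hψdef
  have hψm : Measurable ψ :=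
    ((FGMAux.measurable_cdf G).add (FGMAux.measurable_cdfL G)).sub measurable_const
  have hψabs : ∀ v, |ψ v| ≤ 1 := fun v => FGMAux.abs_phi_le_one G v
  set dens : ℝ × ℝ → ENNReal := fun p =>
    ENNReal.ofReal (1 - ((F (Iic p.1)).toReal + (F (Iio p.1)).toReal - 1) * ψ p.2) with hdensdef
  have hdensm : Measurable dens := by
    refine Measurable.ennreal_ofReal ?_
    exact measurable_const.sub
      (((((FGMAux.measurable_cdf F).add (FGMAux.measurable_cdfL F)).sub
        measurable_const).comp measurable_fst).mul (hψm.comp measurable_snd))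
  set m : Measure (ℝ × ℝ) := (F.prod G).withDensity dens with hmdef
  have h_inner : ∀ (A : Set ℝ), MeasurableSet A → FGMAux.UpSet A → ∀ v : ℝ,
      ∫⁻ u in A, dens (u, v) ∂F
        = ENNReal.ofReal ((F A).toReal * (1 - ψ v * (F Aᶜ).toReal)) := by
    intro A hA hup v
    exact FGMAux.lint_inner F hA hup (hψabs v)
  have hintψ : ∀ A : Set ℝ, Integrable ψ (G.restrict A) := fun A => FGMAux.hintadd_aux G A
  have h_outer : ∀ (c₁ c₂ : ℝ), 0 ≤ c₁ → c₁ ≤ 1 → 0 ≤ c₂ → c₂ ≤ 1 →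
      ∀ (A : Set ℝ), MeasurableSet A → FGMAux.UpSet A →
      ∫⁻ v in A, ENNReal.ofReal (c₁ * (1 - ψ v * c₂)) ∂G
        = ENNReal.ofReal (c₁ * ((G A).toReal - c₂ * ((G A).toReal * (G Aᶜ).toReal))) := by
    intro c₁ c₂ hc₁0 hc₁1 hc₂0 hc₂1 A hA hup
    have hnn : ∀ v, 0 ≤ c₁ * (1 - ψ v * c₂) := by
      intro v
      have h1 : |ψ v * c₂| ≤ 1 := by
        rw [abs_mul]
        calc |ψ v| * |c₂| ≤ 1 * 1 :=
          mul_le_mul (hψabs v) (by rw [abs_of_nonneg hc₂0]; exact hc₂1) (abs_nonneg _) zero_le_one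
        _ = 1 := one_mul 1
      have := (abs_le.1 h1).2
      have h2 : 0 ≤ 1 - ψ v * c₂ := by linarith
      exact mul_nonneg hc₁0 h2
    have hint : Integrable (fun v => c₁ * (1 - ψ v * c₂)) (G.restrict A) := by
      refine Integrable.mono' (integrable_const 2)
        ((measurable_const.mul (measurable_const.sub (hψm.mul_const c₂))).aestronglyMeasurable) ?_
      refine ae_of_all _ fun v => ?_
      rw [Real.norm_eq_abs, abs_mul, abs_of_nonneg hc₁0, abs_sub_comm]
      have h1 : |ψ v * c₂| ≤ 1 := by
        rw [abs_mul]
        calc |ψ v| * |c₂| ≤ 1 * 1 :=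
          mul_le_mul (hψabs v) (by rw [abs_of_nonneg hc₂0]; exact hc₂1) (abs_nonneg _) zero_le_one
        _ = 1 := one_mul 1
      have h2 : |ψ v * c₂ - 1| ≤ 2 := by
        have := abs_le.1 h1
        rw [abs_le]; constructor <;> linarith [this.1, this.2]
      calc c₁ * |ψ v * c₂ - 1| ≤ 1 * 2 :=
        mul_le_mul hc₁1 h2 (abs_nonneg _) zero_le_one
      _ = 2 := one_mul 2
    rw [← ofReal_integral_eq_lintegral_ofReal hint (ae_of_all _ hnn)]
    congr 1
    have hintsub : Integrable (fun v => 1 - ψ v * c₂) (G.restrict A) :=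
      (integrable_const 1).sub ((hintψ A).mul_const c₂)
    have h1 : ∫ v in A, c₁ * (1 - ψ v * c₂) ∂G = c₁ * ∫ v in A, (1 - ψ v * c₂) ∂G :=
      integral_const_mul c₁ _
    have h2 : ∫ v in A, (1 - ψ v * c₂) ∂G
        = (∫ v in A, (1:ℝ) ∂G) - ∫ v in A, ψ v * c₂ ∂G :=
      integral_sub (integrable_const 1) ((hintψ A).mul_const c₂)
    have h3 : ∫ v in A, ψ v * c₂ ∂G = ((G A).toReal * (G Aᶜ).toReal) * c₂ := by
      rw [integral_mul_const]
      congr 1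
      exact FGMAux.integral_psi G hA hup
    have h4 : ∫ v in A, (1:ℝ) ∂G = (G A).toReal := by simp; rfl
    rw [h1, h2, h3, h4]
    ring
  have h_m_rect : ∀ x y : ℝ,
      m (Ioi x ×ˢ Ioi y) = ENNReal.ofReal
        ((F (Ioi x)).toReal * (G (Ioi y)).toReal *
          (1 - (F (Iic x)).toReal * (G (Iic y)).toReal)) := by
    intro x y
    rw [hmdef, withDensity_apply _ (measurableSet_Ioi.prod measurableSet_Ioi),
      ← Measure.prod_restrict, lintegral_prod_symm _ hdensm.aemeasurable]
    have h1 : ∀ v : ℝ, (∫⁻ u in Ioi x, dens (u, v) ∂F)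
        = ENNReal.ofReal ((F (Ioi x)).toReal * (1 - ψ v * (F (Iic x)).toReal)) := by
      intro v
      have := h_inner (Ioi x) measurableSet_Ioi (FGMAux.upSet_Ioi x) v
      rwa [compl_Ioi] at this
    calc ∫⁻ v in Ioi y, (∫⁻ u in Ioi x, dens (u, v) ∂F) ∂G
        = ∫⁻ v in Ioi y,
            ENNReal.ofReal ((F (Ioi x)).toReal * (1 - ψ v * (F (Iic x)).toReal)) ∂G :=
          lintegral_congr h1
      _ = ENNReal.ofReal ((F (Ioi x)).toReal *
            ((G (Ioi y)).toReal - (F (Iic x)).toReal *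
              ((G (Ioi y)).toReal * (G (Ioi y)ᶜ).toReal))) :=
          h_outer _ _ ENNReal.toReal_nonneg (FGMAux.tail_le_one F x)
            ENNReal.toReal_nonneg (FGMAux.cdf_le_one F x) _ measurableSet_Ioi
            (FGMAux.upSet_Ioi y)
      _ = ENNReal.ofReal ((F (Ioi x)).toReal * (G (Ioi y)).toReal *
            (1 - (F (Iic x)).toReal * (G (Iic y)).toReal)) := by
          rw [compl_Ioi]
          congr 1
          ring
  have h_m_univ : m univ = 1 := by
    rw [hmdef, withDensity_apply _ MeasurableSet.univ, Measure.restrict_univ,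
      lintegral_prod_symm _ hdensm.aemeasurable]
    have h1 : ∀ v : ℝ, (∫⁻ u, dens (u, v) ∂F) = 1 := by
      intro v
      have h := h_inner univ MeasurableSet.univ FGMAux.upSet_univ v
      rw [Measure.restrict_univ] at h
      rw [h]
      simp
    calc ∫⁻ v, (∫⁻ u, dens (u, v) ∂F) ∂G = ∫⁻ v, 1 ∂G := lintegral_congr h1
      _ = 1 := by simp
  have hμm : μ = m := by
    have hgenR : (inferInstance : MeasurableSpace ℝ)
        = MeasurableSpace.generateFrom (range Ioi) :=
      (BorelSpace.measurable_eq (α := ℝ)).trans (borel_eq_generateFrom_Ioi ℝ)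
    have hspan : IsCountablySpanning (range (Ioi : ℝ → Set ℝ)) := by
      refine ⟨fun n => Ioi (-(n : ℝ)), fun n => mem_range_self _, ?_⟩
      ext z
      simp only [mem_iUnion, mem_Ioi, mem_univ, iff_true]
      obtain ⟨n, hn⟩ := exists_nat_gt (-z)
      exact ⟨n, by linarith⟩
    have hgenP : (inferInstance : MeasurableSpace (ℝ × ℝ))
        = MeasurableSpace.generateFrom
            (image2 (· ×ˢ ·) (range (Ioi : ℝ → Set ℝ)) (range (Ioi : ℝ → Set ℝ))) := by
      rw [← generateFrom_prod_eq hspan hspan]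
      exact congrArg₂ (fun m₁ m₂ => @Prod.instMeasurableSpace ℝ ℝ m₁ m₂) hgenR hgenR
    refine MeasureTheory.ext_of_generate_finite _ hgenP
      (isPiSystem_Ioi.prod isPiSystem_Ioi) ?_ ?_
    · rintro s ⟨s₁, ⟨x, rfl⟩, s₂, ⟨y, rfl⟩, rfl⟩
      rw [hrect, h_m_rect]
    · rw [measure_univ, h_m_univ]
  -- key identity: H̄(x) = I(x) + J(x)
  have hdivm : ∀ x : ℝ, Measurable fun v : ℝ => x / v := fun x =>
    measurable_const.div measurable_id'
  have htbm : ∀ x : ℝ, Measurable fun v : ℝ => (F (Ioi (x / v))).toReal := fun x =>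
    (FGMAux.measurable_tail F).comp (hdivm x)
  have hcbm : ∀ x : ℝ, Measurable fun v : ℝ => (F (Iic (x / v))).toReal := fun x =>
    (FGMAux.measurable_cdf F).comp (hdivm x)
  have hae0 : ∀ᵐ v ∂G, 0 ≤ v := by
    rw [ae_iff]
    have h1 : {v : ℝ | ¬ 0 ≤ v} = Iio 0 := by ext v; simp [not_le]
    rw [h1, hGdef, Measure.map_apply hYm measurableSet_Iio]
    have h2 : Y ⁻¹' Iio 0 = ∅ := by
      ext ω
      simp only [mem_preimage, mem_Iio, mem_empty_iff_false, iff_false, not_lt]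
      exact hYnonneg ω
    simp [h2]
  have hkey0 : ∀ x : ℝ, 0 < x → rvTail (fun ω => X ω * Y ω) x
      = ∫ v in Ioi (0:ℝ),
          (F (Ioi (x / v))).toReal * (1 - ψ v * (F (Iic (x / v))).toReal) ∂G := by
    intro x hx
    have hsm : MeasurableSet {p : ℝ × ℝ | x < p.1 * p.2} :=
      measurableSet_lt measurable_const (measurable_fst.mul measurable_snd)
    have h1 : rvTail (fun ω => X ω * Y ω) x = (μ {p : ℝ × ℝ | x < p.1 * p.2}).toReal := by
      simp only [rvTail]
      rw [hμdef, Measure.map_apply hpm hsm]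
      rfl
    have h2 : μ {p : ℝ × ℝ | x < p.1 * p.2} = ∫⁻ v in Ioi (0:ℝ),
        ENNReal.ofReal ((F (Ioi (x / v))).toReal *
          (1 - ψ v * (F (Iic (x / v))).toReal)) ∂G := by
      calc μ {p : ℝ × ℝ | x < p.1 * p.2} = m {p : ℝ × ℝ | x < p.1 * p.2} := by rw [hμm]
        _ = ∫⁻ p in {p : ℝ × ℝ | x < p.1 * p.2}, dens p ∂(F.prod G) := by
            rw [hmdef, withDensity_apply _ hsm]
        _ = ∫⁻ p, ({p : ℝ × ℝ | x < p.1 * p.2}.indicator dens) p ∂(F.prod G) :=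
            (lintegral_indicator hsm _).symm
        _ = ∫⁻ v, (∫⁻ u, ({p : ℝ × ℝ | x < p.1 * p.2}.indicator dens) (u, v) ∂F) ∂G :=
            lintegral_prod_symm _ (hdensm.indicator hsm).aemeasurable
        _ = ∫⁻ v, (Ioi (0:ℝ)).indicator (fun v => ENNReal.ofReal ((F (Ioi (x / v))).toReal *
              (1 - ψ v * (F (Iic (x / v))).toReal))) v ∂G := by
            refine lintegral_congr_ae ?_
            filter_upwards [hae0] with v hv
            rcases eq_or_lt_of_le hv with h0 | hpos
            · subst h0
              have hnm : (0:ℝ) ∉ Ioi (0:ℝ) := by simp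
              rw [indicator_of_notMem hnm]
              have hz : (fun u : ℝ => ({p : ℝ × ℝ | x < p.1 * p.2}.indicator dens) (u, (0:ℝ)))
                  = fun _ => 0 := by
                funext u
                refine indicator_of_notMem ?_ _
                simp only [mem_setOf_eq, mul_zero, not_lt]
                exact hx.le
              rw [hz, lintegral_const, zero_mul]
            · have hfun : (fun u : ℝ => ({p : ℝ × ℝ | x < p.1 * p.2}.indicator dens) (u, v))
                  = (Ioi (x / v)).indicator (fun u => dens (u, v)) := by
                funext u
                by_cases hu : u ∈ Ioi (x / v)
                · rw [indicator_of_mem hu, indicator_of_mem]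
                  exact (div_lt_iff₀ hpos).1 hu
                · rw [indicator_of_notMem hu, indicator_of_notMem]
                  intro hmem
                  exact hu ((div_lt_iff₀ hpos).2 hmem)
              rw [hfun, lintegral_indicator measurableSet_Ioi,
                h_inner (Ioi (x / v)) measurableSet_Ioi (FGMAux.upSet_Ioi _) v,
                indicator_of_mem (show v ∈ Ioi (0:ℝ) from hpos), compl_Ioi]
        _ = ∫⁻ v in Ioi (0:ℝ), ENNReal.ofReal ((F (Ioi (x / v))).toReal *
              (1 - ψ v * (F (Iic (x / v))).toReal)) ∂G :=
            lintegral_indicator measurableSet_Ioi _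
    have habsψcb : ∀ v : ℝ, |ψ v * (F (Iic (x / v))).toReal| ≤ 1 := by
      intro v
      rw [abs_mul]
      have hc : |(F (Iic (x / v))).toReal| ≤ 1 := by
        rw [abs_of_nonneg ENNReal.toReal_nonneg]; exact FGMAux.cdf_le_one F _
      have h := mul_le_mul (hψabs v) hc (abs_nonneg _) zero_le_one
      linarith
    have hnn : ∀ v : ℝ, 0 ≤ (F (Ioi (x / v))).toReal *
        (1 - ψ v * (F (Iic (x / v))).toReal) := by
      intro v
      refine mul_nonneg ENNReal.toReal_nonneg ?_
      linarith [(abs_le.1 (habsψcb v)).2]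
    have hint : Integrable (fun v => (F (Ioi (x / v))).toReal *
        (1 - ψ v * (F (Iic (x / v))).toReal)) (G.restrict (Ioi 0)) := by
      refine Integrable.mono' (integrable_const 2)
        (((htbm x).mul (measurable_const.sub (hψm.mul (hcbm x)))).aestronglyMeasurable) ?_
      refine ae_of_all _ fun v => ?_
      rw [Real.norm_eq_abs, abs_of_nonneg (hnn v)]
      have h1 := abs_le.1 (habsψcb v)
      have ht1 := FGMAux.tail_le_one F (x / v)
      have ht0 : (0:ℝ) ≤ (F (Ioi (x / v))).toReal := ENNReal.toReal_nonneg
      have hd2 : 1 - ψ v * (F (Iic (x / v))).toReal ≤ 2 := by linarith [h1.1]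
      have hd0 : 0 ≤ 1 - ψ v * (F (Iic (x / v))).toReal := by linarith [h1.2]
      have hm := mul_le_mul ht1 hd2 hd0 zero_le_one
      linarith
    rw [h1, h2, ← ofReal_integral_eq_lintegral_ofReal hint (ae_of_all _ hnn),
      ENNReal.toReal_ofReal]
    exact setIntegral_nonneg measurableSet_Ioi fun v _ => hnn v
  have hcbF : ∀ w : ℝ, (F (Iic w)).toReal = 1 - (F (Ioi w)).toReal := by
    intro w
    have := FGMAux.cdf_add_tail F w
    linarith
  -- integrability of the pieces
  have hIntI : ∀ x : ℝ, Integrable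
      (fun v => (1 - ψ v) * (F (Ioi (x / v))).toReal) (G.restrict (Ioi 0)) := by
    intro x
    refine Integrable.mono' (integrable_const 2)
      (((measurable_const.sub hψm).mul (htbm x)).aestronglyMeasurable) ?_
    refine ae_of_all _ fun v => ?_
    rw [Real.norm_eq_abs, abs_mul, abs_of_nonneg ENNReal.toReal_nonneg]
    have h1 := abs_le.1 (hψabs v)
    have ha : |1 - ψ v| ≤ 2 := by rw [abs_le]; constructor <;> linarith [h1.1, h1.2]
    have ht1 := FGMAux.tail_le_one F (x / v)
    have ht0 : (0:ℝ) ≤ (F (Ioi (x / v))).toReal := ENNReal.toReal_nonneg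
    have hm := mul_le_mul ha ht1 ht0 (by norm_num : (0:ℝ) ≤ 2)
    linarith
  have hIntJ : ∀ x : ℝ, Integrable
      (fun v => ψ v * ((F (Ioi (x / v))).toReal) ^ 2) (G.restrict (Ioi 0)) := by
    intro x
    refine Integrable.mono' (integrable_const 1)
      ((hψm.mul ((htbm x).pow_const 2)).aestronglyMeasurable) ?_
    refine ae_of_all _ fun v => ?_
    rw [Real.norm_eq_abs, abs_mul, abs_of_nonneg (sq_nonneg ((F (Ioi (x / v))).toReal))]
    have ht1 := FGMAux.tail_le_one F (x / v)
    have ht0 : (0:ℝ) ≤ (F (Ioi (x / v))).toReal := ENNReal.toReal_nonneg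
    have hsq : ((F (Ioi (x / v))).toReal) ^ 2 ≤ 1 := by nlinarith
    have hm := mul_le_mul (hψabs v) hsq (sq_nonneg _) zero_le_one
    linarith
  have hIntS : ∀ x : ℝ, Integrable
      (fun v => (F (Ioi (x / v))).toReal) (G.restrict (Ioi 0)) := by
    intro x
    refine Integrable.mono' (integrable_const 1) ((htbm x).aestronglyMeasurable) ?_
    refine ae_of_all _ fun v => ?_
    rw [Real.norm_eq_abs, abs_of_nonneg ENNReal.toReal_nonneg]
    exact FGMAux.tail_le_one F _
  have hkey : ∀ x : ℝ, 0 < x → rvTail (fun ω => X ω * Y ω) x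
      = (∫ v in Ioi (0:ℝ), (1 - ψ v) * (F (Ioi (x / v))).toReal ∂G)
        + ∫ v in Ioi (0:ℝ), ψ v * ((F (Ioi (x / v))).toReal) ^ 2 ∂G := by
    intro x hx
    rw [hkey0 x hx, ← integral_add (hIntI x) (hIntJ x)]
    refine integral_congr_ae (ae_of_all _ fun v => ?_)
    simp only [hcbF]
    ring
  -- the right endpoint β and the atom
  set β := sSup {y : ℝ | rvCdf Y y < 1} with hβdef
  have h0mem : (0:ℝ) ∈ {y : ℝ | rvCdf Y y < 1} := by
    have h1 : {ω | Y ω ≤ 0} = {ω | Y ω = 0} := by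
      ext ω
      exact ⟨fun h => le_antisymm h (hYnonneg ω), fun h => le_of_eq h⟩
    simp only [mem_setOf_eq, rvCdf, h1]
    rcases lt_or_ge (ℙ {ω | Y ω = 0}).toReal 1 with h | h
    · exact h
    · exfalso
      have h2 : (ℙ {ω | Y ω = 0}).toReal ≤ 1 := by
        have := prob_le_one (μ := (ℙ : Measure Ω)) (s := {ω | Y ω = 0})
        exact ENNReal.toReal_le_of_le_ofReal zero_le_one (by simpa using this)
      have h3 : (ℙ {ω | Y ω = 0}).toReal = 1 := le_antisymm h2 h
      exact hYnd ((ENNReal.toReal_eq_one_iff _).1 h3)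
  have hβ0 : 0 ≤ β := le_csSup hbdd h0mem
  have htail_zero : ∀ w : ℝ, β < w → G (Ioi w) = 0 := by
    intro w hw
    have hnot : ¬ rvCdf Y w < 1 := by
      intro hmem
      exact absurd (le_csSup hbdd hmem) (not_le.2 hw)
    have hcdf1 : rvCdf Y w = 1 := by
      have hle : rvCdf Y w ≤ 1 := by
        rw [hCY]
        exact FGMAux.cdf_le_one G w
      exact le_antisymm hle (not_lt.1 hnot)
    rw [hCY] at hcdf1
    have := FGMAux.cdf_add_tail G w
    have h0 : (G (Ioi w)).toReal = 0 := by linarith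
    rcases (ENNReal.toReal_eq_zero_iff _).1 h0 with h | h
    · exact h
    · exact absurd h (measure_ne_top _ _)
  have hGIoiβ : G (Ioi β) = 0 := by
    have hun : Ioi β = ⋃ n : ℕ, Ioi (β + 1 / (n + 1)) := by
      ext z
      simp only [mem_Ioi, mem_iUnion]
      constructor
      · intro hz
        obtain ⟨n, hn⟩ := exists_nat_one_div_lt (show (0:ℝ) < z - β by linarith)
        exact ⟨n, by push_cast at hn ⊢; linarith⟩
      · rintro ⟨n, hn⟩
        have : (0:ℝ) < 1 / ((n:ℝ) + 1) := by positivity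
        linarith
    rw [hun]
    refine measure_iUnion_null fun n => htail_zero _ ?_
    have : (0:ℝ) < 1 / ((n:ℝ) + 1) := by positivity
    linarith
  have hβpos : 0 < β := by
    rcases eq_or_lt_of_le hβ0 with h | h
    · exfalso
      have hc : ℙ ({ω | Y ω = 0}ᶜ) = 0 := by
        have h1 : {ω | Y ω = 0}ᶜ = Y ⁻¹' Ioi 0 := by
          ext ω
          simp only [mem_compl_iff, mem_setOf_eq, mem_preimage, mem_Ioi]
          exact ⟨fun hne => lt_of_le_of_ne (hYnonneg ω) (Ne.symm hne),
            fun hlt => ne_of_gt hlt⟩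
        calc ℙ ({ω | Y ω = 0}ᶜ) = G (Ioi 0) := by
              rw [h1, hGdef, Measure.map_apply hYm measurableSet_Ioi]
          _ = G (Ioi β) := by rw [← h]
          _ = 0 := hGIoiβ
      have hmeas : MeasurableSet {ω | Y ω = 0} := hYm (measurableSet_singleton 0)
      exact hYnd ((prob_compl_eq_zero_iff hmeas).1 hc)
    · exact h
  have hatomG : G {β} = ℙ {ω | Y ω = β} := by
    rw [hGdef, Measure.map_apply hYm (measurableSet_singleton β)]
    rfl
  set pr := (G {β}).toReal with hprdef
  have hprpos : 0 < pr := by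
    rw [hprdef]
    refine ENNReal.toReal_pos ?_ (measure_ne_top _ _)
    rw [hatomG]
    exact ne_of_gt hatom
  have hcbβ : (G (Iic β)).toReal = 1 := by
    have h1 := FGMAux.cdf_add_tail G β
    have h2 : (G (Ioi β)).toReal = 0 := by rw [hGIoiβ]; simp
    linarith
  have hlbβ : (G (Iio β)).toReal = 1 - pr := by
    have hsplit : G (Iic β) = G (Iio β) + G {β} := by
      have hset : Iic β = Iio β ∪ {β} := by
        ext z
        simp [le_iff_lt_or_eq]
      rw [hset, measure_union (by simp) (measurableSet_singleton β)]
    have := congrArg ENNReal.toReal hsplit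
    rw [ENNReal.toReal_add (measure_ne_top _ _) (measure_ne_top _ _)] at this
    rw [hcbβ] at this
    rw [hprdef]
    linarith
  have haele : ∀ᵐ v ∂G, v ≤ β := by
    rw [ae_iff]
    have h1 : {v : ℝ | ¬ v ≤ β} = Ioi β := by ext v; simp [not_le]
    rw [h1]
    exact hGIoiβ
  have hψlb : ∀ v : ℝ, v ≤ β → pr ≤ 1 - ψ v := by
    intro v hv
    have h1 : (G (Iio v)).toReal ≤ (G (Iio β)).toReal :=
      ENNReal.toReal_mono (measure_ne_top _ _) (measure_mono (Iio_subset_Iio hv))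
    have h2 := FGMAux.cdf_le_one G v
    rw [hlbβ] at h1
    simp only [hψdef]
    linarith
  have hψβ : ψ β = 1 - pr := by
    simp only [hψdef]
    rw [hcbβ, hlbβ]
    ring
  -- the three integral functions
  set Iexpr : ℝ → ℝ := fun x => ∫ v in Ioi (0:ℝ), (1 - ψ v) * (F (Ioi (x / v))).toReal ∂G
    with hIdef
  set Jexpr : ℝ → ℝ := fun x => ∫ v in Ioi (0:ℝ), ψ v * ((F (Ioi (x / v))).toReal) ^ 2 ∂G
    with hJdef
  set Sexpr : ℝ → ℝ := fun x => ∫ v in Ioi (0:ℝ), (F (Ioi (x / v))).toReal ∂G with hSdef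
  have hS_nonneg : ∀ x : ℝ, 0 ≤ Sexpr x := fun x =>
    setIntegral_nonneg measurableSet_Ioi fun v _ => ENNReal.toReal_nonneg
  have hIS : ∀ x : ℝ, pr * Sexpr x ≤ Iexpr x := by
    intro x
    have h1 : ∫ v in Ioi (0:ℝ), pr * (F (Ioi (x / v))).toReal ∂G = pr * Sexpr x :=
      integral_const_mul pr _
    rw [hIdef, ← h1]
    refine integral_mono_ae ((hIntS x).const_mul pr) (hIntI x) ?_
    filter_upwards [ae_restrict_of_ae haele] with v hv
    exact mul_le_mul_of_nonneg_right (hψlb v hv) ENNReal.toReal_nonneg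
  have htbβ_pos : ∀ x : ℝ, 0 < x → 0 < (F (Ioi (x / β))).toReal := by
    intro x hx
    have := hFunb (x / β) (div_pos hx hβpos)
    rwa [hTX] at this
  have hIpos : ∀ x : ℝ, 0 < x → 0 < Iexpr x := by
    intro x hx
    have hwnn : ∀ v : ℝ, 0 ≤ (1 - ψ v) * (F (Ioi (x / v))).toReal := by
      intro v
      refine mul_nonneg ?_ ENNReal.toReal_nonneg
      linarith [(abs_le.1 (hψabs v)).2]
    have hsing : ∫ v in ({β} : Set ℝ), (1 - ψ v) * (F (Ioi (x / v))).toReal ∂G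
        = pr * ((1 - ψ β) * (F (Ioi (x / β))).toReal) := by
      rw [Measure.restrict_singleton, integral_smul_measure, integral_dirac]
      rfl
    have hmono : ∫ v in ({β} : Set ℝ), (1 - ψ v) * (F (Ioi (x / v))).toReal ∂G ≤ Iexpr x := by
      rw [hIdef]
      refine setIntegral_mono_set (hIntI x) (ae_of_all _ hwnn) ?_
      refine HasSubset.Subset.eventuallyLE ?_
      rw [singleton_subset_iff]
      exact hβpos
    have hval : 0 < pr * ((1 - ψ β) * (F (Ioi (x / β))).toReal) := by
      rw [hψβ]
      have := htbβ_pos x hx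
      have h1 : (0:ℝ) < 1 - (1 - pr) := by linarith
      positivity
    calc (0:ℝ) < pr * ((1 - ψ β) * (F (Ioi (x / β))).toReal) := hval
      _ = ∫ v in ({β} : Set ℝ), (1 - ψ v) * (F (Ioi (x / v))).toReal ∂G := hsing.symm
      _ ≤ Iexpr x := hmono
  have hJle : ∀ x : ℝ, 0 < x → |Jexpr x| ≤ (F (Ioi (x / β))).toReal * Sexpr x := by
    intro x hx
    have h1 : |Jexpr x| ≤ ∫ v in Ioi (0:ℝ), |ψ v * ((F (Ioi (x / v))).toReal) ^ 2| ∂G := by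
      rw [hJdef]
      have h := norm_integral_le_integral_norm
        (f := fun v => ψ v * ((F (Ioi (x / v))).toReal) ^ 2) (μ := G.restrict (Ioi 0))
      simp only [Real.norm_eq_abs] at h
      exact h
    have h2 : ∫ v in Ioi (0:ℝ), |ψ v * ((F (Ioi (x / v))).toReal) ^ 2| ∂G
        ≤ ∫ v in Ioi (0:ℝ), (F (Ioi (x / β))).toReal * (F (Ioi (x / v))).toReal ∂G := by
      refine integral_mono_ae (hIntJ x).abs ((hIntS x).const_mul _) ?_
      filter_upwards [ae_restrict_of_ae haele, ae_restrict_mem measurableSet_Ioi]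
        with v hvβ hv0
      have hvpos : (0:ℝ) < v := hv0
      have hdiv : x / β ≤ x / v := div_le_div_of_nonneg_left hx.le hvpos hvβ
      have htmono : (F (Ioi (x / v))).toReal ≤ (F (Ioi (x / β))).toReal :=
        ENNReal.toReal_mono (measure_ne_top _ _) (measure_mono (Ioi_subset_Ioi hdiv))
      rw [abs_mul, abs_of_nonneg (sq_nonneg ((F (Ioi (x / v))).toReal)), sq]
      have ht0 : (0:ℝ) ≤ (F (Ioi (x / v))).toReal := ENNReal.toReal_nonneg
      calc |ψ v| * ((F (Ioi (x / v))).toReal * (F (Ioi (x / v))).toReal)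
          ≤ 1 * ((F (Ioi (x / v))).toReal * (F (Ioi (x / v))).toReal) :=
            mul_le_mul_of_nonneg_right (hψabs v) (mul_nonneg ht0 ht0)
        _ = (F (Ioi (x / v))).toReal * (F (Ioi (x / v))).toReal := one_mul _
        _ ≤ (F (Ioi (x / β))).toReal * (F (Ioi (x / v))).toReal :=
            mul_le_mul_of_nonneg_right htmono ht0
    have h3 : ∫ v in Ioi (0:ℝ), (F (Ioi (x / β))).toReal * (F (Ioi (x / v))).toReal ∂G
        = (F (Ioi (x / β))).toReal * Sexpr x := integral_const_mul _ _
    linarith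
  -- quotient bound and limits
  have hquot : ∀ᶠ x : ℝ in atTop, |Jexpr x / Iexpr x| ≤ (F (Ioi (x / β))).toReal / pr := by
    filter_upwards [eventually_gt_atTop (0:ℝ)] with x hx
    have hI := hIpos x hx
    rw [abs_div, abs_of_pos hI, div_le_div_iff₀ hI hprpos]
    have h1 := hJle x hx
    have h2 := hIS x
    have h3 := hS_nonneg x
    have h4 : (0:ℝ) ≤ (F (Ioi (x / β))).toReal := ENNReal.toReal_nonneg
    calc |Jexpr x| * pr ≤ ((F (Ioi (x / β))).toReal * Sexpr x) * pr :=
        mul_le_mul_of_nonneg_right h1 hprpos.le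
      _ = (F (Ioi (x / β))).toReal * (pr * Sexpr x) := by ring
      _ ≤ (F (Ioi (x / β))).toReal * Iexpr x := mul_le_mul_of_nonneg_left h2 h4
  have hg0 : Tendsto (fun x : ℝ => (F (Ioi (x / β))).toReal / pr) atTop (nhds 0) := by
    have h1 : Tendsto (fun x : ℝ => x / β) atTop atTop :=
      tendsto_id.atTop_div_const hβpos
    have h2 : Tendsto (fun x : ℝ => (F (Ioi (x / β))).toReal) atTop (nhds 0) :=
      (FGMAux.tail_tendsto_zero F).comp h1
    simpa using h2.div_const pr
  have hJI0 : Tendsto (fun x : ℝ => Jexpr x / Iexpr x) atTop (nhds 0) := by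
    refine squeeze_zero_norm' ?_ hg0
    filter_upwards [hquot] with x hx
    rw [Real.norm_eq_abs]
    exact hx
  -- conclusion
  have hRHSeq : (fun x : ℝ => ∫ y in Ioi (0:ℝ),
      (1 - (rvCdf Y y + rvCdfLeft Y y - 1)) * rvTail X (x / y) ∂G) = Iexpr := by
    funext x
    rw [hIdef]
    refine integral_congr_ae (ae_of_all _ fun v => ?_)
    simp only [hCY, hLY, hTX, hψdef]
  rw [hRHSeq]
  have hne : ∀ᶠ x : ℝ in atTop, Iexpr x ≠ 0 :=
    (eventually_gt_atTop (0:ℝ)).mono fun x hx => ne_of_gt (hIpos x hx)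
  rw [Asymptotics.isEquivalent_iff_tendsto_one hne]
  have h1 : Tendsto (fun x : ℝ => 1 + Jexpr x / Iexpr x) atTop (nhds 1) := by
    have hc : Tendsto (fun _ : ℝ => (1:ℝ)) atTop (nhds 1) := tendsto_const_nhds
    have := hc.add hJI0
    simpa using this
  refine Tendsto.congr' ?_ h1
  filter_upwards [eventually_gt_atTop (0:ℝ)] with x hx
  have hI := hIpos x hx
  have hkx := hkey x hx
  rw [Pi.div_apply]
  rw [hkx]
  field_simp
  rfl
end
end
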